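/- arXiv:1709.01880 — 10 statements merged into one kernel-verified Lean document; each statement's English description precedes it below -/
import Mathlib

section
/- Let a < b be real numbers and let u : [a,b] → ℝ be continuously differentiable. If u(c₀) = 0 for some c₀ ∈ [a,b], then ∫_a^b u(x)² dx ≤ ((b−a)²/2)·∫_a^b u′(x)² dx. -/
open Set intervalIntegral MeasureTheory

/-- Cauchy–Schwarz for interval integrals of continuous functions. -/
lemma cs_aux (c d : ℝ) (hcd : c ≤ d) (f : ℝ → ℝ) (hf : ContinuousOn f (Icc c d)) :
    (∫ t in c..d, f t) ^ 2 ≤ (d - c) * ∫ t in c..d, f t ^ 2 := by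
  rcases eq_or_lt_of_le hcd with rfl | hlt
  · simp
  have hfi : IntervalIntegrable f volume c d := by
    apply ContinuousOn.intervalIntegrable
    rwa [uIcc_of_le hcd]
  have hf2i : IntervalIntegrable (fun t => f t ^ 2) volume c d := by
    apply ContinuousOn.intervalIntegrable
    rw [uIcc_of_le hcd]
    exact (hf.pow 2)
  set I := ∫ t in c..d, f t with hI
  set J := ∫ t in c..d, f t ^ 2 with hJ
  set m := I / (d - c) with hm
  have hpos : (0:ℝ) < d - c := by linarith
  have key : 0 ≤ ∫ t in c..d, (f t - m) ^ 2 := by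
    apply intervalIntegral.integral_nonneg hcd
    intro t _
    positivity
  have expand : (∫ t in c..d, (f t - m) ^ 2) = J - 2 * m * I + m ^ 2 * (d - c) := by
    have : ∀ t, (f t - m) ^ 2 = f t ^ 2 - 2 * m * f t + m ^ 2 := by intro t; ring
    simp_rw [this]
    rw [intervalIntegral.integral_add (hf2i.sub ((hfi.const_mul (2*m)).congr ?_))
      intervalIntegrable_const,
      intervalIntegral.integral_sub hf2i ((hfi.const_mul (2*m)).congr ?_)]
    · rw [intervalIntegral.integral_const, intervalIntegral.integral_const_mul]
      simp [hI, smul_eq_mul]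
      ring
    · exact fun _ _ => rfl
    · exact fun _ _ => rfl
  rw [expand] at key
  have hmI : I = m * (d - c) := by
    rw [hm]; exact (div_mul_cancel₀ _ hpos.ne').symm
  rw [hmI] at key ⊢
  nlinarith [mul_nonneg hpos.le key]

theorem stmt_2 (a b : ℝ) (hab : a < b) (u u' : ℝ → ℝ)
    (hderiv : ∀ x ∈ Icc a b, HasDerivWithinAt u (u' x) (Icc a b) x)
    (hcont : ContinuousOn u' (Icc a b))
    (hzero : ∃ c₀ ∈ Icc a b, u c₀ = 0) :
    (∫ x in a..b, (u x) ^ 2) ≤ ((b - a) ^ 2 / 2) * (∫ x in a..b, (u' x) ^ 2) := by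
  obtain ⟨c₀, hc₀, hu0⟩ := hzero
  have hab' : a ≤ b := hab.le
  have hucont : ContinuousOn u (Icc a b) := fun x hx =>
    (hderiv x hx).continuousWithinAt
  set E := ∫ x in a..b, (u' x) ^ 2 with hE
  have hEnn : 0 ≤ E := intervalIntegral.integral_nonneg hab' (fun t _ => sq_nonneg _)
  have hu'int : ∀ c d, c ∈ Icc a b → d ∈ Icc a b → IntervalIntegrable u' volume c d := by
    intro c d hc hd
    apply ContinuousOn.intervalIntegrable
    exact hcont.mono (uIcc_subset_Icc hc hd)
  -- FTC: u x = ∫ t in c₀..x, u' t for x ∈ Icc a b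
  have ftc : ∀ x ∈ Icc a b, u x = ∫ t in c₀..x, u' t := by
    intro x hx
    have h1 : ContinuousOn u (uIcc c₀ x) := hucont.mono (uIcc_subset_Icc hc₀ hx)
    have h2 : ∀ y ∈ Ioo (min c₀ x) (max c₀ x), HasDerivWithinAt u (u' y) (Ioi y) y := by
      intro y hy
      have hy1 : y ∈ Icc a b := by
        constructor
        · exact le_trans (le_min hc₀.1 hx.1) hy.1.le
        · exact le_trans hy.2.le (max_le hc₀.2 hx.2)
      have hyb : y < b := lt_of_lt_of_le hy.2 (max_le hc₀.2 hx.2)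
      have hmem : Icc a b ∈ nhdsWithin y (Ioi y) := by
        apply mem_nhdsWithin.2
        exact ⟨Iio b, isOpen_Iio, hyb, fun z hz => ⟨le_trans hy1.1 hz.2.le, hz.1.le⟩⟩
      exact (hderiv y hy1).mono_of_mem_nhdsWithin hmem
    have h3 := intervalIntegral.integral_eq_sub_of_hasDeriv_right h1 h2 (hu'int c₀ x hc₀ hx)
    rw [h3, hu0, sub_zero]
  -- monotonicity of ∫ u'^2 over subintervals
  have hsubE : ∀ c d, c ∈ Icc a b → d ∈ Icc a b → c ≤ d →
      (∫ t in c..d, u' t ^ 2) ≤ E := by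
    intro c d hc hd hcd
    apply intervalIntegral.integral_mono_interval hc.1 hcd hd.2
    · filter_upwards with t using sq_nonneg _
    · apply ContinuousOn.intervalIntegrable
      rw [uIcc_of_le hab']
      exact hcont.pow 2
  -- pointwise bound
  have pw : ∀ x ∈ Icc a b, (u x) ^ 2 ≤ |x - c₀| * E := by
    intro x hx
    rcases le_total c₀ x with hcx | hcx
    · rw [ftc x hx, abs_of_nonneg (by linarith)]
      calc (∫ t in c₀..x, u' t) ^ 2
          ≤ (x - c₀) * ∫ t in c₀..x, u' t ^ 2 := by
            apply cs_aux c₀ x hcx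
            exact hcont.mono (Icc_subset_Icc hc₀.1 hx.2)
        _ ≤ (x - c₀) * E := by
            apply mul_le_mul_of_nonneg_left (hsubE c₀ x hc₀ hx hcx) (by linarith)
    · rw [ftc x hx, intervalIntegral.integral_symm, neg_sq, abs_sub_comm,
        abs_of_nonneg (by linarith)]
      calc (∫ t in x..c₀, u' t) ^ 2
          ≤ (c₀ - x) * ∫ t in x..c₀, u' t ^ 2 := by
            apply cs_aux x c₀ hcx
            exact hcont.mono (Icc_subset_Icc hx.1 hc₀.2)
        _ ≤ (c₀ - x) * E := by
            apply mul_le_mul_of_nonneg_left (hsubE x c₀ hx hc₀ hcx) (by linarith)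
  -- integrate the pointwise bound
  have habs : (∫ x in a..b, (u x) ^ 2) ≤ ∫ x in a..b, |x - c₀| * E := by
    apply intervalIntegral.integral_mono_on hab' _ _ pw
    · apply ContinuousOn.intervalIntegrable
      rw [uIcc_of_le hab']
      exact hucont.pow 2
    · apply ContinuousOn.intervalIntegrable
      exact ((continuous_abs.comp (continuous_id.sub continuous_const)).mul
        continuous_const).continuousOn
  -- compute ∫ |x - c₀|
  have hsplit : (∫ x in a..b, |x - c₀| * E) =
      (((c₀ - a) ^ 2 + (b - c₀) ^ 2) / 2) * E := by
    have h1 : (∫ x in a..b, |x - c₀| * E) =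
        (∫ x in a..c₀, |x - c₀| * E) + ∫ x in c₀..b, |x - c₀| * E := by
      rw [intervalIntegral.integral_add_adjacent_intervals] <;>
      · apply ContinuousOn.intervalIntegrable
        exact ((continuous_abs.comp (continuous_id.sub continuous_const)).mul
          continuous_const).continuousOn
    have h2 : (∫ x in a..c₀, |x - c₀| * E) = (∫ x in a..c₀, (c₀ - x) * E) := by
      apply intervalIntegral.integral_congr
      intro x hx
      rw [uIcc_of_le hc₀.1] at hx
      show |x - c₀| * E = (c₀ - x) * E
      rw [abs_of_nonpos (by linarith [hx.2]), neg_sub]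
    have h3 : (∫ x in c₀..b, |x - c₀| * E) = (∫ x in c₀..b, (x - c₀) * E) := by
      apply intervalIntegral.integral_congr
      intro x hx
      rw [uIcc_of_le hc₀.2] at hx
      show |x - c₀| * E = (x - c₀) * E
      rw [abs_of_nonneg (by linarith [hx.1])]
    have h4 : (∫ x in a..c₀, (c₀ - x) * E) = ((c₀ - a) ^ 2 / 2) * E := by
      have : ∀ x : ℝ, (c₀ - x) * E = c₀ * E - E * x := by intro x; ring
      simp_rw [this]
      rw [intervalIntegral.integral_sub intervalIntegrable_const
        ((intervalIntegral.intervalIntegrable_id (μ := MeasureTheory.volume)).const_mul E),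
        intervalIntegral.integral_const_mul, intervalIntegral.integral_const_mul,
        integral_id, intervalIntegral.integral_const]
      simp only [smul_eq_mul]
      ring
    have h5 : (∫ x in c₀..b, (x - c₀) * E) = ((b - c₀) ^ 2 / 2) * E := by
      have : ∀ x : ℝ, (x - c₀) * E = E * x - c₀ * E := by intro x; ring
      simp_rw [this]
      rw [intervalIntegral.integral_sub
        ((intervalIntegral.intervalIntegrable_id (μ := MeasureTheory.volume)).const_mul E) intervalIntegrable_const,
        intervalIntegral.integral_const_mul, intervalIntegral.integral_const_mul,
        integral_id, intervalIntegral.integral_const]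
      simp only [smul_eq_mul]
      ring
    rw [h1, h2, h3, h4, h5]
    ring
  have hfin : (((c₀ - a) ^ 2 + (b - c₀) ^ 2) / 2) * E ≤ ((b - a) ^ 2 / 2) * E := by
    apply mul_le_mul_of_nonneg_right _ hEnn
    nlinarith [hc₀.1, hc₀.2]
  calc (∫ x in a..b, (u x) ^ 2) ≤ ∫ x in a..b, |x - c₀| * E := habs
    _ = (((c₀ - a) ^ 2 + (b - c₀) ^ 2) / 2) * E := hsplit
    _ ≤ ((b - a) ^ 2 / 2) * E := hfin
end

section
/- Let u : [0,1] → ℝ be continuously differentiable. Then u(0)² − 2·∫_0^1 u(x)² dx ≤ ∫_0^1 u′(x)² dx, and ∫_0^1 u(x)² dx − 2·u(1)² ≤ ∫_0^1 u′(x)² dx. -/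
open Set intervalIntegral

lemma ftc01 (f f' : ℝ → ℝ)
    (h : ∀ x ∈ Icc (0:ℝ) 1, HasDerivWithinAt f (f' x) (Icc 0 1) x)
    (hint : IntervalIntegrable f' MeasureTheory.volume 0 1) :
    ∫ x in (0:ℝ)..1, f' x = f 1 - f 0 := by
  apply intervalIntegral.integral_eq_sub_of_hasDeriv_right_of_le zero_le_one
    (fun x hx => (h x hx).continuousWithinAt) _ hint
  intro x hx
  exact (h x ⟨hx.1.le, hx.2.le⟩).mono_of_mem_nhdsWithin (Icc_mem_nhdsGT_of_mem ⟨hx.1.le, hx.2⟩)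

theorem stmt_6 (u u' : ℝ → ℝ)
    (hderiv : ∀ x ∈ Icc (0:ℝ) 1, HasDerivWithinAt u (u' x) (Icc 0 1) x)
    (hcont : ContinuousOn u' (Icc (0:ℝ) 1)) :
    (u 0) ^ 2 - 2 * (∫ x in (0:ℝ)..1, (u x) ^ 2) ≤ (∫ x in (0:ℝ)..1, (u' x) ^ 2) ∧
    (∫ x in (0:ℝ)..1, (u x) ^ 2) - 2 * (u 1) ^ 2 ≤ (∫ x in (0:ℝ)..1, (u' x) ^ 2) := by
  have hu : ContinuousOn u (Icc (0:ℝ) 1) :=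
    fun x hx => (hderiv x hx).continuousWithinAt
  have huIcc : uIcc (0:ℝ) 1 = Icc 0 1 := uIcc_of_le zero_le_one
  -- basic integrability
  have hiu2 : IntervalIntegrable (fun x => (u x) ^ 2) MeasureTheory.volume 0 1 := by
    apply ContinuousOn.intervalIntegrable; rw [huIcc]; exact hu.pow 2
  have hiu'2 : IntervalIntegrable (fun x => (u' x) ^ 2) MeasureTheory.volume 0 1 := by
    apply ContinuousOn.intervalIntegrable; rw [huIcc]; exact hcont.pow 2
  have hcos : ∀ x ∈ Icc (0:ℝ) 1, Real.cos x ≠ 0 := by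
    intro x hx
    have h1 : (1:ℝ) < Real.pi / 2 := by
      nlinarith [Real.pi_gt_three]
    exact ne_of_gt (Real.cos_pos_of_mem_Ioo ⟨by linarith [hx.1], by linarith [hx.2]⟩)
  have htanc : ContinuousOn Real.tan (Icc (0:ℝ) 1) := by
    intro x hx
    exact (Real.continuousAt_tan.2 (hcos x hx)).continuousWithinAt
  -- Part 1
  have key1 : (u 0) ^ 2 ≤ ∫ x in (0:ℝ)..1, (2 * (u x) ^ 2 + (u' x) ^ 2) := by
    set F : ℝ → ℝ := fun x => (x - 1) * (u x) ^ 2 with hF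
    have hF' : ∀ x ∈ Icc (0:ℝ) 1,
        HasDerivWithinAt F ((u x) ^ 2 + (x - 1) * (2 * u x * u' x)) (Icc 0 1) x := by
      intro x hx
      have := ((hasDerivWithinAt_id x (Icc (0:ℝ) 1)).sub_const 1).mul
        (((hderiv x hx).pow 2))
      convert this using 1
      case e'_4 => rfl
      case e'_5 => rfl
      case e'_8 => rfl
      simp only [id_eq, Pi.pow_apply]
      ring
    have hintF : IntervalIntegrable (fun x => (u x) ^ 2 + (x - 1) * (2 * u x * u' x))
        MeasureTheory.volume 0 1 := by
      apply ContinuousOn.intervalIntegrable; rw [huIcc]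
      exact (hu.pow 2).add (((continuousOn_id.sub continuousOn_const)).mul
        ((continuousOn_const.mul hu).mul hcont))
    have heq := ftc01 F _ hF' hintF
    have hFval : F 1 - F 0 = (u 0) ^ 2 := by simp [hF]
    rw [hFval] at heq
    rw [← heq]
    apply intervalIntegral.integral_mono_on zero_le_one hintF
    · exact (hiu2.const_mul 2).add hiu'2
    · intro x hx
      nlinarith [mul_nonneg (by linarith [hx.2] : (0:ℝ) ≤ 1 - x) (sq_nonneg (u x + u' x)),
        mul_nonneg hx.1 (add_nonneg (sq_nonneg (u x)) (sq_nonneg (u' x)))]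
  -- Part 2
  have key2 : (∫ x in (0:ℝ)..1, ((u x) ^ 2 - (u' x) ^ 2)) ≤ Real.tan 1 * (u 1) ^ 2 := by
    set G : ℝ → ℝ := fun x => Real.tan x * (u x) ^ 2 with hG
    have hG' : ∀ x ∈ Icc (0:ℝ) 1,
        HasDerivWithinAt G ((1 + Real.tan x ^ 2) * (u x) ^ 2
          + Real.tan x * (2 * u x * u' x)) (Icc 0 1) x := by
      intro x hx
      have ht : HasDerivWithinAt Real.tan (1 / Real.cos x ^ 2) (Icc 0 1) x := (Real.hasDerivAt_tan (hcos x hx)).hasDerivWithinAt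
      have := ht.mul ((hderiv x hx).pow 2)
      convert this using 1
      case e'_4 => rfl
      case e'_5 => rfl
      case e'_8 => rfl
      have hc := hcos x hx
      have h1 : 1 / Real.cos x ^ 2 = 1 + Real.tan x ^ 2 := by
        rw [Real.tan_eq_sin_div_cos]
        field_simp
        exact (Real.cos_sq_add_sin_sq x).symm
      rw [h1, Pi.pow_apply]
      ring
    have hintG : IntervalIntegrable
        (fun x => (1 + Real.tan x ^ 2) * (u x) ^ 2 + Real.tan x * (2 * u x * u' x))
        MeasureTheory.volume 0 1 := by
      apply ContinuousOn.intervalIntegrable; rw [huIcc]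
      exact ((continuousOn_const.add (htanc.pow 2)).mul (hu.pow 2)).add
        (htanc.mul ((continuousOn_const.mul hu).mul hcont))
    have heq := ftc01 G _ hG' hintG
    have hGval : G 1 - G 0 = Real.tan 1 * (u 1) ^ 2 := by simp [hG]
    rw [hGval] at heq
    rw [← heq]
    apply intervalIntegral.integral_mono_on zero_le_one (hiu2.sub hiu'2) hintG
    intro x hx
    nlinarith [sq_nonneg (Real.tan x * u x + u' x)]
  have htan1 : Real.tan 1 ≤ 2 := by
    have hc : (1:ℝ) / 2 < Real.cos 1 := by
      have := Real.one_sub_sq_div_two_lt_cos (x := 1) one_ne_zero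
      linarith
    have hs : Real.sin 1 ≤ 1 := Real.sin_le_one 1
    rw [Real.tan_eq_sin_div_cos]
    rw [div_le_iff₀ (by linarith)]
    linarith
  constructor
  · have hsplit : (∫ x in (0:ℝ)..1, (2 * (u x) ^ 2 + (u' x) ^ 2))
        = 2 * (∫ x in (0:ℝ)..1, (u x) ^ 2) + (∫ x in (0:ℝ)..1, (u' x) ^ 2) := by
      rw [intervalIntegral.integral_add (hiu2.const_mul 2) hiu'2,
        intervalIntegral.integral_const_mul]
    linarith [key1, hsplit ▸ key1]
  · have hsplit : (∫ x in (0:ℝ)..1, ((u x) ^ 2 - (u' x) ^ 2))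
        = (∫ x in (0:ℝ)..1, (u x) ^ 2) - (∫ x in (0:ℝ)..1, (u' x) ^ 2) :=
      intervalIntegral.integral_sub hiu2 hiu'2
    have : Real.tan 1 * (u 1) ^ 2 ≤ 2 * (u 1) ^ 2 :=
      mul_le_mul_of_nonneg_right htan1 (sq_nonneg _)
    linarith [hsplit ▸ key2]
end

section
/- Let u : [0,1] → ℝ be twice continuously differentiable, let a₁ ∈ ℝ and a₂ ≠ 0 with a₁/a₂ ≥ −1/2. If u(0) = 0 and a₁·u(1) + a₂·u′(1) = 0, then ∫_0^1 u″(x)·u(x) dx ≤ 0. -/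
open Set intervalIntegral

theorem stmt_7 (u u' u'' : ℝ → ℝ) (a₁ a₂ : ℝ) (ha₂ : a₂ ≠ 0)
    (hratio : a₁ / a₂ ≥ -(1 / 2))
    (hderiv : ∀ x ∈ Icc (0:ℝ) 1, HasDerivWithinAt u (u' x) (Icc 0 1) x)
    (hderiv' : ∀ x ∈ Icc (0:ℝ) 1, HasDerivWithinAt u' (u'' x) (Icc 0 1) x)
    (hcont : ContinuousOn u'' (Icc (0:ℝ) 1))
    (hbc0 : u 0 = 0) (hbc1 : a₁ * u 1 + a₂ * u' 1 = 0) :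
    (∫ x in (0:ℝ)..1, u'' x * u x) ≤ 0 := by
  have huIcc : Set.uIcc (0:ℝ) 1 = Icc (0:ℝ) 1 := uIcc_of_le (by norm_num)
  have hcu' : ContinuousOn u' (Icc (0:ℝ) 1) :=
    fun x hx => (hderiv' x hx).continuousWithinAt
  have hcu : ContinuousOn u (Icc (0:ℝ) 1) :=
    fun x hx => (hderiv x hx).continuousWithinAt
  have hintu' : IntervalIntegrable u' MeasureTheory.volume 0 1 :=
    (hcu'.mono (by rw [huIcc])).intervalIntegrable
  have hintu'' : IntervalIntegrable u'' MeasureTheory.volume 0 1 :=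
    (hcont.mono (by rw [huIcc])).intervalIntegrable
  have hintsq : IntervalIntegrable (fun x => u' x * u' x) MeasureTheory.volume 0 1 :=
    ((hcu'.mul hcu').mono (by rw [huIcc])).intervalIntegrable
  -- integration by parts
  have ibp : (∫ x in (0:ℝ)..1, u' x * u' x)
      = u' 1 * u 1 - u' 0 * u 0 - ∫ x in (0:ℝ)..1, u'' x * u x := by
    apply integral_mul_deriv_eq_deriv_mul_of_hasDerivWithinAt
    · intro x hx; rw [huIcc] at hx ⊢; exact hderiv' x hx
    · intro x hx; rw [huIcc] at hx ⊢; exact hderiv x hx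
    · exact hintu''
    · exact hintu'
  -- FTC: u 1 = ∫ u'
  have ftc : (∫ x in (0:ℝ)..1, u' x) = u 1 - u 0 := by
    apply integral_eq_sub_of_hasDerivAt_of_le (by norm_num)
      hcu
    · intro x hx
      exact (hderiv x (Ioo_subset_Icc_self hx)).hasDerivAt (Icc_mem_nhds hx.1 hx.2)
    · exact hintu'
  set c : ℝ := ∫ x in (0:ℝ)..1, u' x with hc
  have hu1 : u 1 = c := by rw [ftc, hbc0]; ring
  -- Cauchy-Schwarz style: c^2 ≤ ∫ u'^2
  have hcs : c ^ 2 ≤ ∫ x in (0:ℝ)..1, u' x * u' x := by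
    have hnn : (0:ℝ) ≤ ∫ x in (0:ℝ)..1, (u' x - c) ^ 2 := by
      apply intervalIntegral.integral_nonneg (by norm_num)
      intro x _; positivity
    have hexp : (∫ x in (0:ℝ)..1, (u' x - c) ^ 2)
        = (∫ x in (0:ℝ)..1, u' x * u' x) - 2 * c * c + c ^ 2 := by
      have : ∀ x : ℝ, (u' x - c) ^ 2 = u' x * u' x - (2 * c) * u' x + c ^ 2 := by
        intro x; ring
      simp_rw [this]
      rw [intervalIntegral.integral_add (hintsq.sub (hintu'.const_mul _))
          intervalIntegrable_const,
        intervalIntegral.integral_sub hintsq (hintu'.const_mul _),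
        intervalIntegral.integral_const_mul, ← hc]
      simp
    nlinarith [hnn, hexp]
  -- boundary term
  have hbt : u' 1 * u 1 ≤ (1 / 2) * u 1 ^ 2 := by
    have hu'1 : u' 1 = -(a₁ / a₂) * u 1 := by
      field_simp
      linarith [hbc1]
    rw [hu'1]
    nlinarith [sq_nonneg (u 1)]
  have : (∫ x in (0:ℝ)..1, u'' x * u x) = u' 1 * u 1 - u' 0 * u 0
      - ∫ x in (0:ℝ)..1, u' x * u' x := by linarith [ibp]
  rw [this, hbc0]
  have : (1 / 2 : ℝ) * u 1 ^ 2 ≤ ∫ x in (0:ℝ)..1, u' x * u' x := by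
    rw [hu1]; nlinarith [hcs]
  linarith
end

section
/- Let u : [0,1] → ℝ be twice continuously differentiable, let b₁ ∈ ℝ and b₂ ≠ 0 with b₁/b₂ ≤ 1/2. If u(1) = 0 and b₁·u(0) + b₂·u′(0) = 0, then ∫_0^1 u″(x)·u(x) dx ≤ 0. -/
open Set intervalIntegral

theorem stmt_8 (u u' u'' : ℝ → ℝ) (b₁ b₂ : ℝ) (hb₂ : b₂ ≠ 0)
    (hratio : b₁ / b₂ ≤ 1 / 2)
    (hderiv : ∀ x ∈ Icc (0:ℝ) 1, HasDerivWithinAt u (u' x) (Icc 0 1) x)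
    (hderiv' : ∀ x ∈ Icc (0:ℝ) 1, HasDerivWithinAt u' (u'' x) (Icc 0 1) x)
    (hcont : ContinuousOn u'' (Icc (0:ℝ) 1))
    (hbc1 : u 1 = 0) (hbc0 : b₁ * u 0 + b₂ * u' 0 = 0) :
    (∫ x in (0:ℝ)..1, u'' x * u x) ≤ 0 := by
  have huIcc : uIcc (0:ℝ) 1 = Icc (0:ℝ) 1 := uIcc_of_le (by norm_num)
  have hcu' : ContinuousOn u' (Icc (0:ℝ) 1) :=
    fun x hx => (hderiv' x hx).continuousWithinAt
  have hcu : ContinuousOn u (Icc (0:ℝ) 1) :=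
    fun x hx => (hderiv x hx).continuousWithinAt
  have hint'' : IntervalIntegrable u'' MeasureTheory.volume 0 1 :=
    (huIcc ▸ hcont).intervalIntegrable
  have hint' : IntervalIntegrable u' MeasureTheory.volume 0 1 :=
    (huIcc ▸ hcu').intervalIntegrable
  have hintsq : IntervalIntegrable (fun x => u' x * u' x) MeasureTheory.volume 0 1 :=
    ((huIcc ▸ hcu').mul (huIcc ▸ hcu')).intervalIntegrable
  -- integration by parts
  have hibp : ∫ x in (0:ℝ)..1, u x * u'' x
      = u 1 * u' 1 - u 0 * u' 0 - ∫ x in (0:ℝ)..1, u' x * u' x :=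
    integral_mul_deriv_eq_deriv_mul_of_hasDerivWithinAt
      (fun x hx => huIcc ▸ hderiv x (huIcc ▸ hx))
      (fun x hx => huIcc ▸ hderiv' x (huIcc ▸ hx)) hint' hint''
  have hcomm : (∫ x in (0:ℝ)..1, u'' x * u x) = ∫ x in (0:ℝ)..1, u x * u'' x := by
    simp_rw [mul_comm]
  -- FTC: ∫ u' = u 1 - u 0 = - u 0
  have hftc : (∫ x in (0:ℝ)..1, u' x) = u 1 - u 0 :=
    integral_eq_sub_of_hasDeriv_right (huIcc ▸ hcu)
      (fun x hx => by
        simp only [min_eq_left, max_eq_right, zero_le_one] at hx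
        exact ((hderiv x (Ioo_subset_Icc_self hx)).hasDerivAt
          (Icc_mem_nhds hx.1 hx.2)).hasDerivWithinAt) hint'
  rw [hbc1] at hftc
  -- Cauchy–Schwarz (variance trick): (∫ u')² ≤ ∫ u'²
  set c : ℝ := ∫ x in (0:ℝ)..1, u' x with hc
  have hCS : c ^ 2 ≤ ∫ x in (0:ℝ)..1, u' x * u' x := by
    have h0 : (0:ℝ) ≤ ∫ x in (0:ℝ)..1, (u' x - c) ^ 2 :=
      intervalIntegral.integral_nonneg (by norm_num) (fun x _ => sq_nonneg _)
    have hexp : (∫ x in (0:ℝ)..1, (u' x - c) ^ 2)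
        = (∫ x in (0:ℝ)..1, u' x * u' x) - 2 * c * c + c ^ 2 := by
      have : ∀ x : ℝ, (u' x - c) ^ 2 = u' x * u' x - (2 * c) * u' x + c ^ 2 := by
        intro x; ring
      simp_rw [this]
      rw [intervalIntegral.integral_add (hintsq.sub ((hint'.const_mul (2 * c))))
        intervalIntegrable_const,
        intervalIntegral.integral_sub hintsq (hint'.const_mul (2 * c)),
        intervalIntegral.integral_const_mul, intervalIntegral.integral_const, ← hc]
      simp
    nlinarith [h0, hexp]
  -- boundary term
  have hu'0 : u' 0 = -(b₁ / b₂) * u 0 := by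
    field_simp
    linarith [hbc0]
  have hbound : - (u 0 * u' 0) ≤ ∫ x in (0:ℝ)..1, u' x * u' x := by
    have hc2 : c ^ 2 = u 0 ^ 2 := by rw [hftc]; ring
    rw [hu'0]
    have : -(u 0 * (-(b₁ / b₂) * u 0)) = (b₁ / b₂) * u 0 ^ 2 := by ring
    rw [this]
    rcases le_or_gt (b₁ / b₂) 0 with h | h
    · have h1 : (b₁ / b₂) * u 0 ^ 2 ≤ 0 := mul_nonpos_of_nonpos_of_nonneg h (sq_nonneg _)
      have h2 : (0:ℝ) ≤ ∫ x in (0:ℝ)..1, u' x * u' x :=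
        intervalIntegral.integral_nonneg (by norm_num) (fun x _ => mul_self_nonneg _)
      linarith
    · nlinarith [sq_nonneg (u 0), hCS, hc2]
  have hnonneg : (0:ℝ) ≤ ∫ x in (0:ℝ)..1, u' x * u' x :=
    intervalIntegral.integral_nonneg (by norm_num) (fun x _ => mul_self_nonneg _)
  rw [hcomm, hibp, hbc1]
  have hc2 : c ^ 2 = u 0 ^ 2 := by rw [hftc]; ring
  nlinarith [hbound, hCS, hc2]
end

section
/- Let u : [0,1] → ℝ be twice continuously differentiable and let a₁, b₁ ∈ ℝ, a₂ ≠ 0, b₂ ≠ 0. Suppose there exist A₁, A₂ ≥ 0 with A₁ + A₂ = 1 such that a₁/a₂ ≥ 2A₂, b₁/b₂ ≤ A₁, and A₂ − 2A₁ ≥ 0. If a₁·u(1) + a₂·u′(1) = 0 and b₁·u(0) + b₂·u′(0) = 0, then ∫_0^1 u″(x)·u(x) dx ≤ 0. -/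
open Set intervalIntegral MeasureTheory ProbabilityTheory

/-- Cauchy-Schwarz on [0,1]: `(∫ f)² ≤ ∫ f²` for `f` continuous on `[0,1]`. -/
lemma sq_int_le_int_sq {f : ℝ → ℝ} (hf : ContinuousOn f (Icc (0:ℝ) 1)) :
    (∫ x in (0:ℝ)..1, f x) ^ 2 ≤ ∫ x in (0:ℝ)..1, f x ^ 2 := by
  set μ : Measure ℝ := volume.restrict (Ioc (0:ℝ) 1) with hμ
  haveI : IsProbabilityMeasure μ := ⟨by simp [hμ, Real.volume_Ioc]⟩
  have hfc : ContinuousOn f (Ioc (0:ℝ) 1) := hf.mono Ioc_subset_Icc_self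
  have hmeas : AEStronglyMeasurable f μ := hfc.aestronglyMeasurable measurableSet_Ioc
  obtain ⟨C, hC⟩ := (isCompact_Icc (a := (0:ℝ)) (b := 1)).exists_bound_of_continuousOn hf
  have hmem : MemLp f 2 μ := by
    refine MemLp.of_bound hmeas C ?_
    refine (ae_restrict_iff' measurableSet_Ioc).2 (Filter.Eventually.of_forall fun x hx => ?_)
    exact hC x (Ioc_subset_Icc_self hx)
  have hv := variance_nonneg f μ
  rw [variance_eq_sub hmem] at hv
  have h1 : (∫ x in (0:ℝ)..1, f x) = ∫ x, f x ∂μ := by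
    rw [intervalIntegral.integral_of_le zero_le_one]
  have h2 : (∫ x in (0:ℝ)..1, f x ^ 2) = ∫ x, f x ^ 2 ∂μ := by
    rw [intervalIntegral.integral_of_le zero_le_one]
  rw [h1, h2]
  have : (∫ x, (f ^ 2) x ∂μ) = ∫ x, f x ^ 2 ∂μ := by rfl
  linarith [hv, this ▸ hv]

theorem stmt_9 (u u' u'' : ℝ → ℝ) (a₁ a₂ b₁ b₂ : ℝ) (ha₂ : a₂ ≠ 0) (hb₂ : b₂ ≠ 0)
    (hA : ∃ A₁ A₂ : ℝ, 0 ≤ A₁ ∧ 0 ≤ A₂ ∧ A₁ + A₂ = 1 ∧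
      a₁ / a₂ ≥ 2 * A₂ ∧ b₁ / b₂ ≤ A₁ ∧ A₂ - 2 * A₁ ≥ 0)
    (hderiv : ∀ x ∈ Icc (0:ℝ) 1, HasDerivWithinAt u (u' x) (Icc 0 1) x)
    (hderiv' : ∀ x ∈ Icc (0:ℝ) 1, HasDerivWithinAt u' (u'' x) (Icc 0 1) x)
    (hcont : ContinuousOn u'' (Icc (0:ℝ) 1))
    (hbc1 : a₁ * u 1 + a₂ * u' 1 = 0) (hbc0 : b₁ * u 0 + b₂ * u' 0 = 0) :
    (∫ x in (0:ℝ)..1, u'' x * u x) ≤ 0 := by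
  obtain ⟨A₁, A₂, hA₁, hA₂, hsum, hra, hrb, hA21⟩ := hA
  have hu : ContinuousOn u (Icc (0:ℝ) 1) := fun x hx => (hderiv x hx).continuousWithinAt
  have hu' : ContinuousOn u' (Icc (0:ℝ) 1) := fun x hx => (hderiv' x hx).continuousWithinAt
  have hIcc : uIcc (0:ℝ) 1 = Icc (0:ℝ) 1 := uIcc_of_le zero_le_one
  have hint1 : IntervalIntegrable (fun x => u'' x * u x) volume 0 1 :=
    ContinuousOn.intervalIntegrable (by rw [hIcc]; exact hcont.mul hu)
  have hint2 : IntervalIntegrable (fun x => u' x ^ 2) volume 0 1 :=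
    ContinuousOn.intervalIntegrable (by rw [hIcc]; exact hu'.pow 2)
  -- FTC for u : ∫ u' = u 1 - u 0
  have key : ∀ (f f' : ℝ → ℝ), (∀ x ∈ Icc (0:ℝ) 1, HasDerivWithinAt f (f' x) (Icc 0 1) x) →
      ContinuousOn f (Icc (0:ℝ) 1) → IntervalIntegrable f' volume 0 1 →
      (∫ x in (0:ℝ)..1, f' x) = f 1 - f 0 := by
    intro f f' hd hc hi
    refine integral_eq_sub_of_hasDeriv_right_of_le zero_le_one hc (fun x hx => ?_) hi
    exact (hd x (Ioo_subset_Icc_self hx)).mono_of_mem_nhdsWithin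
      (Icc_mem_nhdsGT_of_mem ⟨hx.1.le, hx.2⟩)
  have hu'int : IntervalIntegrable u' volume 0 1 := ContinuousOn.intervalIntegrable (by rw [hIcc]; exact hu')
  have hD : (∫ x in (0:ℝ)..1, u' x) = u 1 - u 0 := key u u' hderiv hu hu'int
  -- integration by parts
  have hparts : (∫ x in (0:ℝ)..1, (u'' x * u x + u' x ^ 2)) = u' 1 * u 1 - u' 0 * u 0 := by
    refine key (fun x => u' x * u x) _ (fun x hx => ?_)
      (hu'.mul hu) (hint1.add hint2)
    have := (hderiv' x hx).fun_mul (hderiv x hx)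
    refine this.congr_deriv ?_
    ring
  rw [intervalIntegral.integral_add hint1 hint2] at hparts
  set P := ∫ x in (0:ℝ)..1, u' x ^ 2 with hP
  have hPnn : 0 ≤ P := intervalIntegral.integral_nonneg zero_le_one fun x _ => sq_nonneg _
  have hCS : (u 1 - u 0) ^ 2 ≤ P := hD ▸ sq_int_le_int_sq hu'
  -- boundary values
  have hb1 : u' 1 = -(a₁ / a₂) * u 1 := by field_simp; linarith
  have hb0 : u' 0 = -(b₁ / b₂) * u 0 := by field_simp; linarith
  have hmain : (∫ x in (0:ℝ)..1, u'' x * u x) = u' 1 * u 1 - u' 0 * u 0 - P := by linarith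
  rw [hmain, hb1, hb0]
  have e2 : 2 * A₂ * u 1 ^ 2 ≤ (a₁ / a₂) * u 1 ^ 2 :=
    mul_le_mul_of_nonneg_right hra (sq_nonneg _)
  have e0 : (b₁ / b₂) * u 0 ^ 2 ≤ A₁ * u 0 ^ 2 :=
    mul_le_mul_of_nonneg_right hrb (sq_nonneg _)
  have hy2 : u 0 ^ 2 ≤ 2 * u 1 ^ 2 + 2 * P := by nlinarith [sq_nonneg (2 * u 1 - u 0), hCS]
  have hAy : A₁ * u 0 ^ 2 ≤ A₁ * (2 * u 1 ^ 2 + 2 * P) := mul_le_mul_of_nonneg_left hy2 hA₁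
  have hxA : 0 ≤ (A₂ - A₁) * u 1 ^ 2 := mul_nonneg (by linarith) (sq_nonneg _)
  have hPA : 0 ≤ (A₂ - A₁) * P := mul_nonneg (by linarith) hPnn
  have hsP : A₁ * P + A₂ * P = P := by rw [← add_mul, hsum, one_mul]
  nlinarith [e2, e0, hAy, hxA, hPA, hsP]
end

section
/- Under Assumption A3a (a₂ ≠ 0; there exist A′₁, A′₂ ≥ 0 with A′₁ + A′₂ = μ such that −(a₁/a₂)μ + M₂/2 ≤ −2A′₂, (b₁/b₂)μ − M₂/2 < A′₁, and M₁ < A′₂ − 2A′₁), there exist constants C₃, C₄, C₅ > 0 such that every classical solution u of the boundary-value problem satisfies, for all t ≥ 0: ‖u(t,·)‖² ≤ ‖u(0,·)‖²·e^{−C₃t} + C₄·∫_0^t d₁(s)² ds + C₅·∫_0^t d₂(s)² ds, and ‖u(t,·)‖² ≤ ‖u(0,·)‖²·e^{−C₃t} + (1 − e^{−C₃t})·(C₄·sup_{0≤s≤t} d₁(s)² + C₅·sup_{0≤s≤t} d₂(s)²). -/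
open Set intervalIntegral Real
open MeasureTheory

lemma ftc01_s14 {F F' : ℝ → ℝ} {a b : ℝ} (ha : 0 ≤ a) (hab : a ≤ b) (hb : b ≤ 1)
    (hF : ∀ x ∈ Icc (0:ℝ) 1, HasDerivWithinAt F (F' x) (Icc 0 1) x)
    (hF' : ContinuousOn F' (Icc 0 1)) : ∫ x in a..b, F' x = F b - F a := by
  have hsub : Icc a b ⊆ Icc (0:ℝ) 1 := Icc_subset_Icc ha hb
  apply integral_eq_sub_of_hasDeriv_right_of_le hab
  · exact fun x hx => ((hF x (hsub hx)).continuousWithinAt).mono hsub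
  · intro x hx
    have hx' : x ∈ Ioo (0:ℝ) 1 := ⟨lt_of_le_of_lt ha hx.1, lt_of_lt_of_le hx.2 hb⟩
    have : HasDerivAt F (F' x) x :=
      (hF x (Ioo_subset_Icc_self hx')).hasDerivAt (Icc_mem_nhds hx'.1 hx'.2)
    exact this.hasDerivWithinAt
  · exact ((hF'.mono hsub).mono (by rw [uIcc_of_le hab])).intervalIntegrable

lemma cs_int {g : ℝ → ℝ} {a b : ℝ} (hab : a ≤ b) (hg : ContinuousOn g (Icc a b)) :
    (∫ s in a..b, g s) ^ 2 ≤ (b - a) * ∫ s in a..b, (g s) ^ 2 := by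
  rcases eq_or_lt_of_le hab with rfl | hlt
  · simp
  · have hgi : IntervalIntegrable g volume a b :=
      (hg.mono (by rw [uIcc_of_le hab])).intervalIntegrable
    have hg2i : IntervalIntegrable (fun s => (g s) ^ 2) volume a b :=
      ((hg.pow 2).mono (by rw [uIcc_of_le hab])).intervalIntegrable
    set L : ℝ := b - a with hL
    have hLpos : 0 < L := by simp [hL]; linarith
    set G : ℝ := ∫ s in a..b, g s with hG
    set c : ℝ := G / L with hc
    have key : 0 ≤ ∫ s in a..b, (g s - c) ^ 2 :=
      intervalIntegral.integral_nonneg hab (fun x _ => sq_nonneg _)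
    have expand : ∫ s in a..b, (g s - c) ^ 2
        = (∫ s in a..b, (g s) ^ 2) - 2 * c * G + c ^ 2 * L := by
      have : (fun s => (g s - c) ^ 2)
          = fun s => (g s) ^ 2 + ((-(2 * c)) * g s + c ^ 2) := by
        funext s; ring
      rw [this, intervalIntegral.integral_add hg2i ((hgi.const_mul _).add intervalIntegrable_const),
        intervalIntegral.integral_add (hgi.const_mul _) intervalIntegrable_const,
        intervalIntegral.integral_const_mul, intervalIntegral.integral_const]
      simp [hG, hL]
      ring
    rw [expand] at key
    have hc2 : c * L = G := by rw [hc]; exact div_mul_cancel₀ G hLpos.ne'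
    nlinarith [key, sq_nonneg c, hLpos]

lemma poincare1 {U Ux : ℝ → ℝ}
    (hU : ∀ x ∈ Icc (0:ℝ) 1, HasDerivWithinAt U (Ux x) (Icc 0 1) x)
    (hUx : ContinuousOn Ux (Icc 0 1)) :
    (∫ x in (0:ℝ)..1, (U x) ^ 2) ≤ 2 * (U 1) ^ 2 + ∫ x in (0:ℝ)..1, (Ux x) ^ 2 := by
  set K : ℝ := ∫ x in (0:ℝ)..1, (Ux x) ^ 2 with hK
  have cU : ContinuousOn U (Icc 0 1) := fun x hx => (hU x hx).continuousWithinAt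
  have hptw : ∀ x ∈ Icc (0:ℝ) 1, (U x) ^ 2 ≤ 2 * (U 1) ^ 2 + 2 * (1 - x) * K := by
    intro x hx
    have hftc : ∫ s in x..1, Ux s = U 1 - U x := ftc01_s14 hx.1 hx.2 le_rfl hU hUx
    have hcs : (∫ s in x..1, Ux s) ^ 2 ≤ (1 - x) * ∫ s in x..1, (Ux s) ^ 2 :=
      cs_int hx.2 ((hUx.pow 1).mono (Icc_subset_Icc hx.1 le_rfl) |>.congr (by intro s hs; simp))
    have hsub : (∫ s in x..1, (Ux s) ^ 2) ≤ K := by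
      have hsplit : (∫ s in (0:ℝ)..x, (Ux s) ^ 2) + (∫ s in x..1, (Ux s) ^ 2) = K := by
        rw [hK]
        apply intervalIntegral.integral_add_adjacent_intervals
        · exact (((hUx.pow 2).mono (Icc_subset_Icc le_rfl hx.2)).mono
            (by rw [uIcc_of_le hx.1])).intervalIntegrable
        · exact (((hUx.pow 2).mono (Icc_subset_Icc hx.1 le_rfl)).mono
            (by rw [uIcc_of_le hx.2])).intervalIntegrable
      have h0 : 0 ≤ ∫ s in (0:ℝ)..x, (Ux s) ^ 2 :=
        intervalIntegral.integral_nonneg hx.1 (fun s _ => sq_nonneg _)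
      linarith
    have h1x : (0:ℝ) ≤ 1 - x := by linarith [hx.2]
    have hUval : U x = U 1 - ∫ s in x..1, Ux s := by rw [hftc]; ring
    calc (U x) ^ 2 = (U 1 - ∫ s in x..1, Ux s) ^ 2 := by rw [← hUval]
      _ ≤ 2 * (U 1) ^ 2 + 2 * (∫ s in x..1, Ux s) ^ 2 := by nlinarith [sq_nonneg (U 1 + ∫ s in x..1, Ux s)]
      _ ≤ 2 * (U 1) ^ 2 + 2 * ((1 - x) * ∫ s in x..1, (Ux s) ^ 2) := by linarith
      _ ≤ 2 * (U 1) ^ 2 + 2 * (1 - x) * K := by nlinarith [mul_le_mul_of_nonneg_left hsub h1x]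
  have hmono : (∫ x in (0:ℝ)..1, (U x) ^ 2) ≤ ∫ x in (0:ℝ)..1, (2 * (U 1) ^ 2 + 2 * (1 - x) * K) := by
    apply intervalIntegral.integral_mono_on (by norm_num)
    · exact ((cU.pow 2).mono (by rw [uIcc_of_le (by norm_num : (0:ℝ) ≤ 1)])).intervalIntegrable
    · apply Continuous.intervalIntegrable; continuity
    · exact hptw
  have hcomp : (∫ x in (0:ℝ)..1, (2 * (U 1) ^ 2 + 2 * (1 - x) * K)) = 2 * (U 1) ^ 2 + K := by
    have : (fun x : ℝ => 2 * (U 1) ^ 2 + 2 * (1 - x) * K)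
        = fun x : ℝ => (2 * (U 1) ^ 2 + 2 * K) + (-(2 * K)) * x := by funext x; ring
    rw [this, intervalIntegral.integral_add intervalIntegrable_const
      ((intervalIntegral.intervalIntegrable_id).const_mul _),
      intervalIntegral.integral_const_mul, integral_id, intervalIntegral.integral_const]
    norm_num; ring
  linarith [hmono, hcomp.le, hcomp.ge]

lemma poincare2 {U Ux : ℝ → ℝ}
    (hU : ∀ x ∈ Icc (0:ℝ) 1, HasDerivWithinAt U (Ux x) (Icc 0 1) x)
    (hUx : ContinuousOn Ux (Icc 0 1)) :
    (U 0) ^ 2 ≤ 2 * (∫ x in (0:ℝ)..1, (U x) ^ 2) + ∫ x in (0:ℝ)..1, (Ux x) ^ 2 := by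
  set K : ℝ := ∫ x in (0:ℝ)..1, (Ux x) ^ 2 with hK
  have cU : ContinuousOn U (Icc 0 1) := fun x hx => (hU x hx).continuousWithinAt
  have hptw : ∀ x ∈ Icc (0:ℝ) 1, (U 0) ^ 2 ≤ 2 * (U x) ^ 2 + 2 * x * K := by
    intro x hx
    have hftc : ∫ s in (0:ℝ)..x, Ux s = U x - U 0 := ftc01_s14 le_rfl hx.1 hx.2 hU hUx
    have hcs : (∫ s in (0:ℝ)..x, Ux s) ^ 2 ≤ x * ∫ s in (0:ℝ)..x, (Ux s) ^ 2 := by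
      have := cs_int hx.1 ((hUx.mono (Icc_subset_Icc le_rfl hx.2)))
      simpa using this
    have hsub : (∫ s in (0:ℝ)..x, (Ux s) ^ 2) ≤ K := by
      have hsplit : (∫ s in (0:ℝ)..x, (Ux s) ^ 2) + (∫ s in x..1, (Ux s) ^ 2) = K := by
        rw [hK]
        apply intervalIntegral.integral_add_adjacent_intervals
        · exact (((hUx.pow 2).mono (Icc_subset_Icc le_rfl hx.2)).mono
            (by rw [uIcc_of_le hx.1])).intervalIntegrable
        · exact (((hUx.pow 2).mono (Icc_subset_Icc hx.1 le_rfl)).mono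
            (by rw [uIcc_of_le hx.2])).intervalIntegrable
      have h0 : 0 ≤ ∫ s in x..1, (Ux s) ^ 2 :=
        intervalIntegral.integral_nonneg hx.2 (fun s _ => sq_nonneg _)
      linarith
    have hUval : U 0 = U x - ∫ s in (0:ℝ)..x, Ux s := by rw [hftc]; ring
    calc (U 0) ^ 2 = (U x - ∫ s in (0:ℝ)..x, Ux s) ^ 2 := by rw [← hUval]
      _ ≤ 2 * (U x) ^ 2 + 2 * (∫ s in (0:ℝ)..x, Ux s) ^ 2 := by nlinarith [sq_nonneg (U x + ∫ s in (0:ℝ)..x, Ux s)]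
      _ ≤ 2 * (U x) ^ 2 + 2 * (x * ∫ s in (0:ℝ)..x, (Ux s) ^ 2) := by linarith
      _ ≤ 2 * (U x) ^ 2 + 2 * x * K := by nlinarith [mul_le_mul_of_nonneg_left hsub hx.1]
  have hmono : (∫ x in (0:ℝ)..1, (U 0) ^ 2) ≤ ∫ x in (0:ℝ)..1, (2 * (U x) ^ 2 + 2 * x * K) := by
    apply intervalIntegral.integral_mono_on (by norm_num)
    · exact intervalIntegrable_const
    · apply IntervalIntegrable.add
      · exact ((continuousOn_const.mul (cU.pow 2)).mono (by rw [uIcc_of_le (by norm_num : (0:ℝ) ≤ 1)])).intervalIntegrable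
      · apply Continuous.intervalIntegrable; continuity
    · exact hptw
  have hLHS : (∫ x in (0:ℝ)..1, (U 0) ^ 2) = (U 0) ^ 2 := by simp
  have hcomp : (∫ x in (0:ℝ)..1, (2 * (U x) ^ 2 + 2 * x * K))
      = 2 * (∫ x in (0:ℝ)..1, (U x) ^ 2) + K := by
    rw [intervalIntegral.integral_add (μ := volume) (f := fun x => 2 * (U x) ^ 2) (g := fun x => 2 * x * K)
      ((continuousOn_const.mul (cU.pow 2)).mono (by rw [uIcc_of_le (by norm_num : (0:ℝ) ≤ 1)])).intervalIntegrable
      (by apply Continuous.intervalIntegrable; continuity)]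
    have h1 : (∫ x in (0:ℝ)..1, (2:ℝ) * (U x) ^ 2) = 2 * ∫ x in (0:ℝ)..1, (U x) ^ 2 := by
      exact intervalIntegral.integral_const_mul 2 _
    have h2 : (∫ x in (0:ℝ)..1, 2 * x * K) = K := by
      have : (fun x : ℝ => 2 * x * K) = fun x : ℝ => (2 * K) * x := by funext x; ring
      rw [this, intervalIntegral.integral_const_mul, integral_id]; norm_num; try ring
    rw [h1, h2]
  linarith [hmono, hcomp.le]

lemma gronwall {E E' h : ℝ → ℝ} {c : ℝ} (hc : 0 < c)
    (hEcont : ContinuousOn E (Ici 0))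
    (hE' : ∀ t > (0:ℝ), HasDerivAt E (E' t) t)
    (hle : ∀ t > (0:ℝ), E' t ≤ -c * E t + h t)
    (hh : ContinuousOn h (Ici 0)) :
    ∀ t ≥ (0:ℝ), E t ≤ E 0 * Real.exp (-c * t)
      + Real.exp (-c * t) * ∫ s in (0:ℝ)..t, Real.exp (c * s) * h s := by
  intro t ht
  have hhc : ContinuousOn (fun s => Real.exp (c * s) * h s) (Ici 0) :=
    (Real.continuous_exp.comp (continuous_const.mul continuous_id)).continuousOn.mul hh
  set F : ℝ → ℝ := fun s => E s * Real.exp (c * s) - ∫ r in (0:ℝ)..s, Real.exp (c * r) * h r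
    with hF
  set G : ℝ → ℝ := fun x => E' x * Real.exp (c * x) + E x * (c * Real.exp (c * x))
      - Real.exp (c * x) * h x with hG
  have hGat : ∀ x ∈ interior (Icc 0 t), HasDerivAt F (G x) x := by
    intro x hx
    rw [interior_Icc] at hx
    have hx0 : 0 < x := hx.1
    have hexp : HasDerivAt (fun s : ℝ => Real.exp (c * s)) (c * Real.exp (c * x)) x := by
      have := (Real.hasDerivAt_exp (c * x)).comp x ((hasDerivAt_id x).const_mul c)
      simpa [mul_comm, Function.comp_def] using this
    apply HasDerivAt.sub
    · exact (hE' x hx0).mul hexp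
    · apply intervalIntegral.integral_hasDerivAt_right
      · exact (hhc.mono (by rw [uIcc_of_le hx0.le]; exact Icc_subset_Ici_self)).intervalIntegrable
      · exact ContinuousOn.stronglyMeasurableAtFilter isOpen_Ioi
          (hhc.mono Ioi_subset_Ici_self) x hx0
      · exact (hhc x hx0.le).continuousAt (Ici_mem_nhds hx0)
  have hFanti : AntitoneOn F (Icc 0 t) := by
    apply antitoneOn_of_hasDerivWithinAt_nonpos (convex_Icc 0 t) _
      (fun x hx => (hGat x hx).hasDerivWithinAt)
    · intro x hx
      rw [interior_Icc] at hx
      have := hle x hx.1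
      have hep := Real.exp_pos (c * x)
      simp only [hG]
      nlinarith
    · apply ContinuousOn.sub
      · exact (hEcont.mono Icc_subset_Ici_self).mul
          ((Real.continuous_exp.comp (continuous_const.mul continuous_id)).continuousOn)
      · have hint : IntervalIntegrable (fun r => Real.exp (c * r) * h r) volume 0 t :=
          (hhc.mono (by rw [uIcc_of_le ht]; exact Icc_subset_Ici_self)).intervalIntegrable
        have := intervalIntegral.continuousOn_primitive_interval'
          (μ := volume) hint (by rw [uIcc_of_le ht]; exact left_mem_Icc.2 ht)
        exact this.mono (by rw [uIcc_of_le ht])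
  have hFt : F t ≤ F 0 := hFanti (left_mem_Icc.2 ht) (right_mem_Icc.2 ht) ht
  have hF0 : F 0 = E 0 := by simp [hF]
  rw [hF0] at hFt
  simp only [hF] at hFt
  have hep : 0 < Real.exp (c * t) := Real.exp_pos _
  have hexp_inv : Real.exp (-c * t) = (Real.exp (c * t))⁻¹ := by
    rw [← Real.exp_neg]; ring_nf
  have h2 : E t * Real.exp (c * t) ≤ E 0 + ∫ r in (0:ℝ)..t, Real.exp (c * r) * h r := by
    linarith
  rw [hexp_inv]
  have hmul := mul_le_mul_of_nonneg_right h2 (le_of_lt (inv_pos.2 hep))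
  calc E t = E t * Real.exp (c * t) * (Real.exp (c * t))⁻¹ := by field_simp
    _ ≤ (E 0 + ∫ r in (0:ℝ)..t, Real.exp (c * r) * h r) * (Real.exp (c * t))⁻¹ := hmul
    _ = E 0 * (Real.exp (c * t))⁻¹ + (Real.exp (c * t))⁻¹ * ∫ r in (0:ℝ)..t, Real.exp (c * r) * h r := by ring

lemma young_ineq (c p q : ℝ) (hc : 0 < c) : p * q ≤ c / 4 * p ^ 2 + 1 / c * q ^ 2 := by
  rw [← sub_nonneg]
  have hid : c / 4 * p ^ 2 + 1 / c * q ^ 2 - p * q = (c * p - 2 * q) ^ 2 / (4 * c) := by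
    field_simp; ring
  rw [hid]; positivity

lemma assemble (E d₁ d₂ : ℝ → ℝ) (C₃ C₄' C₅' : ℝ)
    (hC₃ : 0 < C₃) (hC₄' : 0 < C₄') (hC₅' : 0 < C₅')
    (hd₁c : ContinuousOn d₁ (Ici 0)) (hd₂ : ContinuousOn d₂ (Ici 0))
    (gron : ∀ t ≥ (0:ℝ), E t ≤ E 0 * Real.exp (-C₃ * t)
      + Real.exp (-C₃ * t) * ∫ s in (0:ℝ)..t,
          Real.exp (C₃ * s) * (C₄' * (d₁ s) ^ 2 + C₅' * (d₂ s) ^ 2))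
    (t : ℝ) (ht : 0 ≤ t) :
    (E t ≤ E 0 * Real.exp (-C₃ * t)
        + (C₄' * (1 + 1 / C₃)) * (∫ s in (0:ℝ)..t, (d₁ s) ^ 2)
        + (C₅' * (1 + 1 / C₃)) * (∫ s in (0:ℝ)..t, (d₂ s) ^ 2)) ∧
    (E t ≤ E 0 * Real.exp (-C₃ * t)
        + (1 - Real.exp (-C₃ * t)) *
            ((C₄' * (1 + 1 / C₃)) * sSup ((fun s => (d₁ s) ^ 2) '' Icc 0 t)
              + (C₅' * (1 + 1 / C₃)) * sSup ((fun s => (d₂ s) ^ 2) '' Icc 0 t))) := by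
  have huIcc : uIcc (0:ℝ) t = Icc 0 t := uIcc_of_le ht
  have ii : ∀ {f : ℝ → ℝ}, ContinuousOn f (Icc 0 t) → IntervalIntegrable f volume 0 t :=
    fun {f} hf => ContinuousOn.intervalIntegrable (by rwa [huIcc])
  have hd₁t : ContinuousOn (fun s => (d₁ s) ^ 2) (Icc 0 t) :=
    (hd₁c.mono (Icc_subset_Ici_self)).pow 2
  have hd₂t : ContinuousOn (fun s => (d₂ s) ^ 2) (Icc 0 t) :=
    (hd₂.mono (Icc_subset_Ici_self)).pow 2
  have hht : ContinuousOn (fun s => C₄' * (d₁ s) ^ 2 + C₅' * (d₂ s) ^ 2) (Icc 0 t) :=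
    (continuousOn_const.mul hd₁t).add (continuousOn_const.mul hd₂t)
  have hexpc : Continuous (fun s : ℝ => Real.exp (C₃ * s)) :=
    Real.continuous_exp.comp (continuous_const.mul continuous_id)
  have hJc : ContinuousOn (fun s => Real.exp (C₃ * s) * (C₄' * (d₁ s) ^ 2 + C₅' * (d₂ s) ^ 2))
      (Icc 0 t) := hexpc.continuousOn.mul hht
  set J : ℝ := ∫ s in (0:ℝ)..t, Real.exp (C₃ * s) * (C₄' * (d₁ s) ^ 2 + C₅' * (d₂ s) ^ 2)
    with hJdef
  have hgr := gron t ht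
  have hint1 : (0:ℝ) ≤ ∫ s in (0:ℝ)..t, (d₁ s) ^ 2 :=
    intervalIntegral.integral_nonneg ht (fun s _ => sq_nonneg _)
  have hint2 : (0:ℝ) ≤ ∫ s in (0:ℝ)..t, (d₂ s) ^ 2 :=
    intervalIntegral.integral_nonneg ht (fun s _ => sq_nonneg _)
  have hone : (1:ℝ) ≤ 1 + 1 / C₃ := by
    have : 0 < 1 / C₃ := by positivity
    linarith
  constructor
  · -- first bound
    have hJ1 : Real.exp (-C₃ * t) * J ≤ ∫ s in (0:ℝ)..t, (C₄' * (d₁ s) ^ 2 + C₅' * (d₂ s) ^ 2) := by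
      have heq : Real.exp (-C₃ * t) * J
          = ∫ s in (0:ℝ)..t, Real.exp (-C₃ * t)
              * (Real.exp (C₃ * s) * (C₄' * (d₁ s) ^ 2 + C₅' * (d₂ s) ^ 2)) := by
        rw [hJdef, intervalIntegral.integral_const_mul]
      rw [heq]
      apply intervalIntegral.integral_mono_on ht (ii (continuousOn_const.mul hJc)) (ii hht)
      intro s hs
      have hh0 : 0 ≤ C₄' * (d₁ s) ^ 2 + C₅' * (d₂ s) ^ 2 := by positivity
      have hcb : Real.exp (-C₃ * t) * Real.exp (C₃ * s) ≤ 1 := by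
        rw [← Real.exp_add]
        apply Real.exp_le_one_iff.mpr
        nlinarith [hs.2, hC₃]
      calc Real.exp (-C₃ * t) * (Real.exp (C₃ * s) * (C₄' * (d₁ s) ^ 2 + C₅' * (d₂ s) ^ 2))
          = (Real.exp (-C₃ * t) * Real.exp (C₃ * s)) * (C₄' * (d₁ s) ^ 2 + C₅' * (d₂ s) ^ 2) := by
            ring
        _ ≤ 1 * (C₄' * (d₁ s) ^ 2 + C₅' * (d₂ s) ^ 2) := mul_le_mul_of_nonneg_right hcb hh0
        _ = C₄' * (d₁ s) ^ 2 + C₅' * (d₂ s) ^ 2 := one_mul _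
    have hsplit : (∫ s in (0:ℝ)..t, (C₄' * (d₁ s) ^ 2 + C₅' * (d₂ s) ^ 2))
        = C₄' * (∫ s in (0:ℝ)..t, (d₁ s) ^ 2) + C₅' * (∫ s in (0:ℝ)..t, (d₂ s) ^ 2) := by
      rw [intervalIntegral.integral_add (f := fun s => C₄' * (d₁ s) ^ 2) (g := fun s => C₅' * (d₂ s) ^ 2) (ii (continuousOn_const.mul hd₁t))
        (ii (continuousOn_const.mul hd₂t)), intervalIntegral.integral_const_mul,
        intervalIntegral.integral_const_mul]
    have h4 : C₄' * (∫ s in (0:ℝ)..t, (d₁ s) ^ 2)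
        ≤ (C₄' * (1 + 1 / C₃)) * (∫ s in (0:ℝ)..t, (d₁ s) ^ 2) :=
      mul_le_mul_of_nonneg_right (le_mul_of_one_le_right hC₄'.le hone) hint1
    have h5 : C₅' * (∫ s in (0:ℝ)..t, (d₂ s) ^ 2)
        ≤ (C₅' * (1 + 1 / C₃)) * (∫ s in (0:ℝ)..t, (d₂ s) ^ 2) :=
      mul_le_mul_of_nonneg_right (le_mul_of_one_le_right hC₅'.le hone) hint2
    linarith [hgr, hJ1, hsplit.le, hsplit.ge]
  · -- second bound
    set S₁ : ℝ := sSup ((fun s => (d₁ s) ^ 2) '' Icc 0 t) with hS₁def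
    set S₂ : ℝ := sSup ((fun s => (d₂ s) ^ 2) '' Icc 0 t) with hS₂def
    have hbdd₁ : BddAbove ((fun s => (d₁ s) ^ 2) '' Icc 0 t) :=
      (isCompact_Icc.image_of_continuousOn hd₁t).bddAbove
    have hbdd₂ : BddAbove ((fun s => (d₂ s) ^ 2) '' Icc 0 t) :=
      (isCompact_Icc.image_of_continuousOn hd₂t).bddAbove
    have h0mem : (0:ℝ) ∈ Icc (0:ℝ) t := ⟨le_rfl, ht⟩
    have hS₁0 : 0 ≤ S₁ := le_trans (sq_nonneg (d₁ 0)) (le_csSup hbdd₁ ⟨0, h0mem, rfl⟩)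
    have hS₂0 : 0 ≤ S₂ := le_trans (sq_nonneg (d₂ 0)) (le_csSup hbdd₂ ⟨0, h0mem, rfl⟩)
    have hIexp : (∫ s in (0:ℝ)..t, Real.exp (C₃ * s)) = (Real.exp (C₃ * t) - 1) / C₃ := by
      have hder : ∀ s ∈ uIcc (0:ℝ) t,
          HasDerivAt (fun r => Real.exp (C₃ * r) / C₃) (Real.exp (C₃ * s)) s := by
        intro s _
        have h1 : HasDerivAt (fun r : ℝ => Real.exp (C₃ * r)) (C₃ * Real.exp (C₃ * s)) s := by
          have := (Real.hasDerivAt_exp (C₃ * s)).comp s ((hasDerivAt_id s).const_mul C₃)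
          simpa [mul_comm, Function.comp_def] using this
        have := h1.div_const C₃
        rw [mul_div_cancel_left₀ _ hC₃.ne'] at this
        exact this
      rw [intervalIntegral.integral_eq_sub_of_hasDerivAt hder
        (hexpc.intervalIntegrable 0 t)]
      rw [mul_zero, Real.exp_zero]
      ring
    have hJ2 : J ≤ (C₄' * S₁ + C₅' * S₂) * ((Real.exp (C₃ * t) - 1) / C₃) := by
      have hmono : J ≤ ∫ s in (0:ℝ)..t, Real.exp (C₃ * s) * (C₄' * S₁ + C₅' * S₂) := by
        rw [hJdef]
        apply intervalIntegral.integral_mono_on ht (ii hJc)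
          (ii (hexpc.continuousOn.mul continuousOn_const))
        intro s hs
        apply mul_le_mul_of_nonneg_left _ (Real.exp_pos _).le
        have k1 : (d₁ s) ^ 2 ≤ S₁ := le_csSup hbdd₁ ⟨s, hs, rfl⟩
        have k2 : (d₂ s) ^ 2 ≤ S₂ := le_csSup hbdd₂ ⟨s, hs, rfl⟩
        have := mul_le_mul_of_nonneg_left k1 hC₄'.le
        have := mul_le_mul_of_nonneg_left k2 hC₅'.le
        linarith
      rw [intervalIntegral.integral_mul_const, hIexp] at hmono
      linarith [hmono]
    have hexpe : (0:ℝ) < Real.exp (-C₃ * t) := Real.exp_pos _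
    have ha : 0 ≤ 1 - Real.exp (-C₃ * t) := by
      have : Real.exp (-C₃ * t) ≤ 1 := Real.exp_le_one_iff.mpr (by nlinarith)
      linarith
    have step1 : Real.exp (-C₃ * t) * J
        ≤ Real.exp (-C₃ * t) * ((C₄' * S₁ + C₅' * S₂) * ((Real.exp (C₃ * t) - 1) / C₃)) :=
      mul_le_mul_of_nonneg_left hJ2 hexpe.le
    have hxe : Real.exp (-C₃ * t) * (Real.exp (C₃ * t) - 1) = 1 - Real.exp (-C₃ * t) := by
      rw [mul_sub, ← Real.exp_add, mul_one]
      norm_num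
    have step2 : Real.exp (-C₃ * t) * ((C₄' * S₁ + C₅' * S₂) * ((Real.exp (C₃ * t) - 1) / C₃))
        = (C₄' * S₁ + C₅' * S₂) * ((1 - Real.exp (-C₃ * t)) / C₃) := by
      rw [show Real.exp (-C₃ * t) * ((C₄' * S₁ + C₅' * S₂) * ((Real.exp (C₃ * t) - 1) / C₃))
          = (C₄' * S₁ + C₅' * S₂) * ((Real.exp (-C₃ * t) * (Real.exp (C₃ * t) - 1)) / C₃)
        from by ring, hxe]
    have hc4 : C₄' / C₃ ≤ C₄' * (1 + 1 / C₃) := by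
      rw [div_eq_mul_one_div]
      exact mul_le_mul_of_nonneg_left (by linarith) hC₄'.le
    have hc5 : C₅' / C₃ ≤ C₅' * (1 + 1 / C₃) := by
      rw [div_eq_mul_one_div]
      exact mul_le_mul_of_nonneg_left (by linarith) hC₅'.le
    have k1 : (C₄' / C₃) * (S₁ * (1 - Real.exp (-C₃ * t)))
        ≤ (C₄' * (1 + 1 / C₃)) * (S₁ * (1 - Real.exp (-C₃ * t))) :=
      mul_le_mul_of_nonneg_right hc4 (mul_nonneg hS₁0 ha)
    have k2 : (C₅' / C₃) * (S₂ * (1 - Real.exp (-C₃ * t)))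
        ≤ (C₅' * (1 + 1 / C₃)) * (S₂ * (1 - Real.exp (-C₃ * t))) :=
      mul_le_mul_of_nonneg_right hc5 (mul_nonneg hS₂0 ha)
    have step3 : (C₄' * S₁ + C₅' * S₂) * ((1 - Real.exp (-C₃ * t)) / C₃)
        ≤ (1 - Real.exp (-C₃ * t)) *
            ((C₄' * (1 + 1 / C₃)) * S₁ + (C₅' * (1 + 1 / C₃)) * S₂) := by
      ring_nf at k1 k2 ⊢
      linarith
    linarith [hgr, step1, step2.le, step2.ge, step3]

set_option maxHeartbeats 1000000 in
theorem stmt_14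
    (μ a₁ a₂ b₁ b₂ M₁ M₂ : ℝ) (d : ℝ → ℝ → ℝ) (d₁ d₂ : ℝ → ℝ)
    (hμ : 0 < μ) (hb₂ : b₂ ≠ 0)
    (hd₁ : ContDiffOn ℝ 2 d₁ (Ici 0)) (hd₂ : ContinuousOn d₂ (Ici 0))
    (hdcont : ContinuousOn (fun p : ℝ × ℝ => d p.1 p.2) (Ici 0 ×ˢ Icc 0 1))
    (hd : ∀ t ≥ (0:ℝ), ∀ x ∈ Ioo (0:ℝ) 1, |d t x| ≤ |d₂ t|)
    -- Assumption A3a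
    (ha₂ : a₂ ≠ 0)
    (hA' : ∃ A₁' A₂' : ℝ, 0 ≤ A₁' ∧ 0 ≤ A₂' ∧ A₁' + A₂' = μ ∧
      -(a₁ / a₂) * μ + M₂ / 2 ≤ -(2 * A₂') ∧ b₁ / b₂ * μ - M₂ / 2 < A₁' ∧
      M₁ < A₂' - 2 * A₁') :
    ∃ C₃ > (0:ℝ), ∃ C₄ > (0:ℝ), ∃ C₅ > (0:ℝ),
      ∀ u ux uxx ut : ℝ → ℝ → ℝ,
        (∀ t ≥ (0:ℝ), ∀ x ∈ Icc (0:ℝ) 1, HasDerivWithinAt (u t) (ux t x) (Icc 0 1) x) →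
        (∀ t ≥ (0:ℝ), ∀ x ∈ Icc (0:ℝ) 1, HasDerivWithinAt (ux t) (uxx t x) (Icc 0 1) x) →
        (∀ t ≥ (0:ℝ), ContinuousOn (uxx t) (Icc (0:ℝ) 1)) →
        (∀ t > (0:ℝ), ∀ x ∈ Icc (0:ℝ) 1, HasDerivAt (fun s => u s x) (ut t x) t) →
        (∀ t > (0:ℝ), ∀ x ∈ Ioo (0:ℝ) 1,
          ut t x = μ * uxx t x + d t x + M₁ * u t x + M₂ * ux t x) →
        (∀ t ≥ (0:ℝ), a₁ * u t 1 + a₂ * ux t 1 = 0) →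
        (∀ t ≥ (0:ℝ), b₁ * u t 0 + b₂ * ux t 0 = d₁ t) →
        ContinuousOn (fun t => ∫ x in (0:ℝ)..1, (u t x) ^ 2) (Ici 0) →
        (∀ t > (0:ℝ), HasDerivAt (fun s => ∫ x in (0:ℝ)..1, (u s x) ^ 2)
          (∫ x in (0:ℝ)..1, 2 * u t x * ut t x) t) →
        ∀ t ≥ (0:ℝ),
          ((∫ x in (0:ℝ)..1, (u t x) ^ 2) ≤
            (∫ x in (0:ℝ)..1, (u 0 x) ^ 2) * Real.exp (-C₃ * t)
              + C₄ * (∫ s in (0:ℝ)..t, (d₁ s) ^ 2)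
              + C₅ * (∫ s in (0:ℝ)..t, (d₂ s) ^ 2)) ∧
          ((∫ x in (0:ℝ)..1, (u t x) ^ 2) ≤
            (∫ x in (0:ℝ)..1, (u 0 x) ^ 2) * Real.exp (-C₃ * t)
              + (1 - Real.exp (-C₃ * t)) *
                (C₄ * sSup ((fun s => (d₁ s) ^ 2) '' Icc 0 t)
                  + C₅ * sSup ((fun s => (d₂ s) ^ 2) '' Icc 0 t))) := by
  obtain ⟨A₁', A₂', hA1, hA2, hsum, hbA, hbB, hM⟩ := hA'
  set δ : ℝ := 2 * A₁' - (2 * μ * (b₁ / b₂) - M₂) with hδdef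
  set η : ℝ := 2 * A₂' - 4 * A₁' - 2 * M₁ with hηdef
  have hδ : 0 < δ := by rw [hδdef]; nlinarith [hbB]
  have hη : 0 < η := by rw [hηdef]; nlinarith [hM]
  have hb2sq : 0 < b₂ ^ 2 := lt_of_le_of_ne (sq_nonneg b₂) (Ne.symm (pow_ne_zero 2 hb₂))
  set C₃ : ℝ := η / 2 with hC₃def
  have hC₃ : 0 < C₃ := by rw [hC₃def]; linarith
  set C₄' : ℝ := 2 * μ ^ 2 / (δ * b₂ ^ 2) with hC₄'def
  set C₅' : ℝ := 2 / η with hC₅'def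
  have hC₄' : 0 < C₄' := by
    rw [hC₄'def]; exact div_pos (by positivity) (mul_pos hδ hb2sq)
  have hC₅' : 0 < C₅' := by rw [hC₅'def]; positivity
  have hfac : (0:ℝ) < 1 + 1 / C₃ := by positivity
  refine ⟨C₃, hC₃, C₄' * (1 + 1 / C₃), mul_pos hC₄' hfac,
    C₅' * (1 + 1 / C₃), mul_pos hC₅' hfac, ?_⟩
  set C₄ : ℝ := C₄' * (1 + 1 / C₃) with hC₄def
  set C₅ : ℝ := C₅' * (1 + 1 / C₃) with hC₅def
  intro u ux uxx ut hU hUx hUxx hUt hPDE hB1 hB0 hEcont hEderiv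
  have h01 : (0:ℝ) ≤ 1 := zero_le_one
  have huIcc : uIcc (0:ℝ) 1 = Icc 0 1 := uIcc_of_le h01
  have ii : ∀ {f : ℝ → ℝ}, ContinuousOn f (Icc 0 1) → IntervalIntegrable f volume 0 1 :=
    fun {f} hf => ContinuousOn.intervalIntegrable (by rwa [huIcc])
  have hae01 : ∀ᵐ x : ℝ ∂volume, x ∈ Icc (0:ℝ) 1 → x ∈ Ioo (0:ℝ) 1 := by
    have h0 : (volume : Measure ℝ) {(0:ℝ), 1} = 0 := by
      have : ({(0:ℝ), 1} : Set ℝ).Finite := (Set.finite_singleton 1).insert 0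
      exact this.measure_zero volume
    filter_upwards [compl_mem_ae_iff.mpr h0] with x hx hmem
    simp only [mem_compl_iff, mem_insert_iff, mem_singleton_iff, not_or] at hx
    exact ⟨lt_of_le_of_ne hmem.1 (Ne.symm hx.1), lt_of_le_of_ne hmem.2 hx.2⟩
  have hd₁c : ContinuousOn d₁ (Ici 0) := hd₁.continuousOn
  -- the key differential inequality
  have hkey : ∀ τ > (0:ℝ), (∫ x in (0:ℝ)..1, 2 * u τ x * ut τ x)
      ≤ -C₃ * (∫ x in (0:ℝ)..1, (u τ x) ^ 2) + (C₄' * (d₁ τ) ^ 2 + C₅' * (d₂ τ) ^ 2) := by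
    intro τ hτ
    have hτ0 : (0:ℝ) ≤ τ := hτ.le
    have cU : ContinuousOn (u τ) (Icc 0 1) := fun x hx => (hU τ hτ0 x hx).continuousWithinAt
    have cUx : ContinuousOn (ux τ) (Icc 0 1) := fun x hx => (hUx τ hτ0 x hx).continuousWithinAt
    have cUxx : ContinuousOn (uxx τ) (Icc 0 1) := hUxx τ hτ0
    have cd : ContinuousOn (fun x => d τ x) (Icc 0 1) := by
      have hmap : MapsTo (fun x : ℝ => ((τ, x) : ℝ × ℝ)) (Icc 0 1) (Ici 0 ×ˢ Icc 0 1) :=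
        fun x hx => ⟨hτ0, hx⟩
      exact hdcont.comp ((continuous_const.prodMk continuous_id).continuousOn) hmap
    set I : ℝ := ∫ x in (0:ℝ)..1, (u τ x) ^ 2 with hIdef
    set K : ℝ := ∫ x in (0:ℝ)..1, (ux τ x) ^ 2 with hKdef
    set Dq : ℝ := ∫ x in (0:ℝ)..1, u τ x * d τ x with hDqdef
    have hI0 : 0 ≤ I := intervalIntegral.integral_nonneg h01 (fun x _ => sq_nonneg _)
    have hK0 : 0 ≤ K := intervalIntegral.integral_nonneg h01 (fun x _ => sq_nonneg _)
    -- congruence with the PDE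
    have hcongr : (∫ x in (0:ℝ)..1, 2 * u τ x * ut τ x)
        = ∫ x in (0:ℝ)..1, 2 * u τ x * (μ * uxx τ x + d τ x + M₁ * u τ x + M₂ * ux τ x) := by
      apply intervalIntegral.integral_congr_ae
      filter_upwards [hae01] with x hx hxI
      rw [uIoc_of_le h01] at hxI
      have hxo : x ∈ Ioo (0:ℝ) 1 := hx ⟨hxI.1.le, hxI.2⟩
      rw [hPDE τ hτ x hxo]
    have i1 : IntervalIntegrable (fun x => (2 * μ) * (ux τ x * ux τ x + u τ x * uxx τ x)) volume 0 1 :=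
      ii (continuousOn_const.mul ((cUx.mul cUx).add (cU.mul cUxx)))
    have i2 : IntervalIntegrable (fun x => (-(2 * μ)) * (ux τ x) ^ 2) volume 0 1 :=
      ii (continuousOn_const.mul (cUx.pow 2))
    have i3 : IntervalIntegrable (fun x => 2 * (u τ x * d τ x)) volume 0 1 :=
      ii (continuousOn_const.mul (cU.mul cd))
    have i4 : IntervalIntegrable (fun x => (2 * M₁) * (u τ x) ^ 2) volume 0 1 :=
      ii (continuousOn_const.mul (cU.pow 2))
    have i5 : IntervalIntegrable (fun x => M₂ * (ux τ x * u τ x + u τ x * ux τ x)) volume 0 1 :=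
      ii (continuousOn_const.mul ((cUx.mul cU).add (cU.mul cUx)))
    have hEq : (∫ x in (0:ℝ)..1, 2 * u τ x * ut τ x)
        = 2 * μ * (∫ x in (0:ℝ)..1, (ux τ x * ux τ x + u τ x * uxx τ x))
          + (-(2 * μ)) * K + 2 * Dq + 2 * M₁ * I
          + M₂ * (∫ x in (0:ℝ)..1, (ux τ x * u τ x + u τ x * ux τ x)) := by
      rw [hcongr]
      rw [show (fun x => 2 * u τ x * (μ * uxx τ x + d τ x + M₁ * u τ x + M₂ * ux τ x))
          = fun x => (2 * μ) * (ux τ x * ux τ x + u τ x * uxx τ x)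
            + ((-(2 * μ)) * (ux τ x) ^ 2 + (2 * (u τ x * d τ x)
              + ((2 * M₁) * (u τ x) ^ 2 + M₂ * (ux τ x * u τ x + u τ x * ux τ x))))
        from funext fun x => by ring]
      rw [intervalIntegral.integral_add i1 (i2.add (i3.add (i4.add i5))),
        intervalIntegral.integral_add i2 (i3.add (i4.add i5)),
        intervalIntegral.integral_add i3 (i4.add i5),
        intervalIntegral.integral_add i4 i5]
      simp only [intervalIntegral.integral_const_mul]
      rw [hIdef, hKdef, hDqdef]
      ring
    have e1 : (∫ x in (0:ℝ)..1, (ux τ x * ux τ x + u τ x * uxx τ x))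
        = u τ 1 * ux τ 1 - u τ 0 * ux τ 0 :=
      ftc01_s14 le_rfl h01 le_rfl (fun x hx => (hU τ hτ0 x hx).mul (hUx τ hτ0 x hx))
        ((cUx.mul cUx).add (cU.mul cUxx))
    have e2 : (∫ x in (0:ℝ)..1, (ux τ x * u τ x + u τ x * ux τ x))
        = u τ 1 * u τ 1 - u τ 0 * u τ 0 :=
      ftc01_s14 le_rfl h01 le_rfl (fun x hx => (hU τ hτ0 x hx).mul (hU τ hτ0 x hx))
        ((cUx.mul cU).add (cU.mul cUx))
    have P1 : I ≤ 2 * (u τ 1) ^ 2 + K := poincare1 (hU τ hτ0) cUx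
    have P2 : (u τ 0) ^ 2 ≤ 2 * I + K := poincare2 (hU τ hτ0) cUx
    have hx1 : ux τ 1 = -(a₁ / a₂) * u τ 1 := by
      have := hB1 τ hτ0; field_simp; linarith
    have hx0 : ux τ 0 = (d₁ τ - b₁ * u τ 0) / b₂ := by
      have := hB0 τ hτ0; field_simp; linarith
    -- d-term bound
    have hDt : 2 * Dq ≤ (η / 2) * I + (2 / η) * (d₂ τ) ^ 2 := by
      have hmono : Dq ≤ ∫ x in (0:ℝ)..1, ((η / 4) * (u τ x) ^ 2 + (1 / η) * (d₂ τ) ^ 2) := by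
        apply intervalIntegral.integral_mono_ae_restrict h01 (ii (cU.mul cd))
          (ii ((continuousOn_const.mul (cU.pow 2)).add continuousOn_const))
        rw [Filter.EventuallyLE, ae_restrict_iff' measurableSet_Icc]
        filter_upwards [hae01] with x hx hmem
        have hxo := hx hmem
        have habs : |d τ x| ≤ |d₂ τ| := hd τ hτ0 x hxo
        have h1 : u τ x * d τ x ≤ |u τ x| * |d₂ τ| := by
          calc u τ x * d τ x ≤ |u τ x * d τ x| := le_abs_self _
            _ = |u τ x| * |d τ x| := abs_mul _ _
            _ ≤ |u τ x| * |d₂ τ| := mul_le_mul_of_nonneg_left habs (abs_nonneg _)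
        have h2 : |u τ x| * |d₂ τ| ≤ (η / 4) * (u τ x) ^ 2 + (1 / η) * (d₂ τ) ^ 2 := by
          have := young_ineq η |u τ x| |d₂ τ| hη
          rwa [sq_abs, sq_abs] at this
        exact le_trans h1 h2
      have hcomp : (∫ x in (0:ℝ)..1, ((η / 4) * (u τ x) ^ 2 + (1 / η) * (d₂ τ) ^ 2))
          = (η / 4) * I + (1 / η) * (d₂ τ) ^ 2 := by
        rw [intervalIntegral.integral_add (f := fun x => (η / 4) * (u τ x) ^ 2) (g := fun _ => (1 / η) * (d₂ τ) ^ 2) (ii (continuousOn_const.mul (cU.pow 2)))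
          intervalIntegrable_const, intervalIntegral.integral_const_mul,
          intervalIntegral.integral_const]
        rw [hIdef]; norm_num
      rw [hcomp] at hmono
      ring_nf at hmono ⊢
      linarith
    -- scalar inequalities
    have hQ : (-(a₁ / a₂) * μ + M₂ / 2 + 2 * A₂') * (u τ 1) ^ 2 ≤ 0 :=
      mul_nonpos_of_nonpos_of_nonneg (by linarith) (sq_nonneg _)
    have hcross : 0 ≤ (δ / 2) * (u τ 0) ^ 2 + C₄' * (d₁ τ) ^ 2
        + 2 * (μ / b₂) * (d₁ τ) * (u τ 0) := by
      have hid : (δ / 2) * (u τ 0) ^ 2 + C₄' * (d₁ τ) ^ 2 + 2 * (μ / b₂) * (d₁ τ) * (u τ 0)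
          = (δ * (u τ 0) + 2 * (μ / b₂) * (d₁ τ)) ^ 2 / (2 * δ) := by
        rw [hC₄'def]; field_simp; ring
      rw [hid]; positivity
    have hP1m : 0 ≤ 2 * A₂' * (2 * (u τ 1) ^ 2 + K - I) :=
      mul_nonneg (by linarith) (by linarith)
    have hP2m : 0 ≤ 2 * A₁' * (2 * I + K - (u τ 0) ^ 2) :=
      mul_nonneg (by linarith) (by linarith)
    have hPnn : 0 ≤ δ * (u τ 0) ^ 2 := mul_nonneg hδ.le (sq_nonneg _)
    have hbP : (2 * μ * (b₁ / b₂) - M₂) * (u τ 0) ^ 2 = (2 * A₁' - δ) * (u τ 0) ^ 2 := by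
      rw [hδdef]; ring
    have hμK : μ * K = A₁' * K + A₂' * K := by rw [← hsum]; ring
    have hηI : (2 * A₂' - 4 * A₁' - 2 * M₁) * I = η * I := by rw [hηdef]
    have hC₃I : C₃ * I = (η / 2) * I := by rw [hC₃def]
    have hC₅D : C₅' * (d₂ τ) ^ 2 = (2 / η) * (d₂ τ) ^ 2 := by rw [hC₅'def]
    rw [hEq, e1, e2, hx1, hx0]
    have hbsub : u τ 0 * ((d₁ τ - b₁ * u τ 0) / b₂)
        = (1 / b₂) * (u τ 0 * d₁ τ) - (b₁ / b₂) * (u τ 0) ^ 2 := by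
      field_simp
    ring_nf at hDt hQ hcross hP1m hP2m hPnn hbP hμK hηI hC₃I hC₅D ⊢
    linarith [hDt, hQ, hcross, hP1m, hP2m, hPnn, hbP, hμK, hηI, hC₃I, hC₅D]
  -- final assembly
  have hhcont : ContinuousOn (fun s => C₄' * (d₁ s) ^ 2 + C₅' * (d₂ s) ^ 2) (Ici 0) :=
    (continuousOn_const.mul (hd₁c.pow 2)).add (continuousOn_const.mul (hd₂.pow 2))
  have gron := gronwall hC₃ hEcont hEderiv hkey hhcont
  intro t ht
  exact assemble (fun t => ∫ x in (0:ℝ)..1, (u t x) ^ 2) d₁ d₂ C₃ C₄' C₅'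
    hC₃ hC₄' hC₅' hd₁c hd₂ gron t ht
end

section
/- Under Assumption A3b (a₂ ≠ 0; there exist B′₁, B′₂ ≥ 0 with B′₁ + B′₂ = μ such that −(a₁/a₂)μ + M₂/2 ≤ B′₂, (b₁/b₂)μ − M₂/2 < −2B′₁, and M₁ < B′₁ − 2B′₂), there exist constants C₃, C₄, C₅ > 0 such that every classical solution u of the boundary-value problem satisfies, for all t ≥ 0: ‖u(t,·)‖² ≤ ‖u(0,·)‖²·e^{−C₃t} + C₄·∫_0^t d₁(s)² ds + C₅·∫_0^t d₂(s)² ds, and ‖u(t,·)‖² ≤ ‖u(0,·)‖²·e^{−C₃t} + (1 − e^{−C₃t})·(C₄·sup_{0≤s≤t} d₁(s)² + C₅·sup_{0≤s≤t} d₂(s)²). -/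
open Set intervalIntegral Real
open MeasureTheory



lemma ae_ne_one : ∀ᵐ (x:ℝ) ∂volume, x ≠ 1 := by
  rw [MeasureTheory.ae_iff]
  simp only [not_ne_iff, setOf_eq_eq_singleton]
  exact Real.volume_singleton

lemma ae_ne' (a : ℝ) : ∀ᵐ (x:ℝ) ∂volume, x ≠ a := by
  rw [MeasureTheory.ae_iff]
  simp only [not_ne_iff, setOf_eq_eq_singleton]
  exact Real.volume_singleton



/-- FTC on a subinterval `[a,b] ⊆ [0,1]` for a function with a derivative within `Icc 0 1`. -/
lemma ftc_sub (f f' : ℝ → ℝ)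
    (hf : ∀ x ∈ Icc (0:ℝ) 1, HasDerivWithinAt f (f' x) (Icc 0 1) x)
    (hf' : ContinuousOn f' (Icc 0 1))
    (a b : ℝ) (ha : a ∈ Icc (0:ℝ) 1) (hb : b ∈ Icc (0:ℝ) 1) (hab : a ≤ b) :
    ∫ x in a..b, f' x = f b - f a := by
  have hsub : Icc a b ⊆ Icc (0:ℝ) 1 := Icc_subset_Icc ha.1 hb.2
  apply integral_eq_sub_of_hasDeriv_right_of_le hab
  · exact fun x hx => ((hf x (hsub hx)).continuousWithinAt).mono hsub
  · intro x hx
    have hx' : x ∈ Ioo (0:ℝ) 1 := ⟨lt_of_le_of_lt ha.1 hx.1, lt_of_lt_of_le hx.2 hb.2⟩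
    exact ((hf x (Ioo_subset_Icc_self hx')).hasDerivAt
      (Icc_mem_nhds hx'.1 hx'.2)).hasDerivWithinAt
  · exact (hf'.mono (by rw [uIcc_of_le hab]; exact hsub)).intervalIntegrable

/-- Integration by parts on `[0,1]`. -/
lemma ibp01 (f f' g g' : ℝ → ℝ)
    (hf : ∀ x ∈ Icc (0:ℝ) 1, HasDerivWithinAt f (f' x) (Icc 0 1) x)
    (hg : ∀ x ∈ Icc (0:ℝ) 1, HasDerivWithinAt g (g' x) (Icc 0 1) x)
    (hf' : ContinuousOn f' (Icc 0 1)) (hg' : ContinuousOn g' (Icc 0 1)) :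
    ∫ x in (0:ℝ)..1, (f' x * g x + f x * g' x) = f 1 * g 1 - f 0 * g 0 := by
  have hfc : ContinuousOn f (Icc (0:ℝ) 1) := fun x hx => (hf x hx).continuousWithinAt
  have hgc : ContinuousOn g (Icc (0:ℝ) 1) := fun x hx => (hg x hx).continuousWithinAt
  exact ftc_sub (fun x => f x * g x) (fun x => f' x * g x + f x * g' x)
    (fun x hx => (hf x hx).mul (hg x hx))
    ((hf'.mul hgc).add (hfc.mul hg')) 0 1 (by norm_num) (by norm_num) zero_le_one


lemma cs_interval (g : ℝ → ℝ) (hg : ContinuousOn g (Icc 0 1)) :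
    ∀ x ∈ Icc (0:ℝ) 1, (∫ y in (0:ℝ)..x, g y)^2 ≤ x * ∫ y in (0:ℝ)..x, (g y)^2 := by
  intro x hx
  have hgint : ∀ z ∈ Icc (0:ℝ) 1, IntervalIntegrable g volume 0 z := fun z hz =>
    (hg.mono (by rw [uIcc_of_le hz.1]; exact Icc_subset_Icc le_rfl hz.2)).intervalIntegrable
  have hg2int : ∀ z ∈ Icc (0:ℝ) 1, IntervalIntegrable (fun y => (g y)^2) volume 0 z := fun z hz =>
    (((hg.mono (by rw [uIcc_of_le hz.1]; exact Icc_subset_Icc le_rfl hz.2))).pow 2).intervalIntegrable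
  set G : ℝ → ℝ := fun y => ∫ s in (0:ℝ)..y, g s with hG
  set V : ℝ → ℝ := fun y => ∫ s in (0:ℝ)..y, (g s)^2 with hV
  set h : ℝ → ℝ := fun y => y * V y - (G y)^2 with hh
  rcases eq_or_lt_of_le hx.1 with h0 | h0
  · simp [hG, hV, ← h0]
  have hGc : ContinuousOn G (Icc 0 x) := by
    have := intervalIntegral.continuousOn_primitive_interval
      (f := g) (μ := volume) (a := 0) (b := x)
      (by rw [uIcc_of_le hx.1]
          exact ((hg.mono (Icc_subset_Icc le_rfl hx.2))).integrableOn_compact isCompact_Icc)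
    simpa [uIcc_of_le hx.1] using this
  have hVc : ContinuousOn V (Icc 0 x) := by
    have := intervalIntegral.continuousOn_primitive_interval
      (f := fun y => (g y)^2) (μ := volume) (a := 0) (b := x)
      (by rw [uIcc_of_le hx.1]
          exact (((hg.mono (Icc_subset_Icc le_rfl hx.2))).pow 2).integrableOn_compact isCompact_Icc)
    simpa [uIcc_of_le hx.1] using this
  have hhc : ContinuousOn h (Icc 0 x) := (continuousOn_id.mul hVc).sub (hGc.pow 2)
  have hderiv : ∀ y ∈ Ioo (0:ℝ) x, HasDerivAt h (V y + y * (g y)^2 - 2 * g y * G y) y := by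
    intro y hy
    have hy1 : y ∈ Icc (0:ℝ) 1 := ⟨hy.1.le, (hy.2.trans_le hx.2).le⟩
    have hyo : y ∈ Ioo (0:ℝ) 1 := ⟨hy.1, hy.2.trans_le hx.2⟩
    have hmeasG : StronglyMeasurableAtFilter g (nhds y) volume :=
      (hg.mono Ioo_subset_Icc_self).stronglyMeasurableAtFilter isOpen_Ioo y hyo
    have hmeasV : StronglyMeasurableAtFilter (fun s => (g s)^2) (nhds y) volume :=
      ((hg.mono Ioo_subset_Icc_self).pow 2).stronglyMeasurableAtFilter isOpen_Ioo y hyo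
    have hcg : ContinuousAt g y := hg.continuousAt (Icc_mem_nhds hyo.1 hyo.2)
    have hGd : HasDerivAt G (g y) y :=
      integral_hasDerivAt_right (hgint y hy1) hmeasG hcg
    have hVd : HasDerivAt V ((g y)^2) y :=
      integral_hasDerivAt_right (hg2int y hy1) hmeasV (hcg.pow 2)
    have : HasDerivAt (fun z => id z * V z - G z ^ 2) _ y := ((hasDerivAt_id y).mul hVd).sub ((hGd.pow 2))
    convert this using 1
    all_goals (simp [id] <;> ring)
  have hmono : MonotoneOn h (Icc 0 x) := by
    apply monotoneOn_of_deriv_nonneg (convex_Icc 0 x) hhc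
    · intro y hy
      rw [interior_Icc] at hy
      exact (hderiv y hy).differentiableAt.differentiableWithinAt
    · intro y hy
      rw [interior_Icc] at hy
      rw [(hderiv y hy).deriv]
      -- V y + y * g y ^2 - 2 g y * G y = ∫₀^y (g s - g y)^2 ≥ 0
      have hy1 : y ∈ Icc (0:ℝ) 1 := ⟨hy.1.le, (hy.2.trans_le hx.2).le⟩
      have key : V y + y * (g y)^2 - 2 * g y * G y
          = ∫ s in (0:ℝ)..y, ((g s - g y)^2) := by
        have : ∀ s, (g s - g y)^2 = (g s)^2 - 2 * g y * g s + (g y)^2 := fun s => by ring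
        rw [intervalIntegral.integral_congr (fun s _ => this s)]
        rw [intervalIntegral.integral_add ((hg2int y hy1).sub (((hgint y hy1)).const_mul _))
            intervalIntegrable_const,
          intervalIntegral.integral_sub (hg2int y hy1) ((hgint y hy1).const_mul _),
          intervalIntegral.integral_const_mul, intervalIntegral.integral_const]
        simp [hG, hV]
        ring
      rw [key]
      apply intervalIntegral.integral_nonneg hy.1.le
      intro s _; positivity
  have h0x := hmono (left_mem_Icc.2 h0.le) (right_mem_Icc.2 h0.le) h0.le
  have : h 0 = 0 := by simp [hh, hG, hV]
  have hx' : 0 ≤ h x := by rw [← this]; exact h0x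
  simp only [hh, hG, hV] at hx'
  linarith


lemma poincare0 (f f' : ℝ → ℝ)
    (hf : ∀ x ∈ Icc (0:ℝ) 1, HasDerivWithinAt f (f' x) (Icc 0 1) x)
    (hf' : ContinuousOn f' (Icc 0 1)) :
    (∫ x in (0:ℝ)..1, (f x)^2) ≤ 2 * (f 0)^2 + ∫ x in (0:ℝ)..1, (f' x)^2 := by
  have hfc : ContinuousOn f (Icc (0:ℝ) 1) := fun x hx => (hf x hx).continuousWithinAt
  set A := ∫ x in (0:ℝ)..1, (f' x)^2 with hA
  have hsub : ∀ z ∈ Icc (0:ℝ) 1, Icc (0:ℝ) z ⊆ Icc (0:ℝ) 1 :=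
    fun z hz => Icc_subset_Icc le_rfl hz.2
  have h2int : ∀ z ∈ Icc (0:ℝ) 1, IntervalIntegrable (fun y => (f' y)^2) volume 0 z := fun z hz =>
    ((hf'.mono (by rw [uIcc_of_le hz.1]; exact hsub z hz)).pow 2).intervalIntegrable
  have hA0 : ∀ x ∈ Icc (0:ℝ) 1, (∫ y in (0:ℝ)..x, (f' y)^2) ≤ A := by
    intro x hx
    exact intervalIntegral.integral_mono_interval le_rfl hx.1 hx.2
      (Filter.Eventually.of_forall fun y => sq_nonneg _) (h2int 1 (by norm_num))
  have hpt : ∀ x ∈ Icc (0:ℝ) 1, (f x)^2 ≤ 2*(f 0)^2 + 2*x*A := by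
    intro x hx
    have hftc : ∫ y in (0:ℝ)..x, f' y = f x - f 0 :=
      ftc_sub f f' hf hf' 0 x (by norm_num) hx hx.1
    have hcs := cs_interval f' hf' x hx
    have h1 : (f x - f 0)^2 ≤ x * A := by
      rw [← hftc]
      exact hcs.trans (by nlinarith [hx.1, hA0 x hx])
    nlinarith [sq_nonneg (f x - 2 * f 0)]
  have hint1 : IntervalIntegrable (fun x => (f x)^2) volume 0 1 :=
    ((hfc.mono (by rw [uIcc_of_le zero_le_one])).pow 2).intervalIntegrable
  have hint2 : IntervalIntegrable (fun x => 2*(f 0)^2 + 2*x*A) volume 0 1 := by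
    apply Continuous.intervalIntegrable; continuity
  calc (∫ x in (0:ℝ)..1, (f x)^2) ≤ ∫ x in (0:ℝ)..1, (2*(f 0)^2 + 2*x*A) :=
        intervalIntegral.integral_mono_on zero_le_one hint1 hint2
          (fun x hx => hpt x hx)
    _ = 2*(f 0)^2 + A := by
        rw [intervalIntegral.integral_add intervalIntegrable_const
          (by apply Continuous.intervalIntegrable; continuity)]
        simp only [intervalIntegral.integral_const]
        have : ∫ x in (0:ℝ)..1, 2*x*A = A := by
          have : (fun x : ℝ => 2*x*A) = fun x : ℝ => x * (2*A) := by funext x; ring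
          rw [this, intervalIntegral.integral_mul_const, integral_id]
          ring
        rw [this]; simp

lemma trace1 (f f' : ℝ → ℝ)
    (hf : ∀ x ∈ Icc (0:ℝ) 1, HasDerivWithinAt f (f' x) (Icc 0 1) x)
    (hf' : ContinuousOn f' (Icc 0 1)) :
    (f 1)^2 ≤ 2 * (∫ x in (0:ℝ)..1, (f x)^2) + ∫ x in (0:ℝ)..1, (f' x)^2 := by
  have hfc : ContinuousOn f (Icc (0:ℝ) 1) := fun x hx => (hf x hx).continuousWithinAt
  set C := ∫ x in (0:ℝ)..1, ((f x)^2 + (f' x)^2) with hC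
  have hintf2 : IntervalIntegrable (fun x => (f x)^2) volume 0 1 :=
    ((hfc.mono (by rw [uIcc_of_le zero_le_one])).pow 2).intervalIntegrable
  have hintf'2 : IntervalIntegrable (fun x => (f' x)^2) volume 0 1 :=
    ((hf'.mono (by rw [uIcc_of_le zero_le_one])).pow 2).intervalIntegrable
  have hsum : ContinuousOn (fun x => (f x)^2 + (f' x)^2) (Icc (0:ℝ) 1) :=
    (hfc.pow 2).add (hf'.pow 2)
  have hpt : ∀ x ∈ Icc (0:ℝ) 1, (f 1)^2 ≤ (f x)^2 + C := by
    intro x hx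
    have hftc : ∫ y in x..1, (2 * f y * f' y) = (f 1)^2 - (f x)^2 := by
      have := ftc_sub (fun y => (f y)^2) (fun y => 2 * f y * f' y)
        (fun y hy => by
          have : HasDerivWithinAt (fun y => (f y)^2) _ (Icc 0 1) y := (hf y hy).pow 2
          convert this using 1
          push_cast; ring)
        (by apply ContinuousOn.mul (ContinuousOn.mul continuousOn_const hfc) hf')
        x 1 hx (by norm_num) hx.2
      exact this
    have hsub : Icc x 1 ⊆ Icc (0:ℝ) 1 := Icc_subset_Icc hx.1 le_rfl
    have h1 : (∫ y in x..1, (2 * f y * f' y)) ≤ ∫ y in x..1, ((f y)^2 + (f' y)^2) := by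
      apply intervalIntegral.integral_mono_on hx.2
      · exact (ContinuousOn.mono (by apply ContinuousOn.mul (ContinuousOn.mul continuousOn_const hfc) hf')
          (by rw [uIcc_of_le hx.2]; exact hsub)).intervalIntegrable
      · exact (hsum.mono (by rw [uIcc_of_le hx.2]; exact hsub)).intervalIntegrable
      · intro y _; nlinarith [sq_nonneg (f y - f' y)]
    have h2 : (∫ y in x..1, ((f y)^2 + (f' y)^2)) ≤ C :=
      intervalIntegral.integral_mono_interval hx.1 hx.2 le_rfl
        (Filter.Eventually.of_forall fun y => by positivity)
        ((hsum.mono (by rw [uIcc_of_le zero_le_one])).intervalIntegrable)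
    linarith [hftc ▸ h1.trans h2]
  have : (f 1)^2 = ∫ x in (0:ℝ)..1, (f 1)^2 := by simp
  rw [this]
  calc (∫ x in (0:ℝ)..1, (f 1)^2) ≤ ∫ x in (0:ℝ)..1, ((f x)^2 + C) :=
      intervalIntegral.integral_mono_on zero_le_one intervalIntegrable_const
        (hintf2.add intervalIntegrable_const) hpt
    _ = (∫ x in (0:ℝ)..1, (f x)^2) + C := by
        rw [intervalIntegral.integral_add hintf2 intervalIntegrable_const]; simp
    _ ≤ 2 * (∫ x in (0:ℝ)..1, (f x)^2) + ∫ x in (0:ℝ)..1, (f' x)^2 := by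
        have : C = (∫ x in (0:ℝ)..1, (f x)^2) + ∫ x in (0:ℝ)..1, (f' x)^2 :=
          intervalIntegral.integral_add hintf2 hintf'2
        linarith

lemma young_bnd0 (X B₁ σ c K u0 d1 : ℝ) (hσ : 0 < σ) (hX : X ≤ -(2*B₁) - σ)
    (hKc : K*(2*σ) = c^2) :
    2*X*u0^2 - 2*c*u0*d1 ≤ -(4*B₁*u0^2) + K*d1^2 := by
  have h1 : (-(2*σ*u0^2) - 2*c*u0*d1) * (2*σ) ≤ (K*d1^2) * (2*σ) := by
    nlinarith only [sq_nonneg (2*σ*u0 + c*d1), hKc]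
  have h1' : -(2*σ*u0^2) - 2*c*u0*d1 ≤ K*d1^2 :=
    le_of_mul_le_mul_right h1 (by positivity)
  have h2 := mul_le_mul_of_nonneg_right hX (sq_nonneg u0)
  nlinarith only [h1', h2]


set_option maxHeartbeats 400000 in
lemma core_ineq (μ a₁ a₂ b₁ b₂ M₁ M₂ B₁' B₂' σ θ K₁ : ℝ)
    (U Ux Uxx D ut' : ℝ → ℝ) (d1 d2 : ℝ)
    (hμ : 0 < μ) (hb₂ : b₂ ≠ 0) (ha₂ : a₂ ≠ 0)
    (hB1 : 0 ≤ B₁') (hB2 : 0 ≤ B₂') (hsum : B₁' + B₂' = μ)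
    (hc1 : -(a₁ / a₂) * μ + M₂ / 2 ≤ B₂')
    (hσ : 0 < σ) (hσdef : b₁ / b₂ * μ - M₂ / 2 ≤ -(2 * B₁') - σ)
    (hθ : 0 < θ) (hθdef : θ = B₁' - 2 * B₂' - M₁)
    (hK₁ : K₁ = μ^2 / (b₂^2 * (2 * σ)))
    (hU : ∀ x ∈ Icc (0:ℝ) 1, HasDerivWithinAt U (Ux x) (Icc 0 1) x)
    (hUx : ∀ x ∈ Icc (0:ℝ) 1, HasDerivWithinAt Ux (Uxx x) (Icc 0 1) x)
    (hUxxc : ContinuousOn Uxx (Icc 0 1))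
    (hDc : ContinuousOn D (Icc 0 1))
    (hDb : ∀ x ∈ Ioo (0:ℝ) 1, |D x| ≤ |d2|)
    (hPDE : ∀ x ∈ Ioo (0:ℝ) 1, ut' x = μ * Uxx x + D x + M₁ * U x + M₂ * Ux x)
    (hBC1 : a₁ * U 1 + a₂ * Ux 1 = 0)
    (hBC0 : b₁ * U 0 + b₂ * Ux 0 = d1) :
    (∫ x in (0:ℝ)..1, 2 * U x * ut' x) ≤
      -θ * (∫ x in (0:ℝ)..1, (U x)^2) + K₁ * d1^2 + (1/θ) * d2^2 := by
  have hUc : ContinuousOn U (Icc (0:ℝ) 1) := fun x hx => (hU x hx).continuousWithinAt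
  have hUxc : ContinuousOn Ux (Icc (0:ℝ) 1) := fun x hx => (hUx x hx).continuousWithinAt
  set E := ∫ x in (0:ℝ)..1, (U x)^2 with hE
  set A := ∫ x in (0:ℝ)..1, (Ux x)^2 with hA
  have huIcc : uIcc (0:ℝ) 1 = Icc 0 1 := uIcc_of_le zero_le_one
  -- integrabilities
  have i1 : IntervalIntegrable (fun x => 2*μ*(Ux x * Ux x + U x * Uxx x)) volume 0 1 := by
    apply ContinuousOn.intervalIntegrable; rw [huIcc]
    exact continuousOn_const.mul ((hUxc.mul hUxc).add (hUc.mul hUxxc))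
  have i2 : IntervalIntegrable (fun x => 2 * U x * D x) volume 0 1 := by
    apply ContinuousOn.intervalIntegrable; rw [huIcc]
    exact (continuousOn_const.mul hUc).mul hDc
  have i3 : IntervalIntegrable (fun x => 2*M₁*(U x^2)) volume 0 1 := by
    apply ContinuousOn.intervalIntegrable; rw [huIcc]
    exact continuousOn_const.mul (hUc.pow 2)
  have i4 : IntervalIntegrable (fun x => M₂*(Ux x * U x + U x * Ux x)) volume 0 1 := by
    apply ContinuousOn.intervalIntegrable; rw [huIcc]
    exact continuousOn_const.mul ((hUxc.mul hUc).add (hUc.mul hUxc))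
  have i5 : IntervalIntegrable (fun x => (-(2*μ))*(Ux x^2)) volume 0 1 := by
    apply ContinuousOn.intervalIntegrable; rw [huIcc]
    exact continuousOn_const.mul (hUxc.pow 2)
  have iU2 : IntervalIntegrable (fun x => (U x)^2) volume 0 1 := by
    apply ContinuousOn.intervalIntegrable; rw [huIcc]; exact hUc.pow 2
  have iUx2 : IntervalIntegrable (fun x => (Ux x)^2) volume 0 1 := by
    apply ContinuousOn.intervalIntegrable; rw [huIcc]; exact hUxc.pow 2
  -- step 1 : rewrite the integrand a.e.
  have step1 : (∫ x in (0:ℝ)..1, 2 * U x * ut' x)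
      = ∫ x in (0:ℝ)..1, (2*μ*(Ux x * Ux x + U x * Uxx x) + 2 * U x * D x
          + 2*M₁*(U x^2) + M₂*(Ux x * U x + U x * Ux x) + (-(2*μ))*(Ux x^2)) := by
    apply intervalIntegral.integral_congr_ae
    filter_upwards [ae_ne' 1] with x hx1 hmem
    rw [Set.uIoc_of_le zero_le_one] at hmem
    have hxo : x ∈ Ioo (0:ℝ) 1 := ⟨hmem.1, lt_of_le_of_ne hmem.2 hx1⟩
    rw [hPDE x hxo]; ring
  -- step 2 : linearity
  have hIBP1 : (∫ x in (0:ℝ)..1, (Ux x * Ux x + U x * Uxx x))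
      = U 1 * Ux 1 - U 0 * Ux 0 := ibp01 U Ux Ux Uxx hU hUx hUxc hUxxc
  have hIBP2 : (∫ x in (0:ℝ)..1, (Ux x * U x + U x * Ux x))
      = U 1 * U 1 - U 0 * U 0 := ibp01 U Ux U Ux hU hU hUxc hUxc
  have step2 : (∫ x in (0:ℝ)..1, 2 * U x * ut' x)
      = 2*μ*(U 1 * Ux 1 - U 0 * Ux 0) + (∫ x in (0:ℝ)..1, 2 * U x * D x)
        + 2*M₁*E + M₂*(U 1 * U 1 - U 0 * U 0) - 2*μ*A := by
    rw [step1,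
      intervalIntegral.integral_add (((i1.add i2).add i3).add i4) i5,
      intervalIntegral.integral_add ((i1.add i2).add i3) i4,
      intervalIntegral.integral_add (i1.add i2) i3,
      intervalIntegral.integral_add i1 i2]
    have e1 : (∫ x in (0:ℝ)..1, 2*μ*(Ux x * Ux x + U x * Uxx x))
        = 2*μ*(U 1 * Ux 1 - U 0 * Ux 0) := by
      rw [intervalIntegral.integral_const_mul, hIBP1]
    have e3 : (∫ x in (0:ℝ)..1, 2*M₁*(U x^2)) = 2*M₁*E := by
      rw [intervalIntegral.integral_const_mul]
    have e4 : (∫ x in (0:ℝ)..1, M₂*(Ux x * U x + U x * Ux x))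
        = M₂*(U 1 * U 1 - U 0 * U 0) := by
      rw [intervalIntegral.integral_const_mul, hIBP2]
    have e5 : (∫ x in (0:ℝ)..1, (-(2*μ))*(Ux x^2)) = -(2*μ)*A := by
      rw [intervalIntegral.integral_const_mul]
    rw [e1, e3, e4, e5]; ring
  -- J bound
  have hJ : (∫ x in (0:ℝ)..1, 2 * U x * D x) ≤ θ*E + (1/θ)*d2^2 := by
    have irhs : IntervalIntegrable (fun x => θ*(U x)^2 + (1/θ)*d2^2) volume 0 1 :=
      (iU2.const_mul θ).add intervalIntegrable_const
    have hmono : (∫ x in (0:ℝ)..1, 2 * U x * D x)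
        ≤ ∫ x in (0:ℝ)..1, (θ*(U x)^2 + (1/θ)*d2^2) := by
      apply intervalIntegral.integral_mono_ae_restrict zero_le_one i2 irhs
      rw [Filter.EventuallyLE, MeasureTheory.ae_restrict_iff' measurableSet_Icc]
      filter_upwards [ae_ne' 0, ae_ne' 1] with x hx0 hx1 hxI
      have hxo : x ∈ Ioo (0:ℝ) 1 :=
        ⟨lt_of_le_of_ne hxI.1 (Ne.symm hx0), lt_of_le_of_ne hxI.2 hx1⟩
      have hD2 : (D x)^2 ≤ d2^2 := by
        have := hDb x hxo
        nlinarith [abs_nonneg (D x), sq_abs (D x), sq_abs d2]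
      have key : (1/θ) * ((θ*U x - D x)^2) = θ*(U x)^2 - 2*U x*D x + (1/θ)*(D x)^2 := by
        field_simp; ring
      have hk0 : 0 ≤ (1/θ) * ((θ*U x - D x)^2) := by positivity
      have hmul : (1/θ)*(D x)^2 ≤ (1/θ)*d2^2 :=
        mul_le_mul_of_nonneg_left hD2 (by positivity)
      linarith only [key, hk0, hmul]
    have heq : (∫ x in (0:ℝ)..1, (θ*(U x)^2 + (1/θ)*d2^2)) = θ*E + (1/θ)*d2^2 := by
      rw [intervalIntegral.integral_add (iU2.const_mul θ) intervalIntegrable_const,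
        intervalIntegral.integral_const_mul, intervalIntegral.integral_const]
      simp [hE]
    linarith only [hmono, heq.le, heq.ge]
  -- Poincaré inequalities
  have P1 : E ≤ 2*(U 0)^2 + A := by
    have := poincare0 U Ux hU hUxc; linarith only [this]
  have P2 : (U 1)^2 ≤ 2*E + A := by
    have := trace1 U Ux hU hUxc; linarith only [this]
  -- boundary values
  have hUx1 : Ux 1 = -(a₁/a₂) * U 1 := by
    field_simp
    linarith only [hBC1]
  have hUx0 : Ux 0 = (d1 - b₁ * U 0)/b₂ := by
    field_simp
    linarith only [hBC0]
  -- boundary bounds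
  set c := μ/b₂ with hc
  have hb1 : 2*μ*(U 1 * Ux 1) + M₂*(U 1 * U 1) ≤ 2*B₂'*(U 1)^2 := by
    rw [hUx1]
    have h : 2*μ*(U 1 * (-(a₁/a₂) * U 1)) + M₂*(U 1 * U 1)
        = 2*(-(a₁/a₂)*μ + M₂/2) * (U 1)^2 := by ring
    rw [h]
    nlinarith only [sq_nonneg (U 1), hc1]
  have hb0 : -(2*μ*(U 0 * Ux 0)) - M₂*(U 0 * U 0) ≤ -(4*B₁'*(U 0)^2) + K₁*d1^2 := by
    have hμUx0 : μ * Ux 0 = c * d1 - c * b₁ * U 0 := by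
      rw [hUx0, hc]; field_simp
    have hcb : b₁/b₂*μ = c*b₁ := by rw [hc]; field_simp
    have hKc : K₁ * (2*σ) = c^2 := by
      rw [hK₁, hc]; field_simp
    have hL : -(2*μ*(U 0 * Ux 0)) - M₂*(U 0 * U 0)
        = 2*(b₁/b₂*μ - M₂/2)*(U 0)^2 - 2*c*(U 0)*d1 := by
      have : 2*μ*(U 0 * Ux 0) = 2*(U 0)*(μ * Ux 0) := by ring
      rw [this, hμUx0, hcb]; ring
    rw [hL]
    exact young_bnd0 _ _ _ _ _ _ _ hσ hσdef hKc
  -- nonnegativity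
  have hA0 : 0 ≤ A := intervalIntegral.integral_nonneg zero_le_one (fun x _ => sq_nonneg _)
  -- assemble
  have m1 : 2*B₂'*(U 1)^2 ≤ 4*B₂'*E + 2*B₂'*A := by nlinarith only [P2, hB2]
  have m2 : 2*B₁'*E ≤ 4*B₁'*(U 0)^2 + 2*B₁'*A := by nlinarith only [P1, hB1]
  have hsplit : 2*μ*A = 2*B₁'*A + 2*B₂'*A := by rw [← hsum]; ring
  have hcoef : 4*B₂'*E - 2*B₁'*E + 2*M₁*E = -2*(θ*E) := by rw [hθdef]; ring
  rw [step2]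
  have hnegt : -θ * E = -(θ*E) := by ring
  rw [hnegt]
  linarith only [hb1, hb0, hJ, m1, m2, hsplit, hcoef]


lemma gron_const (K L S T θ e : ℝ) (hθ : 0 < θ) (hK : 0 ≤ K) (hL : 0 ≤ L)
    (hS : 0 ≤ S) (hT : 0 ≤ T) (he : 0 ≤ e) :
    (K*S + L*T) * (e/θ) ≤ e * ((K + K/θ)*S + (L + L/θ)*T) := by
  have hid : e * ((K + K/θ)*S + (L + L/θ)*T) - (K*S + L*T) * (e/θ) = e*K*S + e*L*T := by
    ring
  linarith only [hid, mul_nonneg (mul_nonneg he hK) hS, mul_nonneg (mul_nonneg he hL) hT]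

theorem stmt_15
    (μ a₁ a₂ b₁ b₂ M₁ M₂ : ℝ) (d : ℝ → ℝ → ℝ) (d₁ d₂ : ℝ → ℝ)
    (hμ : 0 < μ) (hb₂ : b₂ ≠ 0)
    (hd₁ : ContDiffOn ℝ 2 d₁ (Ici 0)) (hd₂ : ContinuousOn d₂ (Ici 0))
    (hdcont : ContinuousOn (fun p : ℝ × ℝ => d p.1 p.2) (Ici 0 ×ˢ Icc 0 1))
    (hd : ∀ t ≥ (0:ℝ), ∀ x ∈ Ioo (0:ℝ) 1, |d t x| ≤ |d₂ t|)
    -- Assumption A3b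
    (ha₂ : a₂ ≠ 0)
    (hB' : ∃ B₁' B₂' : ℝ, 0 ≤ B₁' ∧ 0 ≤ B₂' ∧ B₁' + B₂' = μ ∧
      -(a₁ / a₂) * μ + M₂ / 2 ≤ B₂' ∧ b₁ / b₂ * μ - M₂ / 2 < -(2 * B₁') ∧
      M₁ < B₁' - 2 * B₂') :
    ∃ C₃ > (0:ℝ), ∃ C₄ > (0:ℝ), ∃ C₅ > (0:ℝ),
      ∀ u ux uxx ut : ℝ → ℝ → ℝ,
        (∀ t ≥ (0:ℝ), ∀ x ∈ Icc (0:ℝ) 1, HasDerivWithinAt (u t) (ux t x) (Icc 0 1) x) →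
        (∀ t ≥ (0:ℝ), ∀ x ∈ Icc (0:ℝ) 1, HasDerivWithinAt (ux t) (uxx t x) (Icc 0 1) x) →
        (∀ t ≥ (0:ℝ), ContinuousOn (uxx t) (Icc (0:ℝ) 1)) →
        (∀ t > (0:ℝ), ∀ x ∈ Icc (0:ℝ) 1, HasDerivAt (fun s => u s x) (ut t x) t) →
        (∀ t > (0:ℝ), ∀ x ∈ Ioo (0:ℝ) 1,
          ut t x = μ * uxx t x + d t x + M₁ * u t x + M₂ * ux t x) →
        (∀ t ≥ (0:ℝ), a₁ * u t 1 + a₂ * ux t 1 = 0) →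
        (∀ t ≥ (0:ℝ), b₁ * u t 0 + b₂ * ux t 0 = d₁ t) →
        ContinuousOn (fun t => ∫ x in (0:ℝ)..1, (u t x) ^ 2) (Ici 0) →
        (∀ t > (0:ℝ), HasDerivAt (fun s => ∫ x in (0:ℝ)..1, (u s x) ^ 2)
          (∫ x in (0:ℝ)..1, 2 * u t x * ut t x) t) →
        ∀ t ≥ (0:ℝ),
          ((∫ x in (0:ℝ)..1, (u t x) ^ 2) ≤
            (∫ x in (0:ℝ)..1, (u 0 x) ^ 2) * Real.exp (-C₃ * t)
              + C₄ * (∫ s in (0:ℝ)..t, (d₁ s) ^ 2)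
              + C₅ * (∫ s in (0:ℝ)..t, (d₂ s) ^ 2)) ∧
          ((∫ x in (0:ℝ)..1, (u t x) ^ 2) ≤
            (∫ x in (0:ℝ)..1, (u 0 x) ^ 2) * Real.exp (-C₃ * t)
              + (1 - Real.exp (-C₃ * t)) *
                (C₄ * sSup ((fun s => (d₁ s) ^ 2) '' Icc 0 t)
                  + C₅ * sSup ((fun s => (d₂ s) ^ 2) '' Icc 0 t))) := by
  obtain ⟨B₁', B₂', hB1, hB2, hsum, hc1, hstrict, hM⟩ := hB'
  obtain ⟨σ, hσdef0⟩ : ∃ σ : ℝ, σ = -(2 * B₁') - (b₁ / b₂ * μ - M₂ / 2) := ⟨_, rfl⟩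
  have hσ : 0 < σ := by rw [hσdef0]; linarith
  have hσle : b₁ / b₂ * μ - M₂ / 2 ≤ -(2 * B₁') - σ := by rw [hσdef0]; linarith
  obtain ⟨θ, hθdef0⟩ : ∃ θ : ℝ, θ = B₁' - 2 * B₂' - M₁ := ⟨_, rfl⟩
  have hθ : 0 < θ := by rw [hθdef0]; linarith
  have hb2sq : 0 < b₂^2 := lt_of_le_of_ne (sq_nonneg b₂) (Ne.symm (pow_ne_zero 2 hb₂))
  obtain ⟨K₁, hK₁def⟩ : ∃ K : ℝ, K = μ^2 / (b₂^2 * (2 * σ)) := ⟨_, rfl⟩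
  have hK₁ : 0 < K₁ := by
    rw [hK₁def]
    exact div_pos (pow_pos hμ 2) (mul_pos hb2sq (by linarith))
  obtain ⟨K₂, hK₂def⟩ : ∃ K : ℝ, K = 1/θ := ⟨_, rfl⟩
  have hK₂ : 0 < K₂ := by rw [hK₂def]; positivity
  have hK₁θ : 0 < K₁ + K₁/θ := by have := div_pos hK₁ hθ; linarith
  have hK₂θ : 0 < K₂ + K₂/θ := by have := div_pos hK₂ hθ; linarith
  refine ⟨θ, hθ, K₁ + K₁/θ, hK₁θ, K₂ + K₂/θ, hK₂θ, ?_⟩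
  intro u ux uxx ut hu hux huxxc hut hPDE hBC1 hBC0 hEc hE'
  intro t ht
  set E : ℝ → ℝ := fun s => ∫ x in (0:ℝ)..1, (u s x)^2 with hEdef
  have hd₁c : ContinuousOn d₁ (Ici 0) := hd₁.continuousOn
  -- the core differential inequality
  have core : ∀ s, 0 < s → (∫ x in (0:ℝ)..1, 2 * u s x * ut s x)
      ≤ -θ * E s + K₁ * (d₁ s)^2 + (1/θ) * (d₂ s)^2 := by
    intro s hs
    have hDc : ContinuousOn (fun x => d s x) (Icc (0:ℝ) 1) := by
      have hmap : MapsTo (fun x : ℝ => ((s, x) : ℝ × ℝ)) (Icc (0:ℝ) 1) (Ici 0 ×ˢ Icc 0 1) :=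
        fun x hx => ⟨hs.le, hx⟩
      exact hdcont.comp ((continuous_const.prodMk continuous_id).continuousOn) hmap
    exact core_ineq μ a₁ a₂ b₁ b₂ M₁ M₂ B₁' B₂' σ θ K₁
      (u s) (ux s) (uxx s) (d s) (ut s) (d₁ s) (d₂ s)
      hμ hb₂ ha₂ hB1 hB2 hsum hc1 hσ hσle hθ hθdef0 hK₁def
      (hu s hs.le) (hux s hs.le) (huxxc s hs.le) hDc (hd s hs.le)
      (hPDE s hs) (hBC1 s hs.le) (hBC0 s hs.le)
  rcases eq_or_lt_of_le ht with heq | ht0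
  · -- t = 0
    subst heq
    constructor <;> simp
  -- t > 0
  set g : ℝ → ℝ := fun s => K₁ * (d₁ s)^2 + (1/θ) * (d₂ s)^2 with hgdef
  have hgc : ContinuousOn g (Ici 0) :=
    (continuousOn_const.mul (hd₁c.pow 2)).add (continuousOn_const.mul (hd₂.pow 2))
  have hgnn : ∀ s, 0 ≤ g s := fun s => by
    simp only [hgdef]
    exact add_nonneg (mul_nonneg hK₁.le (sq_nonneg _))
      (mul_nonneg (one_div_nonneg.2 hθ.le) (sq_nonneg _))
  have hegc : ContinuousOn (fun r => Real.exp (θ*r) * g r) (Ici 0) :=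
    ((continuous_exp.comp (continuous_const.mul continuous_id)).continuousOn).mul hgc
  have hIccIci : Icc (0:ℝ) t ⊆ Ici 0 := fun r hr => hr.1
  set Φ : ℝ → ℝ := fun s => ∫ r in (0:ℝ)..s, Real.exp (θ*r) * g r with hΦdef
  have hΦc : ContinuousOn Φ (Icc 0 t) := by
    have h := intervalIntegral.continuousOn_primitive_interval
      (f := fun r => Real.exp (θ*r) * g r) (μ := volume) (a := 0) (b := t)
      (by rw [uIcc_of_le ht]
          exact (hegc.mono hIccIci).integrableOn_compact isCompact_Icc)
    simpa [uIcc_of_le ht, hΦdef] using h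
  set F : ℝ → ℝ := fun s => E s * Real.exp (θ*s) - Φ s with hFdef
  have hFc : ContinuousOn F (Icc 0 t) :=
    ((hEc.mono hIccIci).mul
      ((continuous_exp.comp (continuous_const.mul continuous_id)).continuousOn)).sub hΦc
  have hFd : ∀ s ∈ Ioo (0:ℝ) t, HasDerivAt F
      ((∫ x in (0:ℝ)..1, 2 * u s x * ut s x) * Real.exp (θ*s)
        + E s * (Real.exp (θ*s) * θ) - Real.exp (θ*s) * g s) s := by
    intro s hs
    have h1 : HasDerivAt (fun r => Real.exp (θ*r)) (Real.exp (θ*s) * θ) s := by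
      simpa using (HasDerivAt.exp ((hasDerivAt_id s).const_mul θ))
    have h2 := (hE' s hs.1).mul h1
    have hIoi : Ioi (0:ℝ) ⊆ Ici 0 := Ioi_subset_Ici le_rfl
    have h3 : HasDerivAt Φ (Real.exp (θ*s) * g s) s := by
      apply intervalIntegral.integral_hasDerivAt_right
      · apply ContinuousOn.intervalIntegrable
        rw [uIcc_of_le hs.1.le]
        exact hegc.mono (fun r hr => hr.1)
      · exact (hegc.mono hIoi).stronglyMeasurableAtFilter isOpen_Ioi s hs.1
      · exact (hegc.mono hIoi).continuousAt (Ioi_mem_nhds hs.1)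
    exact h2.sub h3
  have hant : AntitoneOn F (Icc 0 t) := by
    apply antitoneOn_of_deriv_nonpos (convex_Icc 0 t) hFc
    · intro s hs; rw [interior_Icc] at hs
      exact (hFd s hs).differentiableAt.differentiableWithinAt
    · intro s hs; rw [interior_Icc] at hs
      rw [(hFd s hs).deriv]
      have hc := core s hs.1
      have he : (0:ℝ) < Real.exp (θ*s) := Real.exp_pos _
      have hmul := mul_le_mul_of_nonneg_right hc he.le
      simp only [hgdef]
      nlinarith only [hmul, he.le]
  have hF0 : F 0 = E 0 := by simp [hFdef, hΦdef]
  have hkey : F t ≤ E 0 := by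
    rw [← hF0]
    exact hant (left_mem_Icc.2 ht) (right_mem_Icc.2 ht) ht
  have hept : (0:ℝ) < Real.exp (θ*t) := Real.exp_pos _
  have hEt : E t ≤ (E 0 + Φ t) * Real.exp (-(θ*t)) := by
    rw [Real.exp_neg, ← div_eq_mul_inv, le_div_iff₀ hept]
    simp only [hFdef] at hkey
    linarith only [hkey]
  -- integrabilities on [0,t]
  have i₁t : IntervalIntegrable (fun s => (d₁ s)^2) volume 0 t := by
    apply ContinuousOn.intervalIntegrable
    rw [uIcc_of_le ht]; exact (hd₁c.mono hIccIci).pow 2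
  have i₂t : IntervalIntegrable (fun s => (d₂ s)^2) volume 0 t := by
    apply ContinuousOn.intervalIntegrable
    rw [uIcc_of_le ht]; exact (hd₂.mono hIccIci).pow 2
  have igt : IntervalIntegrable g volume 0 t := by
    apply ContinuousOn.intervalIntegrable
    rw [uIcc_of_le ht]; exact hgc.mono hIccIci
  have iegt : IntervalIntegrable (fun r => Real.exp (θ*r) * g r) volume 0 t := by
    apply ContinuousOn.intervalIntegrable
    rw [uIcc_of_le ht]; exact hegc.mono hIccIci
  have hd₁nn : 0 ≤ ∫ s in (0:ℝ)..t, (d₁ s)^2 :=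
    intervalIntegral.integral_nonneg ht (fun s _ => sq_nonneg _)
  have hd₂nn : 0 ≤ ∫ s in (0:ℝ)..t, (d₂ s)^2 :=
    intervalIntegral.integral_nonneg ht (fun s _ => sq_nonneg _)
  have hsplitg : (∫ s in (0:ℝ)..t, g s)
      = K₁ * (∫ s in (0:ℝ)..t, (d₁ s)^2) + (1/θ) * ∫ s in (0:ℝ)..t, (d₂ s)^2 := by
    simp only [hgdef]
    rw [intervalIntegral.integral_add (i₁t.const_mul K₁) (i₂t.const_mul (1/θ)),
      intervalIntegral.integral_const_mul, intervalIntegral.integral_const_mul]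
  constructor
  · -- first bound
    have hΦle1 : Φ t ≤ Real.exp (θ*t) * ∫ s in (0:ℝ)..t, g s := by
      have h := intervalIntegral.integral_mono_on ht iegt (igt.const_mul _)
        (fun r hr => by
          have h1 : Real.exp (θ*r) ≤ Real.exp (θ*t) :=
            Real.exp_le_exp.2 (mul_le_mul_of_nonneg_left hr.2 hθ.le)
          exact mul_le_mul_of_nonneg_right h1 (hgnn r))
      rw [intervalIntegral.integral_const_mul] at h
      exact h
    have hπ : Φ t * Real.exp (-(θ*t)) ≤ ∫ s in (0:ℝ)..t, g s := by
      have h := mul_le_mul_of_nonneg_right hΦle1 (Real.exp_pos (-(θ*t))).le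
      have he : Real.exp (θ*t) * (∫ s in (0:ℝ)..t, g s) * Real.exp (-(θ*t))
          = ∫ s in (0:ℝ)..t, g s := by
        rw [Real.exp_neg]; field_simp
      linarith only [h, he.le, he.ge]
    have hKd : (∫ s in (0:ℝ)..t, g s)
        ≤ (K₁ + K₁/θ) * (∫ s in (0:ℝ)..t, (d₁ s)^2)
          + (K₂ + K₂/θ) * ∫ s in (0:ℝ)..t, (d₂ s)^2 := by
      have p1 : 0 ≤ (K₁/θ) * ∫ s in (0:ℝ)..t, (d₁ s)^2 :=
        mul_nonneg (div_nonneg hK₁.le hθ.le) hd₁nn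
      have p2 : 0 ≤ (K₂/θ) * ∫ s in (0:ℝ)..t, (d₂ s)^2 :=
        mul_nonneg (div_nonneg hK₂.le hθ.le) hd₂nn
      have hK₂e : (1/θ) * (∫ s in (0:ℝ)..t, (d₂ s)^2)
          = K₂ * ∫ s in (0:ℝ)..t, (d₂ s)^2 := by rw [hK₂def]
      nlinarith only [hsplitg, p1, p2, hK₂e]
    rw [neg_mul]
    calc E t ≤ (E 0 + Φ t) * Real.exp (-(θ*t)) := hEt
      _ = E 0 * Real.exp (-(θ*t)) + Φ t * Real.exp (-(θ*t)) := by ring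
      _ ≤ E 0 * Real.exp (-(θ*t)) + ((K₁ + K₁/θ) * (∫ s in (0:ℝ)..t, (d₁ s)^2)
          + (K₂ + K₂/θ) * ∫ s in (0:ℝ)..t, (d₂ s)^2) := by
            linarith only [hπ, hKd]
      _ = E 0 * Real.exp (-(θ*t)) + (K₁ + K₁/θ) * (∫ s in (0:ℝ)..t, (d₁ s)^2)
          + (K₂ + K₂/θ) * ∫ s in (0:ℝ)..t, (d₂ s)^2 := by ring
  · -- second bound
    set S₁ := sSup ((fun s => (d₁ s)^2) '' Icc 0 t) with hS₁
    set S₂ := sSup ((fun s => (d₂ s)^2) '' Icc 0 t) with hS₂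
    have hbdd₁ : BddAbove ((fun s => (d₁ s)^2) '' Icc 0 t) :=
      (isCompact_Icc.image_of_continuousOn ((hd₁c.mono hIccIci).pow 2)).bddAbove
    have hbdd₂ : BddAbove ((fun s => (d₂ s)^2) '' Icc 0 t) :=
      (isCompact_Icc.image_of_continuousOn ((hd₂.mono hIccIci).pow 2)).bddAbove
    have hle₁ : ∀ s ∈ Icc (0:ℝ) t, (d₁ s)^2 ≤ S₁ :=
      fun s hs => le_csSup hbdd₁ ⟨s, hs, rfl⟩
    have hle₂ : ∀ s ∈ Icc (0:ℝ) t, (d₂ s)^2 ≤ S₂ :=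
      fun s hs => le_csSup hbdd₂ ⟨s, hs, rfl⟩
    have hS₁nn : 0 ≤ S₁ := (sq_nonneg (d₁ 0)).trans (hle₁ 0 (left_mem_Icc.2 ht))
    have hS₂nn : 0 ≤ S₂ := (sq_nonneg (d₂ 0)).trans (hle₂ 0 (left_mem_Icc.2 ht))
    have hexp_int : (∫ r in (0:ℝ)..t, Real.exp (θ*r)) = (Real.exp (θ*t) - 1)/θ := by
      have h := intervalIntegral.integral_eq_sub_of_hasDerivAt
        (f := fun r => Real.exp (θ*r)/θ) (f' := fun r => Real.exp (θ*r))
        (a := 0) (b := t)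
        (fun x _ => by
          have h0 := (HasDerivAt.exp ((hasDerivAt_id x).const_mul θ)).div_const θ
          simpa [mul_comm, mul_div_assoc, mul_div_cancel_left₀ _ hθ.ne'] using h0)
        (by apply ContinuousOn.intervalIntegrable
            exact ((continuous_exp.comp (continuous_const.mul continuous_id)).continuousOn))
      rw [h]; simp; ring
    have hΦle2 : Φ t ≤ (K₁*S₁ + (1/θ)*S₂) * ((Real.exp (θ*t) - 1)/θ) := by
      have icst : IntervalIntegrable (fun r => Real.exp (θ*r) * (K₁*S₁ + (1/θ)*S₂)) volume 0 t := by
        apply Continuous.intervalIntegrable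
        exact (Real.continuous_exp.comp (continuous_const.mul continuous_id)).mul continuous_const
      have h := intervalIntegral.integral_mono_on ht iegt icst
        (fun r hr => by
          have hgr : g r ≤ K₁*S₁ + (1/θ)*S₂ := by
            simp only [hgdef]
            have := hle₁ r hr
            have := hle₂ r hr
            have h1θ : (0:ℝ) ≤ 1/θ := one_div_nonneg.2 hθ.le
            nlinarith only [hle₁ r hr, hle₂ r hr, hK₁.le, h1θ]
          exact mul_le_mul_of_nonneg_left hgr (Real.exp_pos _).le)
      rw [intervalIntegral.integral_mul_const, hexp_int] at h
      calc Φ t ≤ _ := h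
        _ = (K₁*S₁ + (1/θ)*S₂) * ((Real.exp (θ*t) - 1)/θ) := by ring
    have hone : (0:ℝ) ≤ 1 - Real.exp (-(θ*t)) := by
      have h1 : Real.exp (-(θ*t)) ≤ 1 :=
        Real.exp_le_one_iff.2 (neg_nonpos.2 (mul_nonneg hθ.le ht))
      linarith only [h1]
    have hΦe : Φ t * Real.exp (-(θ*t))
        ≤ (K₁*S₁ + (1/θ)*S₂) * ((1 - Real.exp (-(θ*t)))/θ) := by
      have h := mul_le_mul_of_nonneg_right hΦle2 (Real.exp_pos (-(θ*t))).le
      have hcomm : (K₁*S₁ + (1/θ)*S₂) * ((Real.exp (θ*t) - 1)/θ) * Real.exp (-(θ*t))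
          = (K₁*S₁ + (1/θ)*S₂) * ((1 - Real.exp (-(θ*t)))/θ) := by
        have hEne : Real.exp (θ*t) ≠ 0 := (Real.exp_pos _).ne'
        have hinner : (Real.exp (θ*t) - 1)/θ * (Real.exp (θ*t))⁻¹
            = (1 - (Real.exp (θ*t))⁻¹)/θ := by
          rw [div_mul_eq_mul_div, sub_mul, one_mul, mul_inv_cancel₀ hEne]
        rw [Real.exp_neg, mul_assoc, hinner]
      linarith only [h, hcomm.le, hcomm.ge]
    have hg := gron_const K₁ (1/θ) S₁ S₂ θ (1 - Real.exp (-(θ*t))) hθ hK₁.le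
      (one_div_nonneg.2 hθ.le) hS₁nn hS₂nn hone
    rw [neg_mul, hK₂def]
    calc E t ≤ (E 0 + Φ t) * Real.exp (-(θ*t)) := hEt
      _ = E 0 * Real.exp (-(θ*t)) + Φ t * Real.exp (-(θ*t)) := by ring
      _ ≤ E 0 * Real.exp (-(θ*t))
          + (1 - Real.exp (-(θ*t))) * ((K₁ + K₁/θ)*S₁ + ((1/θ) + (1/θ)/θ)*S₂) := by
            linarith only [hΦe, hg]
end

section
/- Under Assumption A3c (a₂ = 0, a₁ ≠ 0, so u(t,1) = 0; there exist A′₁, A′₂ ≥ 0 with A′₁ + A′₂ = μ such that (b₁/b₂)μ − M₂/2 < A′₁ and M₁ < A′₂ − 2A′₁), there exist constants C₃, C₄, C₅ > 0 such that every classical solution u of the boundary-value problem satisfies, for all t ≥ 0: ‖u(t,·)‖² ≤ ‖u(0,·)‖²·e^{−C₃t} + C₄·∫_0^t d₁(s)² ds + C₅·∫_0^t d₂(s)² ds, and ‖u(t,·)‖² ≤ ‖u(0,·)‖²·e^{−C₃t} + (1 − e^{−C₃t})·(C₄·sup_{0≤s≤t} d₁(s)² + C₅·sup_{0≤s≤t}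 d₂(s)²). -/
open Set intervalIntegral Real

open MeasureTheory


lemma hlp_young (ε p q : ℝ) (hε : 0 < ε) : 2*(p*q) ≤ ε*p^2 + q^2/ε := by
  have key : ε*p^2 + q^2/ε - 2*(p*q) = (ε*p - q)^2/ε := by
    field_simp; ring
  nlinarith [div_nonneg (sq_nonneg (ε*p - q)) hε.le]

lemma hlp_ii {g : ℝ → ℝ} (hg : ContinuousOn g (Icc 0 1)) :
    IntervalIntegrable g volume 0 1 :=
  ContinuousOn.intervalIntegrable (by rwa [uIcc_of_le zero_le_one])

lemma hlp_meansq {g : ℝ → ℝ} (hg : ContinuousOn g (Icc 0 1)) :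
    (∫ x in (0:ℝ)..1, g x)^2 ≤ ∫ x in (0:ℝ)..1, (g x)^2 := by
  set c := ∫ x in (0:ℝ)..1, g x with hc
  have hgi : IntervalIntegrable g volume 0 1 := hlp_ii hg
  have hg2i : IntervalIntegrable (fun x => (g x)^2) volume 0 1 := hlp_ii (hg.pow 2)
  have h0 : (0:ℝ) ≤ ∫ x in (0:ℝ)..1, (g x - c)^2 :=
    intervalIntegral.integral_nonneg zero_le_one (fun x _ => sq_nonneg _)
  have hexp : ∀ x, (g x - c)^2 = (g x)^2 - 2*c*(g x) + c^2 := fun x => by ring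
  rw [intervalIntegral.integral_congr (g := fun x => (g x)^2 - 2*c*(g x) + c^2)
      (fun x _ => hexp x)] at h0
  rw [intervalIntegral.integral_add ((hg2i.sub ((hgi.const_mul (2*c))))) intervalIntegrable_const,
      intervalIntegral.integral_sub hg2i (hgi.const_mul (2*c)),
      intervalIntegral.integral_const_mul, intervalIntegral.integral_const] at h0
  simp only [smul_eq_mul, ← hc] at h0
  nlinarith [h0]

lemma hlp_ftc {f f' : ℝ → ℝ}
    (hder : ∀ x ∈ Icc (0:ℝ) 1, HasDerivWithinAt f (f' x) (Icc 0 1) x)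
    (hf' : ContinuousOn f' (Icc 0 1)) {a : ℝ} (ha : a ∈ Icc (0:ℝ) 1) :
    ∫ y in a..1, f' y = f 1 - f a := by
  apply intervalIntegral.integral_eq_sub_of_hasDeriv_right_of_le ha.2
  · have hfc : ContinuousOn f (Icc 0 1) := fun x hx => (hder x hx).continuousWithinAt
    exact hfc.mono (Icc_subset_Icc ha.1 le_rfl)
  · intro x hx
    have hx' : x ∈ Icc (0:ℝ) 1 := ⟨le_of_lt (lt_of_le_of_lt ha.1 hx.1), hx.2.le⟩
    have : HasDerivAt f (f' x) x :=
      (hder x hx').hasDerivAt (Icc_mem_nhds (lt_of_le_of_lt ha.1 hx.1) hx.2)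
    exact this.hasDerivWithinAt
  · exact ContinuousOn.intervalIntegrable
      (by rw [uIcc_of_le ha.2]; exact hf'.mono (Icc_subset_Icc ha.1 le_rfl))

lemma hlp_poincare_pt {f f' : ℝ → ℝ}
    (hder : ∀ x ∈ Icc (0:ℝ) 1, HasDerivWithinAt f (f' x) (Icc 0 1) x)
    (hf' : ContinuousOn f' (Icc 0 1)) (hf1 : f 1 = 0) :
    ∀ x ∈ Icc (0:ℝ) 1, (f x)^2 ≤ ∫ y in (0:ℝ)..1, (f' y)^2 := by
  intro x hx
  have hftc := hlp_ftc hder hf' hx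
  rw [hf1] at hftc
  have habs : |f x| ≤ ∫ y in (0:ℝ)..1, |f' y| := by
    have h1 : |f x| = |∫ y in x..1, f' y| := by rw [hftc]; rw [abs_sub_comm]; simp
    rw [h1]
    calc |∫ y in x..1, f' y| ≤ ∫ y in x..1, |f' y| :=
          intervalIntegral.abs_integral_le_integral_abs hx.2
      _ ≤ ∫ y in (0:ℝ)..1, |f' y| := by
          have hsplit : ∫ y in (0:ℝ)..1, |f' y| = (∫ y in (0:ℝ)..x, |f' y|) + ∫ y in x..1, |f' y| := by
            rw [intervalIntegral.integral_add_adjacent_intervals]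
            · exact ContinuousOn.intervalIntegrable
                (by rw [uIcc_of_le hx.1]; exact (hf'.mono (Icc_subset_Icc le_rfl hx.2)).abs)
            · exact ContinuousOn.intervalIntegrable
                (by rw [uIcc_of_le hx.2]; exact (hf'.mono (Icc_subset_Icc hx.1 le_rfl)).abs)
          have hnn : (0:ℝ) ≤ ∫ y in (0:ℝ)..x, |f' y| :=
            intervalIntegral.integral_nonneg hx.1 (fun y _ => abs_nonneg _)
          linarith
  have hms : (∫ y in (0:ℝ)..1, |f' y|)^2 ≤ ∫ y in (0:ℝ)..1, |f' y|^2 := hlp_meansq hf'.abs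
  have h2 : (f x)^2 ≤ (∫ y in (0:ℝ)..1, |f' y|)^2 := by
    rw [← sq_abs (f x)]
    exact pow_le_pow_left₀ (abs_nonneg _) habs 2
  calc (f x)^2 ≤ (∫ y in (0:ℝ)..1, |f' y|)^2 := h2
    _ ≤ ∫ y in (0:ℝ)..1, |f' y|^2 := hms
    _ = ∫ y in (0:ℝ)..1, (f' y)^2 := by simp [sq_abs]

lemma hlp_poincare_int {f f' : ℝ → ℝ}
    (hder : ∀ x ∈ Icc (0:ℝ) 1, HasDerivWithinAt f (f' x) (Icc 0 1) x)
    (hf' : ContinuousOn f' (Icc 0 1)) (hf1 : f 1 = 0) :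
    ∫ x in (0:ℝ)..1, (f x)^2 ≤ ∫ y in (0:ℝ)..1, (f' y)^2 := by
  have hfc : ContinuousOn f (Icc 0 1) := fun x hx => (hder x hx).continuousWithinAt
  calc ∫ x in (0:ℝ)..1, (f x)^2 ≤ ∫ x in (0:ℝ)..1, (∫ y in (0:ℝ)..1, (f' y)^2) := by
        apply intervalIntegral.integral_mono_on zero_le_one (hlp_ii (hfc.pow 2))
          intervalIntegrable_const
        exact hlp_poincare_pt hder hf' hf1
    _ = ∫ y in (0:ℝ)..1, (f' y)^2 := by simp

lemma hlp_ibp1 {f f' f'' : ℝ → ℝ}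
    (hder : ∀ x ∈ Icc (0:ℝ) 1, HasDerivWithinAt f (f' x) (Icc 0 1) x)
    (hder2 : ∀ x ∈ Icc (0:ℝ) 1, HasDerivWithinAt f' (f'' x) (Icc 0 1) x)
    (hf'' : ContinuousOn f'' (Icc 0 1)) :
    ∫ x in (0:ℝ)..1, ((f' x)^2 + f x * f'' x) = f 1 * f' 1 - f 0 * f' 0 := by
  have hfc : ContinuousOn f (Icc 0 1) := fun x hx => (hder x hx).continuousWithinAt
  have hf'c : ContinuousOn f' (Icc 0 1) := fun x hx => (hder2 x hx).continuousWithinAt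
  have := intervalIntegral.integral_eq_sub_of_hasDeriv_right_of_le
    (f := fun x => f x * f' x) (f' := fun x => (f' x)^2 + f x * f'' x) zero_le_one
    (hfc.mul hf'c)
    (by
      intro x hx
      have hx' : x ∈ Icc (0:ℝ) 1 := ⟨hx.1.le, hx.2.le⟩
      have h1 : HasDerivAt f (f' x) x := (hder x hx').hasDerivAt (Icc_mem_nhds hx.1 hx.2)
      have h2 : HasDerivAt f' (f'' x) x := (hder2 x hx').hasDerivAt (Icc_mem_nhds hx.1 hx.2)
      have h3 := h1.mul h2
      rw [show f' x * f' x + f x * f'' x = (f' x)^2 + f x * f'' x by ring] at h3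
      exact h3.hasDerivWithinAt)
    (hlp_ii ((hf'c.pow 2).add (hfc.mul hf'')))
  exact this

lemma hlp_ibp2 {f f' : ℝ → ℝ}
    (hder : ∀ x ∈ Icc (0:ℝ) 1, HasDerivWithinAt f (f' x) (Icc 0 1) x)
    (hf' : ContinuousOn f' (Icc 0 1)) :
    ∫ x in (0:ℝ)..1, f x * f' x = ((f 1)^2 - (f 0)^2)/2 := by
  have hfc : ContinuousOn f (Icc 0 1) := fun x hx => (hder x hx).continuousWithinAt
  have := intervalIntegral.integral_eq_sub_of_hasDeriv_right_of_le
    (f := fun x => (f x)^2/2) (f' := fun x => f x * f' x) zero_le_one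
    ((hfc.pow 2).div_const 2)
    (by
      intro x hx
      have hx' : x ∈ Icc (0:ℝ) 1 := ⟨hx.1.le, hx.2.le⟩
      have h1 : HasDerivAt f (f' x) x := (hder x hx').hasDerivAt (Icc_mem_nhds hx.1 hx.2)
      have h3 := (h1.pow 2).div_const 2
      rw [show (2:ℕ) * f x ^ (2-1) * f' x / 2 = f x * f' x by push_cast; ring] at h3
      exact h3.hasDerivWithinAt)
    (hlp_ii (hfc.mul hf'))
  rw [this]; ring

lemma hlp_expint (C t : ℝ) (hC : C ≠ 0) :
    ∫ s in (0:ℝ)..t, Real.exp (C*s) = (Real.exp (C*t) - 1)/C := by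
  have : ∀ s ∈ uIcc (0:ℝ) t, HasDerivAt (fun r => Real.exp (C*r)/C) (Real.exp (C*s)) s := by
    intro s _
    have h := (((hasDerivAt_id s).const_mul C).exp).div_const C
    have h2 : Real.exp (C*s) * C / C = Real.exp (C*s) := by field_simp
    simpa [h2] using h
  rw [intervalIntegral.integral_eq_sub_of_hasDerivAt this
    ((continuous_exp.comp (continuous_const.mul continuous_id)).intervalIntegrable 0 t)]
  rw [mul_zero, Real.exp_zero]
  field_simp

lemma hlp_gronwall {E g : ℝ → ℝ} {C : ℝ} (hC : 0 < C)
    (hEc : ContinuousOn E (Ici 0)) (hgc : ContinuousOn g (Ici 0))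
    (hdv : ∀ t > (0:ℝ), ∃ E', HasDerivAt E E' t ∧ E' ≤ -C * E t + g t) :
    ∀ t ≥ (0:ℝ), E t ≤ E 0 * Real.exp (-(C*t)) +
      Real.exp (-(C*t)) * ∫ s in (0:ℝ)..t, Real.exp (C*s) * g s := by
  intro t ht
  set h : ℝ → ℝ := fun s => Real.exp (C*s) * g s with hh
  have hhc : ContinuousOn h (Ici 0) :=
    ((continuous_exp.comp (continuous_const.mul continuous_id)).continuousOn).mul hgc
  set F : ℝ → ℝ := fun s => E s * Real.exp (C*s) - ∫ r in (0:ℝ)..s, h r with hF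
  have hIccIci : Icc (0:ℝ) t ⊆ Ici 0 := fun x hx => hx.1
  have hint : ∀ x ∈ Icc (0:ℝ) t, IntervalIntegrable h volume 0 x := by
    intro x hx
    exact ContinuousOn.intervalIntegrable
      (by rw [uIcc_of_le hx.1]; exact hhc.mono (fun y hy => hy.1))
  have hFc : ContinuousOn F (Icc 0 t) := by
    apply ContinuousOn.sub
    · exact ((hEc.mono hIccIci).mul
        ((continuous_exp.comp (continuous_const.mul continuous_id)).continuousOn))
    · have := intervalIntegral.continuousOn_primitive_interval (μ := volume)
        (f := h) (a := 0) (b := t)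
        (by rw [uIcc_of_le ht]
            exact (hhc.mono hIccIci).integrableOn_compact isCompact_Icc)
      rwa [uIcc_of_le ht] at this
  have key : ∀ x ∈ Ioo (0:ℝ) t, ∃ D, HasDerivAt F D x ∧ D ≤ 0 := by
    intro x hx
    obtain ⟨E', hE', hle⟩ := hdv x hx.1
    have hexp : HasDerivAt (fun s => Real.exp (C*s)) (Real.exp (C*x) * C) x := by
      have := ((hasDerivAt_id x).const_mul C).exp
      simpa using this
    have h1 : HasDerivAt (fun s => E s * Real.exp (C*s))
        (E' * Real.exp (C*x) + E x * (Real.exp (C*x) * C)) x := hE'.mul hexp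
    have h2 : HasDerivAt (fun s => ∫ r in (0:ℝ)..s, h r) (h x) x := by
      apply intervalIntegral.integral_hasDerivAt_right (hint x ⟨hx.1.le, hx.2.le⟩)
      · exact (hhc.mono (fun y (hy : y ∈ Ioi (0:ℝ)) => mem_Ici.mpr (le_of_lt (mem_Ioi.mp hy)))).stronglyMeasurableAtFilter
          isOpen_Ioi x hx.1
      · exact hhc.continuousAt (Ici_mem_nhds hx.1)
    refine ⟨_, h1.sub h2, ?_⟩
    have hep := Real.exp_pos (C*x)
    have hmul := mul_le_mul_of_nonneg_right hle hep.le
    simp only [hh]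
    nlinarith [hmul]
  have hant : AntitoneOn F (Icc 0 t) := by
    apply antitoneOn_of_deriv_nonpos (convex_Icc 0 t) hFc
    · intro x hx
      rw [interior_Icc] at hx
      obtain ⟨D, hD, _⟩ := key x hx
      exact hD.differentiableAt.differentiableWithinAt
    · intro x hx
      rw [interior_Icc] at hx
      obtain ⟨D, hD, hD0⟩ := key x hx
      rw [hD.deriv]; exact hD0
  have hFt : F t ≤ F 0 := hant ⟨le_rfl, ht⟩ ⟨ht, le_rfl⟩ ht
  have hF0 : F 0 = E 0 := by simp [hF]
  rw [hF0] at hFt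
  simp only [hF] at hFt
  have hep : (0:ℝ) < Real.exp (C*t) := Real.exp_pos _
  have hinv : Real.exp (-(C*t)) = (Real.exp (C*t))⁻¹ := Real.exp_neg _
  rw [hinv]
  have := mul_le_mul_of_nonneg_right (by linarith [hFt] :
    E t * Real.exp (C*t) ≤ E 0 + ∫ r in (0:ℝ)..t, h r) (inv_nonneg.mpr hep.le)
  calc E t = E t * Real.exp (C*t) * (Real.exp (C*t))⁻¹ := by field_simp
    _ ≤ (E 0 + ∫ r in (0:ℝ)..t, h r) * (Real.exp (C*t))⁻¹ := this
    _ = E 0 * (Real.exp (C*t))⁻¹ + (Real.exp (C*t))⁻¹ * ∫ r in (0:ℝ)..t, h r := by ring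


theorem stmt_16
    (μ b₁ b₂ M₁ M₂ : ℝ) (d : ℝ → ℝ → ℝ) (d₁ d₂ : ℝ → ℝ)
    (hμ : 0 < μ) (hb₂ : b₂ ≠ 0)
    (hd₁ : ContDiffOn ℝ 2 d₁ (Ici 0)) (hd₂ : ContinuousOn d₂ (Ici 0))
    (hdcont : ContinuousOn (fun p : ℝ × ℝ => d p.1 p.2) (Ici 0 ×ˢ Icc 0 1))
    (hd : ∀ t ≥ (0:ℝ), ∀ x ∈ Ioo (0:ℝ) 1, |d t x| ≤ |d₂ t|)
    -- Assumption A3c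
    (hA' : ∃ A₁' A₂' : ℝ, 0 ≤ A₁' ∧ 0 ≤ A₂' ∧ A₁' + A₂' = μ ∧
      b₁ / b₂ * μ - M₂ / 2 < A₁' ∧ M₁ < A₂' - 2 * A₁') :
    ∃ C₃ > (0:ℝ), ∃ C₄ > (0:ℝ), ∃ C₅ > (0:ℝ),
      ∀ u ux uxx ut : ℝ → ℝ → ℝ,
        (∀ t ≥ (0:ℝ), ∀ x ∈ Icc (0:ℝ) 1, HasDerivWithinAt (u t) (ux t x) (Icc 0 1) x) →
        (∀ t ≥ (0:ℝ), ∀ x ∈ Icc (0:ℝ) 1, HasDerivWithinAt (ux t) (uxx t x) (Icc 0 1) x) →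
        (∀ t ≥ (0:ℝ), ContinuousOn (uxx t) (Icc (0:ℝ) 1)) →
        (∀ t > (0:ℝ), ∀ x ∈ Icc (0:ℝ) 1, HasDerivAt (fun s => u s x) (ut t x) t) →
        (∀ t > (0:ℝ), ∀ x ∈ Ioo (0:ℝ) 1,
          ut t x = μ * uxx t x + d t x + M₁ * u t x + M₂ * ux t x) →
        (∀ t ≥ (0:ℝ), u t 1 = 0) →
        (∀ t ≥ (0:ℝ), b₁ * u t 0 + b₂ * ux t 0 = d₁ t) →
        ContinuousOn (fun t => ∫ x in (0:ℝ)..1, (u t x) ^ 2) (Ici 0) →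
        (∀ t > (0:ℝ), HasDerivAt (fun s => ∫ x in (0:ℝ)..1, (u s x) ^ 2)
          (∫ x in (0:ℝ)..1, 2 * u t x * ut t x) t) →
        ∀ t ≥ (0:ℝ),
          ((∫ x in (0:ℝ)..1, (u t x) ^ 2) ≤
            (∫ x in (0:ℝ)..1, (u 0 x) ^ 2) * Real.exp (-C₃ * t)
              + C₄ * (∫ s in (0:ℝ)..t, (d₁ s) ^ 2)
              + C₅ * (∫ s in (0:ℝ)..t, (d₂ s) ^ 2)) ∧
          ((∫ x in (0:ℝ)..1, (u t x) ^ 2) ≤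
            (∫ x in (0:ℝ)..1, (u 0 x) ^ 2) * Real.exp (-C₃ * t)
              + (1 - Real.exp (-C₃ * t)) *
                (C₄ * sSup ((fun s => (d₁ s) ^ 2) '' Icc 0 t)
                  + C₅ * sSup ((fun s => (d₂ s) ^ 2) '' Icc 0 t))) := by
  obtain ⟨A₁, A₂, hA₁, hA₂, hsum, hK, hM⟩ := hA'
  subst hsum
  set ε₁ : ℝ := 2*(A₁ - (b₁/b₂*(A₁+A₂) - M₂/2)) with hε₁def
  have hε₁ : 0 < ε₁ := by rw [hε₁def]; linarith
  set C₃ : ℝ := A₂ - M₁ with hC₃def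
  have hC₃ : 0 < C₃ := by rw [hC₃def]; linarith
  have hbne : (A₁+A₂)/b₂ ≠ 0 := div_ne_zero (ne_of_gt hμ) hb₂
  set a : ℝ := ((A₁+A₂)/b₂)^2/ε₁ with hadef
  have ha : 0 < a := by rw [hadef]; positivity
  set cb : ℝ := 1/C₃ with hcbdef
  have hcb : 0 < cb := by rw [hcbdef]; positivity
  set C₄ : ℝ := a*(1+1/C₃) with hC₄def
  set C₅ : ℝ := cb*(1+1/C₃) with hC₅def
  have hC₄ : 0 < C₄ := by rw [hC₄def]; positivity
  have hC₅ : 0 < C₅ := by rw [hC₅def]; positivity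
  have haC₄ : a ≤ C₄ := by
    rw [hC₄def]
    nlinarith [mul_nonneg ha.le (by positivity : (0:ℝ) ≤ 1/C₃)]
  have haC₄' : a/C₃ ≤ C₄ := by
    rw [hC₄def, div_eq_mul_inv, one_div]
    nlinarith [ha.le]
  have hcbC₅ : cb ≤ C₅ := by
    rw [hC₅def]
    nlinarith [mul_nonneg hcb.le (by positivity : (0:ℝ) ≤ 1/C₃)]
  have hcbC₅' : cb/C₃ ≤ C₅ := by
    rw [hC₅def, div_eq_mul_inv, one_div]
    nlinarith [hcb.le]
  refine ⟨C₃, hC₃, C₄, hC₄, C₅, hC₅, ?_⟩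
  intro u ux uxx ut hux huxx huxxc hut hpde hb1 hb0 hEc hEd t ht
  set E : ℝ → ℝ := fun s => ∫ x in (0:ℝ)..1, (u s x)^2 with hEdef
  set g : ℝ → ℝ := fun s => a*(d₁ s)^2 + cb*(d₂ s)^2 with hgdef
  have hd₁c : ContinuousOn d₁ (Ici 0) := hd₁.continuousOn
  have hgc : ContinuousOn g (Ici 0) :=
    (continuousOn_const.mul (hd₁c.pow 2)).add (continuousOn_const.mul (hd₂.pow 2))
  have hae : ∀ᵐ x : ℝ, x ∉ ({0,1} : Set ℝ) := by
    refine MeasureTheory.measure_eq_zero_iff_ae_notMem.mp ?_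
    exact Set.Countable.measure_zero ((Set.countable_singleton (1:ℝ)).insert 0) volume
  -- key differential inequality
  have key : ∀ s, 0 < s → (∫ x in (0:ℝ)..1, 2 * u s x * ut s x) ≤ -C₃ * E s + g s := by
    intro s hs
    have hs0 : (0:ℝ) ≤ s := hs.le
    have hfd := hux s hs0
    have hfd2 := huxx s hs0
    have hfxxc := huxxc s hs0
    have hfc : ContinuousOn (u s) (Icc 0 1) := fun x hx => (hfd x hx).continuousWithinAt
    have hfxc : ContinuousOn (ux s) (Icc 0 1) := fun x hx => (hfd2 x hx).continuousWithinAt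
    have hdc : ContinuousOn (d s) (Icc 0 1) := by
      have hpair : ContinuousOn (fun x : ℝ => ((s, x) : ℝ × ℝ)) (Icc 0 1) :=
        (continuous_const.prodMk continuous_id).continuousOn
      exact hdcont.comp hpair (fun x hx => ⟨hs0, hx⟩)
    have hf1 : u s 1 = 0 := hb1 s hs0
    have hI1 : IntervalIntegrable (fun x => u s x * uxx s x) volume 0 1 :=
      hlp_ii (hfc.mul hfxxc)
    have hI2 : IntervalIntegrable (fun x => 2*(u s x * d s x)) volume 0 1 :=
      hlp_ii (continuousOn_const.mul (hfc.mul hdc))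
    have hI3 : IntervalIntegrable (fun x => (u s x)^2) volume 0 1 := hlp_ii (hfc.pow 2)
    have hI4 : IntervalIntegrable (fun x => u s x * ux s x) volume 0 1 :=
      hlp_ii (hfc.mul hfxc)
    have hQI : IntervalIntegrable (fun x => (ux s x)^2) volume 0 1 := hlp_ii (hfxc.pow 2)
    have hcongr : (∫ x in (0:ℝ)..1, 2 * u s x * ut s x)
        = ∫ x in (0:ℝ)..1, (2*(A₁+A₂)*(u s x * uxx s x) + 2*(u s x * d s x)
            + 2*M₁*(u s x)^2 + 2*M₂*(u s x * ux s x)) := by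
      apply intervalIntegral.integral_congr_ae
      filter_upwards [hae] with x hx hmem
      rw [Set.uIoc_of_le zero_le_one] at hmem
      have hx1 : x ≠ 1 := fun h => hx (by simp [h])
      have hx' : x ∈ Ioo (0:ℝ) 1 := ⟨hmem.1, lt_of_le_of_ne hmem.2 hx1⟩
      rw [hpde s hs x hx']; ring
    have hsplit : (∫ x in (0:ℝ)..1, (2*(A₁+A₂)*(u s x * uxx s x) + 2*(u s x * d s x)
            + 2*M₁*(u s x)^2 + 2*M₂*(u s x * ux s x)))
        = 2*(A₁+A₂)*(∫ x in (0:ℝ)..1, u s x * uxx s x)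
          + (∫ x in (0:ℝ)..1, 2*(u s x * d s x))
          + 2*M₁*(∫ x in (0:ℝ)..1, (u s x)^2)
          + 2*M₂*(∫ x in (0:ℝ)..1, u s x * ux s x) := by
      rw [intervalIntegral.integral_add (((hI1.const_mul _).add hI2).add (hI3.const_mul _))
            (hI4.const_mul _),
          intervalIntegral.integral_add ((hI1.const_mul _).add hI2) (hI3.const_mul _),
          intervalIntegral.integral_add (hI1.const_mul _) hI2,
          intervalIntegral.integral_const_mul, intervalIntegral.integral_const_mul,
          intervalIntegral.integral_const_mul, intervalIntegral.integral_const_mul]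
    have hibp1 := hlp_ibp1 hfd hfd2 hfxxc
    have hIA : (∫ x in (0:ℝ)..1, u s x * uxx s x)
        = -(u s 0 * ux s 0) - ∫ x in (0:ℝ)..1, (ux s x)^2 := by
      rw [intervalIntegral.integral_add hQI hI1, hf1] at hibp1
      linarith
    have hIC := hlp_ibp2 hfd hfxc
    rw [hf1] at hIC
    have hd2s := hd s hs0
    have hB : (∫ x in (0:ℝ)..1, 2*(u s x * d s x)) ≤ C₃*(E s) + cb*(d₂ s)^2 := by
      have hRI : IntervalIntegrable (fun x => C₃*(u s x)^2 + cb*(d₂ s)^2) volume 0 1 :=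
        (hI3.const_mul _).add intervalIntegrable_const
      have hle : (fun x => 2*(u s x * d s x)) ≤ᶠ[MeasureTheory.ae
          (MeasureTheory.volume.restrict (Icc (0:ℝ) 1))]
          (fun x => C₃*(u s x)^2 + cb*(d₂ s)^2) := by
        rw [Filter.EventuallyLE, MeasureTheory.ae_restrict_iff' measurableSet_Icc]
        filter_upwards [hae] with x hx hmem
        have hx0 : x ≠ 0 := fun h => hx (by simp [h])
        have hx1 : x ≠ 1 := fun h => hx (by simp [h])
        have hx' : x ∈ Ioo (0:ℝ) 1 :=
          ⟨lt_of_le_of_ne hmem.1 (Ne.symm hx0), lt_of_le_of_ne hmem.2 hx1⟩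
        have hy := hlp_young C₃ (u s x) (d s x) hC₃
        have h2 : (d s x)^2 ≤ (d₂ s)^2 := by
          calc (d s x)^2 = |d s x|^2 := (sq_abs _).symm
            _ ≤ |d₂ s|^2 := pow_le_pow_left₀ (abs_nonneg _) (hd2s x hx') 2
            _ = (d₂ s)^2 := sq_abs _
        have hd2C : (d s x)^2/C₃ ≤ (d₂ s)^2/C₃ := by
          exact (div_le_div_iff_of_pos_right hC₃).mpr h2
        have hdiv : (d₂ s)^2/C₃ = cb*(d₂ s)^2 := by rw [hcbdef]; ring
        calc 2*(u s x * d s x) ≤ C₃*(u s x)^2 + (d s x)^2/C₃ := hy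
          _ ≤ C₃*(u s x)^2 + (d₂ s)^2/C₃ := by exact add_le_add_right hd2C _
          _ = C₃*(u s x)^2 + cb*(d₂ s)^2 := by rw [hdiv]
      have hmono := intervalIntegral.integral_mono_ae_restrict zero_le_one hI2 hRI hle
      have hRr : (∫ x in (0:ℝ)..1, (C₃*(u s x)^2 + cb*(d₂ s)^2))
          = C₃*(E s) + cb*(d₂ s)^2 := by
        rw [intervalIntegral.integral_add (hI3.const_mul _) intervalIntegrable_const,
            intervalIntegral.integral_const_mul, intervalIntegral.integral_const]
        simp [hEdef, smul_eq_mul]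
      rw [hRr] at hmono
      exact hmono
    have hP0 : (u s 0)^2 ≤ ∫ x in (0:ℝ)..1, (ux s x)^2 :=
      hlp_poincare_pt hfd hfxc hf1 0 ⟨le_rfl, zero_le_one⟩
    have hPE : E s ≤ ∫ x in (0:ℝ)..1, (ux s x)^2 := hlp_poincare_int hfd hfxc hf1
    have hbc := hb0 s hs0
    have hv0 : ux s 0 = (d₁ s - b₁*(u s 0))/b₂ := by
      field_simp
      linarith
    have hA5 : -(2*(A₁+A₂)*(u s 0 * ux s 0)) ≤ 2*(A₁+A₂)*(b₁/b₂)*(u s 0)^2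
        + ε₁*(u s 0)^2 + a*(d₁ s)^2 := by
      have hy := hlp_young ε₁ (u s 0) (-((A₁+A₂)/b₂)*d₁ s) hε₁
      have heq : -(2*(A₁+A₂)*(u s 0 * ux s 0))
          = 2*(A₁+A₂)*(b₁/b₂)*(u s 0)^2 + 2*(u s 0 * (-((A₁+A₂)/b₂)*d₁ s)) := by
        rw [hv0]; field_simp; ring
      have heq2 : (-((A₁+A₂)/b₂)*d₁ s)^2/ε₁ = a*(d₁ s)^2 := by rw [hadef]; ring
      rw [heq]
      rw [heq2] at hy
      linarith
    have hμQ1 : A₁*(u s 0)^2 ≤ A₁*(∫ x in (0:ℝ)..1, (ux s x)^2) :=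
      mul_le_mul_of_nonneg_left hP0 hA₁
    have hμQ2 : A₂*(E s) ≤ A₂*(∫ x in (0:ℝ)..1, (ux s x)^2) :=
      mul_le_mul_of_nonneg_left hPE hA₂
    rw [hcongr, hsplit, hIA, hIC]
    have hEeq : (∫ x in (0:ℝ)..1, (u s x)^2) = E s := rfl
    rw [hEeq]
    have hgeq : g s = a*(d₁ s)^2 + cb*(d₂ s)^2 := rfl
    rw [hgeq]
    rw [hε₁def] at hA5
    rw [hC₃def] at hB ⊢
    linarith [hA5, hB, hμQ1, hμQ2]
  -- apply Gronwall
  have hgr := hlp_gronwall hC₃ hEc hgc (fun s hs => ⟨_, hEd s hs, key s hs⟩) t ht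
  have hIsub : Icc (0:ℝ) t ⊆ Ici 0 := fun x hx => hx.1
  have hd₁i : IntervalIntegrable (fun s => (d₁ s)^2) volume 0 t :=
    ContinuousOn.intervalIntegrable (by rw [uIcc_of_le ht]; exact (hd₁c.mono hIsub).pow 2)
  have hd₂i : IntervalIntegrable (fun s => (d₂ s)^2) volume 0 t :=
    ContinuousOn.intervalIntegrable (by rw [uIcc_of_le ht]; exact (hd₂.mono hIsub).pow 2)
  have hgi : IntervalIntegrable g volume 0 t :=
    ContinuousOn.intervalIntegrable (by rw [uIcc_of_le ht]; exact hgc.mono hIsub)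
  have hegi : IntervalIntegrable (fun s => Real.exp (C₃*s) * g s) volume 0 t :=
    ContinuousOn.intervalIntegrable (by
      rw [uIcc_of_le ht]
      exact ((continuous_exp.comp (continuous_const.mul continuous_id)).continuousOn).mul
        (hgc.mono hIsub))
  have hgnn : ∀ s, 0 ≤ g s := fun s =>
    add_nonneg (mul_nonneg ha.le (sq_nonneg _)) (mul_nonneg hcb.le (sq_nonneg _))
  have hee : Real.exp (-(C₃*t)) * Real.exp (C₃*t) = 1 := by
    rw [← Real.exp_add]; simp
  have hexpnn : (0:ℝ) ≤ Real.exp (-(C₃*t)) := (Real.exp_pos _).le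
  have hneg : Real.exp (-C₃ * t) = Real.exp (-(C₃*t)) := by rw [neg_mul]
  have hE0 : (∫ x in (0:ℝ)..1, (u 0 x)^2) = E 0 := rfl
  have hEt : (∫ x in (0:ℝ)..1, (u t x)^2) = E t := rfl
  set J := ∫ s in (0:ℝ)..t, Real.exp (C₃*s) * g s with hJdef
  constructor
  · -- integral bound
    have hJ1 : J ≤ Real.exp (C₃*t) * ∫ s in (0:ℝ)..t, g s := by
      rw [← intervalIntegral.integral_const_mul]
      apply intervalIntegral.integral_mono_on ht hegi (hgi.const_mul _)
      intro s hs
      exact mul_le_mul_of_nonneg_right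
        (Real.exp_le_exp.mpr (mul_le_mul_of_nonneg_left hs.2 hC₃.le)) (hgnn s)
    have hsplitg : (∫ s in (0:ℝ)..t, g s)
        = a*(∫ s in (0:ℝ)..t, (d₁ s)^2) + cb*(∫ s in (0:ℝ)..t, (d₂ s)^2) := by
      rw [hgdef]
      rw [intervalIntegral.integral_add (hd₁i.const_mul a) (hd₂i.const_mul cb),
          intervalIntegral.integral_const_mul, intervalIntegral.integral_const_mul]
    have h1nn : (0:ℝ) ≤ ∫ s in (0:ℝ)..t, (d₁ s)^2 :=
      intervalIntegral.integral_nonneg ht (fun s _ => sq_nonneg _)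
    have h2nn : (0:ℝ) ≤ ∫ s in (0:ℝ)..t, (d₂ s)^2 :=
      intervalIntegral.integral_nonneg ht (fun s _ => sq_nonneg _)
    have hJ1' : Real.exp (-(C₃*t)) * J ≤ ∫ s in (0:ℝ)..t, g s := by
      calc Real.exp (-(C₃*t)) * J
          ≤ Real.exp (-(C₃*t)) * (Real.exp (C₃*t) * ∫ s in (0:ℝ)..t, g s) :=
            mul_le_mul_of_nonneg_left hJ1 hexpnn
        _ = ∫ s in (0:ℝ)..t, g s := by rw [← mul_assoc, hee, one_mul]
    have hc4 : (C₄ - a) * (∫ s in (0:ℝ)..t, (d₁ s)^2) ≥ 0 :=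
      mul_nonneg (by linarith) h1nn
    have hc5 : (C₅ - cb) * (∫ s in (0:ℝ)..t, (d₂ s)^2) ≥ 0 :=
      mul_nonneg (by linarith) h2nn
    rw [hEt, hE0, hneg]
    linarith [hgr, hJ1', hsplitg, hc4, hc5]
  · -- sup bound
    set S₁ := sSup ((fun s => (d₁ s)^2) '' Icc 0 t) with hS₁def
    set S₂ := sSup ((fun s => (d₂ s)^2) '' Icc 0 t) with hS₂def
    have hbdd₁ : BddAbove ((fun s => (d₁ s)^2) '' Icc 0 t) :=
      IsCompact.bddAbove_image isCompact_Icc ((hd₁c.mono hIsub).pow 2)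
    have hbdd₂ : BddAbove ((fun s => (d₂ s)^2) '' Icc 0 t) :=
      IsCompact.bddAbove_image isCompact_Icc ((hd₂.mono hIsub).pow 2)
    have hle₁ : ∀ s ∈ Icc (0:ℝ) t, (d₁ s)^2 ≤ S₁ := fun s hs =>
      le_csSup hbdd₁ ⟨s, hs, rfl⟩
    have hle₂ : ∀ s ∈ Icc (0:ℝ) t, (d₂ s)^2 ≤ S₂ := fun s hs =>
      le_csSup hbdd₂ ⟨s, hs, rfl⟩
    have hS₁nn : 0 ≤ S₁ := le_trans (sq_nonneg (d₁ 0)) (hle₁ 0 ⟨le_rfl, ht⟩)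
    have hS₂nn : 0 ≤ S₂ := le_trans (sq_nonneg (d₂ 0)) (hle₂ 0 ⟨le_rfl, ht⟩)
    have hgG : ∀ s ∈ Icc (0:ℝ) t, g s ≤ a*S₁ + cb*S₂ := fun s hs =>
      add_le_add (mul_le_mul_of_nonneg_left (hle₁ s hs) ha.le)
        (mul_le_mul_of_nonneg_left (hle₂ s hs) hcb.le)
    have hGnn : 0 ≤ a*S₁ + cb*S₂ :=
      add_nonneg (mul_nonneg ha.le hS₁nn) (mul_nonneg hcb.le hS₂nn)
    have hJ2 : J ≤ (a*S₁ + cb*S₂) * ((Real.exp (C₃*t) - 1)/C₃) := by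
      have hconsti : IntervalIntegrable (fun s => Real.exp (C₃*s) * (a*S₁ + cb*S₂))
          volume 0 t :=
        ((continuous_exp.comp (continuous_const.mul continuous_id)).mul
          continuous_const).intervalIntegrable 0 t
      calc J ≤ ∫ s in (0:ℝ)..t, Real.exp (C₃*s) * (a*S₁ + cb*S₂) := by
            apply intervalIntegral.integral_mono_on ht hegi hconsti
            intro s hs
            exact mul_le_mul_of_nonneg_left (hgG s hs) (Real.exp_pos _).le
        _ = (∫ s in (0:ℝ)..t, Real.exp (C₃*s)) * (a*S₁ + cb*S₂) :=
            intervalIntegral.integral_mul_const _ _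
        _ = (a*S₁ + cb*S₂) * ((Real.exp (C₃*t) - 1)/C₃) := by
            rw [hlp_expint C₃ t hC₃.ne']; ring
    have hJ2' : Real.exp (-(C₃*t)) * J
        ≤ (1 - Real.exp (-(C₃*t))) * ((a*S₁ + cb*S₂)/C₃) := by
      calc Real.exp (-(C₃*t)) * J
          ≤ Real.exp (-(C₃*t)) * ((a*S₁ + cb*S₂) * ((Real.exp (C₃*t) - 1)/C₃)) :=
            mul_le_mul_of_nonneg_left hJ2 hexpnn
        _ = (Real.exp (-(C₃*t)) * (Real.exp (C₃*t) - 1)) * ((a*S₁ + cb*S₂)/C₃) := by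
            ring
        _ = (1 - Real.exp (-(C₃*t))) * ((a*S₁ + cb*S₂)/C₃) := by
            rw [mul_sub, hee, mul_one]
    have hfrac : (a*S₁ + cb*S₂)/C₃ ≤ C₄*S₁ + C₅*S₂ := by
      have h1 : (a/C₃)*S₁ ≤ C₄*S₁ := mul_le_mul_of_nonneg_right haC₄' hS₁nn
      have h2 : (cb/C₃)*S₂ ≤ C₅*S₂ := mul_le_mul_of_nonneg_right hcbC₅' hS₂nn
      have heq : (a*S₁ + cb*S₂)/C₃ = (a/C₃)*S₁ + (cb/C₃)*S₂ := by ring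
      linarith
    have hemone : Real.exp (-(C₃*t)) ≤ 1 := by
      rw [Real.exp_le_one_iff]
      have := mul_nonneg hC₃.le ht
      linarith
    have hfinal : Real.exp (-(C₃*t)) * J
        ≤ (1 - Real.exp (-(C₃*t))) * (C₄*S₁ + C₅*S₂) := by
      calc Real.exp (-(C₃*t)) * J
          ≤ (1 - Real.exp (-(C₃*t))) * ((a*S₁ + cb*S₂)/C₃) := hJ2'
        _ ≤ (1 - Real.exp (-(C₃*t))) * (C₄*S₁ + C₅*S₂) :=
            mul_le_mul_of_nonneg_left hfrac (by linarith)
    rw [hEt, hE0, hneg]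
    linarith [hgr, hfinal]
end

section
/- Consider the real Ginzburg–Landau equation u_t = μ·u_xx + α·u − β·u³ on (0,1) with μ > 0, β > 0, α < 0, under boundary conditions u(t,1) = 0 and b₁·u(t,0) + b₂·u_x(t,0) = d(t), where b₂ ≠ 0 and b₁/b₂ < 1/3. Then there exist constants C₀, C₁ > 0 such that every classical solution u satisfies, for all t ≥ 0: ∫_0^1 u(t,x)² dx ≤ (∫_0^1 u(0,x)² dx)·e^{−C₀t} + C₁·∫_0^t d(s)² ds, and ∫_0^1 u(t,x)² dx ≤ (∫_0^1 u(0,x)² dx)·e^{−C₀t} + (1 − e^{−C₀t})·C₁·sup_{0≤s≤t} d(s)². -/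
open Set intervalIntegral Real



lemma aux_young (μ a u0 y I1 : ℝ) (hμ : 0 < μ) (ha : 0 < a) (hI : u0^2 ≤ I1) :
    2*μ*((1-a)*u0^2 - u0*y - I1) ≤ μ/a * y^2 := by
  rw [div_mul_eq_mul_div, le_div_iff₀ ha]
  nlinarith [mul_nonneg hμ.le (sq_nonneg (a*u0 + y)),
    mul_nonneg (mul_nonneg hμ.le ha.le) (sub_nonneg.2 hI),
    mul_nonneg hμ.le (mul_nonneg (sq_nonneg a) (sq_nonneg u0))]

lemma gronA (C₀ t₀ : ℝ) (hC : 0 < C₀) (ht : 0 < t₀) (E E' g : ℝ → ℝ)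
    (hEc : ContinuousOn E (Icc 0 t₀))
    (hgc : ContinuousOn g (Icc 0 t₀))
    (hg0 : ∀ s ∈ Icc 0 t₀, 0 ≤ g s)
    (hder : ∀ s ∈ Ioo 0 t₀, HasDerivAt E (E' s) s)
    (hb : ∀ s ∈ Ioo 0 t₀, E' s ≤ -C₀ * E s + g s) :
    E t₀ ≤ E 0 * Real.exp (-(C₀ * t₀)) + ∫ s in (0:ℝ)..t₀, g s := by
  have huI : uIcc (0:ℝ) t₀ = Icc 0 t₀ := uIcc_of_le ht.le
  have hgint : IntervalIntegrable (fun s => Real.exp (C₀*s) * g s) MeasureTheory.volume 0 t₀ :=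
    ContinuousOn.intervalIntegrable_of_Icc ht.le
      (((Real.continuous_exp.comp (continuous_const.mul continuous_id)).continuousOn).mul hgc)
  set F : ℝ → ℝ := fun t => ∫ s in (0:ℝ)..t, Real.exp (C₀*s) * g s with hF
  set H : ℝ → ℝ := fun t => Real.exp (C₀*t) * E t - F t with hH
  have hHc : ContinuousOn H (Icc 0 t₀) := by
    apply ContinuousOn.sub
    · exact ((Real.continuous_exp.comp (continuous_const.mul continuous_id)).continuousOn).mul hEc
    · have hint2 : MeasureTheory.IntegrableOn (fun s => Real.exp (C₀*s) * g s) (Icc 0 t₀) :=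
        (((Real.continuous_exp.comp (continuous_const.mul continuous_id)).continuousOn).mul hgc).integrableOn_Icc
      have := intervalIntegral.continuousOn_primitive_interval
        (f := fun s => Real.exp (C₀*s) * g s) (a := (0:ℝ)) (b := t₀) (huI ▸ hint2)
      rwa [huI] at this
  have hderH : ∀ x ∈ Ioo (0:ℝ) t₀, HasDerivAt H
      (Real.exp (C₀*x) * C₀ * E x + Real.exp (C₀*x) * E' x - Real.exp (C₀*x) * g x) x := by
    intro x hx
    have h1 : HasDerivAt (fun t => Real.exp (C₀*t)) (Real.exp (C₀*x) * C₀) x := by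
      simpa using (HasDerivAt.exp ((hasDerivAt_id x).const_mul C₀))
    have h2 := h1.mul (hder x hx)
    have h3 : HasDerivAt F (Real.exp (C₀*x) * g x) x := by
      apply intervalIntegral.integral_hasDerivAt_right
        (ContinuousOn.intervalIntegrable_of_Icc hx.1.le
          ((((Real.continuous_exp.comp (continuous_const.mul continuous_id)).continuousOn).mul hgc).mono
            (Icc_subset_Icc le_rfl hx.2.le)))
      · exact ContinuousOn.stronglyMeasurableAtFilter isOpen_Ioo
          (((Real.continuous_exp.comp (continuous_const.mul continuous_id)).continuousOn).mul
            (hgc.mono Ioo_subset_Icc_self)) x hx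
      · exact ContinuousAt.mul (by fun_prop)
          ((hgc.continuousAt (Icc_mem_nhds hx.1 hx.2)))
    exact h2.sub h3
  have hanti : AntitoneOn H (Icc 0 t₀) := by
    apply antitoneOn_of_deriv_nonpos (convex_Icc 0 t₀) hHc
    · intro x hx
      rw [interior_Icc] at hx
      exact ((hderH x hx).differentiableAt).differentiableWithinAt
    · intro x hx
      rw [interior_Icc] at hx
      rw [(hderH x hx).deriv]
      have hbx := hb x hx
      have hP := (Real.exp_pos (C₀*x)).le
      nlinarith [mul_le_mul_of_nonneg_left hbx hP]
  have hH0 : H t₀ ≤ H 0 := hanti (left_mem_Icc.2 ht.le) (right_mem_Icc.2 ht.le) ht.le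
  have hF0 : F 0 = 0 := intervalIntegral.integral_same
  have hQP : Real.exp (-(C₀*t₀)) * Real.exp (C₀*t₀) = 1 := by
    rw [← Real.exp_add]; simp
  have hQpos := Real.exp_pos (-(C₀*t₀))
  -- from H t₀ ≤ H 0 = E 0
  have key : Real.exp (C₀*t₀) * E t₀ ≤ E 0 + F t₀ := by
    simp only [hH, mul_zero, Real.exp_zero, one_mul, hF0, sub_zero] at hH0
    linarith
  have step : E t₀ ≤ E 0 * Real.exp (-(C₀*t₀)) + Real.exp (-(C₀*t₀)) * F t₀ := by
    have := mul_le_mul_of_nonneg_left key hQpos.le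
    rw [← mul_assoc, hQP, one_mul] at this
    linarith [this]
  -- bound exp(-(C₀t₀)) * F t₀ ≤ ∫ g
  have hbound : Real.exp (-(C₀*t₀)) * F t₀ ≤ ∫ s in (0:ℝ)..t₀, g s := by
    rw [hF, ← intervalIntegral.integral_const_mul]
    apply intervalIntegral.integral_mono_on ht.le (hgint.const_mul _)
      (ContinuousOn.intervalIntegrable_of_Icc ht.le hgc)
    intro x hx
    rw [← mul_assoc, ← Real.exp_add]
    apply mul_le_of_le_one_left (hg0 x hx)
    rw [Real.exp_le_one_iff]
    nlinarith [hx.2, hC]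
  linarith

lemma gronB (C₀ t₀ M : ℝ) (hC : 0 < C₀) (ht : 0 < t₀) (E E' g : ℝ → ℝ)
    (hEc : ContinuousOn E (Icc 0 t₀))
    (hder : ∀ s ∈ Ioo 0 t₀, HasDerivAt E (E' s) s)
    (hb : ∀ s ∈ Ioo 0 t₀, E' s ≤ -C₀ * E s + g s)
    (hM : ∀ s ∈ Icc 0 t₀, g s ≤ M) :
    E t₀ ≤ E 0 * Real.exp (-(C₀ * t₀)) + (1 - Real.exp (-(C₀ * t₀))) * (M / C₀) := by
  set H : ℝ → ℝ := fun t => Real.exp (C₀*t) * (E t - M / C₀) with hH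
  have hHc : ContinuousOn H (Icc 0 t₀) :=
    ((Real.continuous_exp.comp (continuous_const.mul continuous_id)).continuousOn).mul
      (hEc.sub continuousOn_const)
  have hderH : ∀ x ∈ Ioo (0:ℝ) t₀, HasDerivAt H
      (Real.exp (C₀*x) * C₀ * (E x - M / C₀) + Real.exp (C₀*x) * E' x) x := by
    intro x hx
    have h1 : HasDerivAt (fun t => Real.exp (C₀*t)) (Real.exp (C₀*x) * C₀) x := by
      simpa using (HasDerivAt.exp ((hasDerivAt_id x).const_mul C₀))
    exact h1.mul ((hder x hx).sub_const (M / C₀))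
  have hanti : AntitoneOn H (Icc 0 t₀) := by
    apply antitoneOn_of_deriv_nonpos (convex_Icc 0 t₀) hHc
    · intro x hx
      rw [interior_Icc] at hx
      exact ((hderH x hx).differentiableAt).differentiableWithinAt
    · intro x hx
      rw [interior_Icc] at hx
      rw [(hderH x hx).deriv]
      have hbx := hb x hx
      have hMx := hM x (Ioo_subset_Icc_self hx)
      have hP := (Real.exp_pos (C₀*x)).le
      have hMC : C₀ * (M / C₀) = M := mul_div_cancel₀ M hC.ne'
      nlinarith [mul_le_mul_of_nonneg_left hbx hP, mul_le_mul_of_nonneg_left hMx hP]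
  have hH0 : H t₀ ≤ H 0 := hanti (left_mem_Icc.2 ht.le) (right_mem_Icc.2 ht.le) ht.le
  have hQP : Real.exp (-(C₀*t₀)) * Real.exp (C₀*t₀) = 1 := by
    rw [← Real.exp_add]; simp
  have hQpos := Real.exp_pos (-(C₀*t₀))
  simp only [hH, mul_zero, Real.exp_zero, one_mul] at hH0
  have := mul_le_mul_of_nonneg_left hH0 hQpos.le
  rw [← mul_assoc, hQP, one_mul] at this
  nlinarith [this]


-- key pointwise-in-time energy derivative bound, extracted
lemma key_step (μ α β b₁ b₂ : ℝ) (dt : ℝ) (u ux uxx ut : ℝ → ℝ)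
    (hμ : 0 < μ) (hβ : 0 < β)
    (hb₂ : b₂ ≠ 0) (hb : b₁ / b₂ < 1 / 3)
    (hux : ∀ x ∈ Icc (0:ℝ) 1, HasDerivWithinAt u (ux x) (Icc 0 1) x)
    (huxx : ∀ x ∈ Icc (0:ℝ) 1, HasDerivWithinAt ux (uxx x) (Icc 0 1) x)
    (huxxc : ContinuousOn uxx (Icc (0:ℝ) 1))
    (heq : ∀ x ∈ Ioo (0:ℝ) 1, ut x = μ * uxx x + α * u x - β * (u x) ^ 3)
    (hbc1 : u 1 = 0)
    (hbc0 : b₁ * u 0 + b₂ * ux 0 = dt) :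
    (∫ x in (0:ℝ)..1, 2 * u x * ut x) ≤
      -(-(2*α)) * (∫ x in (0:ℝ)..1, (u x)^2) + (μ / ((1 - b₁/b₂) * b₂^2)) * dt^2 := by
  have hcu : ContinuousOn u (Icc 0 1) := fun x hx => (hux x hx).continuousWithinAt
  have hcux : ContinuousOn ux (Icc 0 1) := fun x hx => (huxx x hx).continuousWithinAt
  -- integrability
  have i_uux : IntervalIntegrable (fun x => u x * uxx x) MeasureTheory.volume 0 1 :=
    ContinuousOn.intervalIntegrable_of_Icc zero_le_one (hcu.mul huxxc)
  have i_u2 : IntervalIntegrable (fun x => (u x)^2) MeasureTheory.volume 0 1 :=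
    ContinuousOn.intervalIntegrable_of_Icc zero_le_one (hcu.pow 2)
  have i_u4 : IntervalIntegrable (fun x => (u x)^4) MeasureTheory.volume 0 1 :=
    ContinuousOn.intervalIntegrable_of_Icc zero_le_one (hcu.pow 4)
  have i_ux : IntervalIntegrable ux MeasureTheory.volume 0 1 :=
    ContinuousOn.intervalIntegrable_of_Icc zero_le_one hcux
  have i_ux2 : IntervalIntegrable (fun x => (ux x)^2) MeasureTheory.volume 0 1 :=
    ContinuousOn.intervalIntegrable_of_Icc zero_le_one (hcux.pow 2)
  set J0 := ∫ x in (0:ℝ)..1, (u x)^2 with hJ0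
  set J1 := ∫ x in (0:ℝ)..1, (ux x)^2 with hJ1
  set J4 := ∫ x in (0:ℝ)..1, (u x)^4 with hJ4
  set Juu := ∫ x in (0:ℝ)..1, u x * uxx x with hJuu
  -- Step 1: rewrite integral using the PDE
  have hcong : (∫ x in (0:ℝ)..1, 2 * u x * ut x)
      = ∫ x in (0:ℝ)..1, (2*μ*(u x * uxx x) + 2*α*(u x)^2 - 2*β*(u x)^4) := by
    apply intervalIntegral.integral_congr_ae
    have h1 : ∀ᵐ (x : ℝ), x ≠ (1:ℝ) := by
      refine MeasureTheory.ae_iff.2 ?_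
      simp
    filter_upwards [h1] with x hx1 hmem
    rw [uIoc_of_le zero_le_one] at hmem
    have hxIoo : x ∈ Ioo (0:ℝ) 1 := ⟨hmem.1, lt_of_le_of_ne hmem.2 hx1⟩
    rw [heq x hxIoo]; ring
  have hsplit : (∫ x in (0:ℝ)..1, (2*μ*(u x * uxx x) + 2*α*(u x)^2 - 2*β*(u x)^4))
      = 2*μ*Juu + 2*α*J0 - 2*β*J4 := by
    rw [intervalIntegral.integral_sub (((i_uux.const_mul (2*μ)).add (i_u2.const_mul (2*α))))
        (i_u4.const_mul (2*β)),
      intervalIntegral.integral_add (i_uux.const_mul (2*μ)) (i_u2.const_mul (2*α)),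
      intervalIntegral.integral_const_mul, intervalIntegral.integral_const_mul,
      intervalIntegral.integral_const_mul]
  -- Step 2: integration by parts
  have hibp : J1 + Juu = -(u 0 * ux 0) := by
    have h0 : ContinuousOn (fun x => u x * ux x) (Icc 0 1) := hcu.mul hcux
    have hD : ∀ x ∈ Ioo (0:ℝ) 1, HasDerivWithinAt (fun x => u x * ux x)
        ((ux x)^2 + u x * uxx x) (Ioi x) x := by
      intro x hx
      have h1 : HasDerivAt u (ux x) x :=
        (hux x (Ioo_subset_Icc_self hx)).hasDerivAt (Icc_mem_nhds hx.1 hx.2)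
      have h2 : HasDerivAt ux (uxx x) x :=
        (huxx x (Ioo_subset_Icc_self hx)).hasDerivAt (Icc_mem_nhds hx.1 hx.2)
      have := (h1.mul h2).hasDerivWithinAt (s := Ioi x)
      exact this.congr_deriv (by ring)
    have hFTC := intervalIntegral.integral_eq_sub_of_hasDeriv_right_of_le zero_le_one h0 hD
      (i_ux2.add i_uux)
    rw [intervalIntegral.integral_add i_ux2 i_uux] at hFTC
    rw [hFTC, hbc1]; ring
  -- Step 3: trace bound
  have htrace : (u 0)^2 ≤ J1 := by
    have hD : ∀ x ∈ Ioo (0:ℝ) 1, HasDerivWithinAt u (ux x) (Ioi x) x := fun x hx =>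
      ((hux x (Ioo_subset_Icc_self hx)).hasDerivAt (Icc_mem_nhds hx.1 hx.2)).hasDerivWithinAt
    have hFTC := intervalIntegral.integral_eq_sub_of_hasDeriv_right_of_le zero_le_one hcu hD i_ux
    set I := ∫ x in (0:ℝ)..1, ux x with hI
    have hIu : I = -(u 0) := by rw [hFTC, hbc1]; ring
    have hnn : 0 ≤ ∫ x in (0:ℝ)..1, (ux x - I)^2 :=
      intervalIntegral.integral_nonneg zero_le_one (fun x _ => sq_nonneg _)
    have hexp : (∫ x in (0:ℝ)..1, (ux x - I)^2) = J1 - 2*I*I + I^2 := by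
      have : (fun x => (ux x - I)^2) = fun x => (ux x)^2 - (2*I)*ux x + I^2 :=
        funext fun x => by ring
      rw [this, intervalIntegral.integral_add (i_ux2.sub (i_ux.const_mul (2*I)))
          intervalIntegrable_const,
        intervalIntegral.integral_sub i_ux2 (i_ux.const_mul (2*I)),
        intervalIntegral.integral_const_mul, intervalIntegral.integral_const]
      simp [← hI]
      exact hJ1.symm
    rw [hIu] at hexp hnn
    nlinarith [hnn, hexp]
  -- Step 4: combine
  have ha : 0 < 1 - b₁/b₂ := by linarith
  have hux0 : ux 0 = (dt - b₁ * u 0)/b₂ := by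
    field_simp
    linarith
  have hyoung := aux_young μ (1 - b₁/b₂) (u 0) (dt/b₂) J1 hμ ha htrace
  have hKy : μ/(1 - b₁/b₂) * (dt/b₂)^2 = (μ / ((1 - b₁/b₂) * b₂^2)) * dt^2 := by
    field_simp
  have huu0 : -(u 0 * ux 0) = (1 - (1 - b₁/b₂)) * (u 0)^2 - u 0 * (dt/b₂) := by
    rw [hux0]
    field_simp
    ring
  have hJ4nn : 0 ≤ J4 :=
    intervalIntegral.integral_nonneg zero_le_one (fun x _ => by positivity)
  rw [hcong, hsplit]
  have hJuu : Juu = -(u 0 * ux 0) - J1 := by linarith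
  rw [hJuu, huu0]
  nlinarith [mul_nonneg hβ.le hJ4nn]
theorem stmt_17
    (μ α β b₁ b₂ : ℝ) (d : ℝ → ℝ)
    (hμ : 0 < μ) (hβ : 0 < β) (hα : α < 0)
    (hb₂ : b₂ ≠ 0) (hb : b₁ / b₂ < 1 / 3)
    (hd : ContDiffOn ℝ 2 d (Ici 0)) :
    ∃ C₀ > (0:ℝ), ∃ C₁ > (0:ℝ),
      ∀ u ux uxx ut : ℝ → ℝ → ℝ,
        (∀ t ≥ (0:ℝ), ∀ x ∈ Icc (0:ℝ) 1, HasDerivWithinAt (u t) (ux t x) (Icc 0 1) x) →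
        (∀ t ≥ (0:ℝ), ∀ x ∈ Icc (0:ℝ) 1, HasDerivWithinAt (ux t) (uxx t x) (Icc 0 1) x) →
        (∀ t ≥ (0:ℝ), ContinuousOn (uxx t) (Icc (0:ℝ) 1)) →
        (∀ t > (0:ℝ), ∀ x ∈ Icc (0:ℝ) 1, HasDerivAt (fun s => u s x) (ut t x) t) →
        (∀ t > (0:ℝ), ∀ x ∈ Ioo (0:ℝ) 1,
          ut t x = μ * uxx t x + α * u t x - β * (u t x) ^ 3) →
        (∀ t ≥ (0:ℝ), u t 1 = 0) →
        (∀ t ≥ (0:ℝ), b₁ * u t 0 + b₂ * ux t 0 = d t) →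
        ContinuousOn (fun t => ∫ x in (0:ℝ)..1, (u t x) ^ 2) (Ici 0) →
        (∀ t > (0:ℝ), HasDerivAt (fun s => ∫ x in (0:ℝ)..1, (u s x) ^ 2)
          (∫ x in (0:ℝ)..1, 2 * u t x * ut t x) t) →
        ∀ t ≥ (0:ℝ),
          ((∫ x in (0:ℝ)..1, (u t x) ^ 2) ≤
            (∫ x in (0:ℝ)..1, (u 0 x) ^ 2) * Real.exp (-C₀ * t)
              + C₁ * (∫ s in (0:ℝ)..t, (d s) ^ 2)) ∧
          ((∫ x in (0:ℝ)..1, (u t x) ^ 2) ≤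
            (∫ x in (0:ℝ)..1, (u 0 x) ^ 2) * Real.exp (-C₀ * t)
              + (1 - Real.exp (-C₀ * t)) * (C₁ * sSup ((fun s => (d s) ^ 2) '' Icc 0 t))) := by
  have ha : (0:ℝ) < 1 - b₁/b₂ := by linarith
  set C₀ : ℝ := -(2*α) with hC₀def
  have hC₀ : 0 < C₀ := by simp [hC₀def]; linarith
  set K : ℝ := μ / ((1 - b₁/b₂) * b₂^2) with hKdef
  have hKpos : 0 < K := by
    apply div_pos hμ
    apply mul_pos ha
    positivity
  set C₁ : ℝ := K + K / C₀ with hC₁def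
  have hC₁ : 0 < C₁ := by positivity
  refine ⟨C₀, hC₀, C₁, hC₁, ?_⟩
  intro u ux uxx ut hux huxx huxxc hut heq hbc1 hbc0 hEcont hE'
  set E : ℝ → ℝ := fun t => ∫ x in (0:ℝ)..1, (u t x) ^ 2 with hEdef
  set E' : ℝ → ℝ := fun t => ∫ x in (0:ℝ)..1, 2 * u t x * ut t x with hE'def
  have hdc : ContinuousOn d (Ici 0) := hd.continuousOn
  have hkey : ∀ t > (0:ℝ), E' t ≤ -C₀ * E t + K * (d t)^2 := by
    intro t ht
    exact key_step μ α β b₁ b₂ (d t) (u t) (ux t) (uxx t) (ut t) hμ hβ hb₂ hb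
      (hux t ht.le) (huxx t ht.le) (huxxc t ht.le) (heq t ht) (hbc1 t ht.le) (hbc0 t ht.le)
  intro t ht
  rcases eq_or_lt_of_le ht with h0 | htpos
  · constructor
    · rw [← h0]
      simp
    · rw [← h0]
      simp
  · have hg0 : ∀ s ∈ Icc (0:ℝ) t, 0 ≤ K * (d s)^2 := fun s _ => by positivity
    have hgc : ContinuousOn (fun s => K * (d s)^2) (Icc 0 t) :=
      continuousOn_const.mul ((hdc.mono (Icc_subset_Ici_self)).pow 2)
    have hEc : ContinuousOn E (Icc 0 t) := hEcont.mono (Icc_subset_Ici_self)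
    have hder : ∀ s ∈ Ioo (0:ℝ) t, HasDerivAt E (E' s) s := fun s hs => hE' s hs.1
    have hbnd : ∀ s ∈ Ioo (0:ℝ) t, E' s ≤ -C₀ * E s + K * (d s)^2 := fun s hs => hkey s hs.1
    have hnegmul : -C₀ * t = -(C₀ * t) := neg_mul C₀ t
    constructor
    · have hA := gronA C₀ t hC₀ htpos E E' (fun s => K * (d s)^2) hEc hgc hg0 hder hbnd
      have hi_d2 : IntervalIntegrable (fun s => (d s)^2) MeasureTheory.volume 0 t :=
        ContinuousOn.intervalIntegrable_of_Icc htpos.le ((hdc.mono (Icc_subset_Ici_self)).pow 2)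
      have heq2 : (∫ s in (0:ℝ)..t, K * (d s)^2) = K * ∫ s in (0:ℝ)..t, (d s)^2 :=
        intervalIntegral.integral_const_mul K _
      have hd2nn : 0 ≤ ∫ s in (0:ℝ)..t, (d s)^2 :=
        intervalIntegral.integral_nonneg htpos.le (fun x _ => sq_nonneg _)
      rw [hnegmul]
      have hKC : K * (∫ s in (0:ℝ)..t, (d s)^2) ≤ C₁ * ∫ s in (0:ℝ)..t, (d s)^2 := by
        apply mul_le_mul_of_nonneg_right _ hd2nn
        have h1 : 0 < K / C₀ := by positivity
        rw [hC₁def]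
        linarith
      calc E t ≤ E 0 * Real.exp (-(C₀ * t)) + ∫ s in (0:ℝ)..t, K * (d s)^2 := hA
        _ = E 0 * Real.exp (-(C₀ * t)) + K * ∫ s in (0:ℝ)..t, (d s)^2 := by rw [heq2]
        _ ≤ E 0 * Real.exp (-(C₀ * t)) + C₁ * ∫ s in (0:ℝ)..t, (d s)^2 := by linarith
    · set M : ℝ := sSup ((fun s => (d s)^2) '' Icc 0 t) with hMdef
      have hbdd : BddAbove ((fun s => (d s)^2) '' Icc 0 t) :=
        (isCompact_Icc.image_of_continuousOn
          ((hdc.mono (Icc_subset_Ici_self)).pow 2)).bddAbove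
      have hle : ∀ s ∈ Icc (0:ℝ) t, (d s)^2 ≤ M := fun s hs => le_csSup hbdd ⟨s, hs, rfl⟩
      have hM0 : 0 ≤ M := le_trans (sq_nonneg (d 0)) (hle 0 (left_mem_Icc.2 htpos.le))
      have hleK : ∀ s ∈ Icc (0:ℝ) t, K * (d s)^2 ≤ K * M := fun s hs =>
        mul_le_mul_of_nonneg_left (hle s hs) hKpos.le
      have hB := gronB C₀ t (K * M) hC₀ htpos E E' (fun s => K * (d s)^2) hEc hder hbnd hleK
      rw [hnegmul]
      have hexp1 : Real.exp (-(C₀ * t)) ≤ 1 := by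
        rw [Real.exp_le_one_iff]
        nlinarith
      have hfac : 0 ≤ 1 - Real.exp (-(C₀ * t)) := by linarith
      have hKM : K * M / C₀ ≤ C₁ * M := by
        rw [hC₁def]
        have h1 : K * M / C₀ = (K / C₀) * M := by ring
        nlinarith [mul_nonneg hKpos.le hM0]
      calc E t ≤ E 0 * Real.exp (-(C₀ * t)) + (1 - Real.exp (-(C₀ * t))) * (K * M / C₀) := hB
        _ ≤ E 0 * Real.exp (-(C₀ * t)) + (1 - Real.exp (-(C₀ * t))) * (C₁ * M) :=
          add_le_add le_rfl (mul_le_mul_of_nonneg_left hKM hfac)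
end

section
/- Consider the generalized real Ginzburg–Landau equation u_t = μ·u_xx + α·u − β·u³ − γ·u⁵ + λ·u_x on (0,1) with μ > 0, β > 0, γ > 0, λ ∈ ℝ, α + |λ| < 0, |λ| ≤ μ, under boundary conditions u(t,1) = 0 and b₁·u(t,0) + b₂·u_x(t,0) = d(t), where b₂ ≠ 0 and b₁/b₂ < 1/4. Then there exist constants C₀, C₁ > 0 such that every classical solution u satisfies, for all t ≥ 0: ∫_0^1 u(t,x)² dx ≤ (∫_0^1 u(0,x)² dx)·e^{−C₀t} + C₁·∫_0^t d(s)² ds, and ∫_0^1 u(t,x)² dx ≤ (∫_0^1 u(0,x)² dx)·e^{−C₀t} + (1 − e^{−C₀t})·C₁·sup_{0≤s≤t} d(s)². -/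
open Set intervalIntegral Real MeasureTheory

section helpers

lemma spatial_facts (f g h : ℝ → ℝ)
    (hf : ∀ x ∈ Icc (0:ℝ) 1, HasDerivWithinAt f (g x) (Icc 0 1) x)
    (hg : ∀ x ∈ Icc (0:ℝ) 1, HasDerivWithinAt g (h x) (Icc 0 1) x)
    (hh : ContinuousOn h (Icc (0:ℝ) 1))
    (hf1 : f 1 = 0) :
    (∫ x in (0:ℝ)..1, f x * g x) = -(f 0)^2/2 ∧
    (∫ x in (0:ℝ)..1, f x * h x) = -(f 0 * g 0) - ∫ x in (0:ℝ)..1, (g x)^2 ∧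
    (f 0)^2 ≤ ∫ x in (0:ℝ)..1, (g x)^2 := by
  have h01 : (0:ℝ) ≤ 1 := by norm_num
  have hm0 : (0:ℝ) ∈ Icc (0:ℝ) 1 := by norm_num
  have hm1 : (1:ℝ) ∈ Icc (0:ℝ) 1 := by norm_num
  have hfc : ContinuousOn f (Icc (0:ℝ) 1) := fun x hx => (hf x hx).continuousWithinAt
  have hgc : ContinuousOn g (Icc (0:ℝ) 1) := fun x hx => (hg x hx).continuousWithinAt
  have hUI : uIcc (0:ℝ) 1 = Icc 0 1 := uIcc_of_le h01
  have hInt : ∀ {F : ℝ → ℝ}, ContinuousOn F (Icc (0:ℝ) 1) → IntervalIntegrable F volume 0 1 := by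
    intro F hF
    rw [← hUI] at hF
    exact hF.intervalIntegrable
  have hfD : ∀ x ∈ Ioo (0:ℝ) 1, HasDerivAt f (g x) x := fun x hx =>
    (hf x (Ioo_subset_Icc_self hx)).hasDerivAt (Icc_mem_nhds hx.1 hx.2)
  have hgD : ∀ x ∈ Ioo (0:ℝ) 1, HasDerivAt g (h x) x := fun x hx =>
    (hg x (Ioo_subset_Icc_self hx)).hasDerivAt (Icc_mem_nhds hx.1 hx.2)
  -- FTC for f*f
  have ftc1 : ∫ x in (0:ℝ)..1, (g x * f x + f x * g x) = f 1 * f 1 - f 0 * f 0 := by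
    apply integral_eq_sub_of_hasDeriv_right_of_le h01 (hfc.mul hfc)
    · exact fun x hx => ((hfD x hx).mul (hfD x hx)).hasDerivWithinAt
    · exact hInt ((hgc.mul hfc).add (hfc.mul hgc))
  have e1 : ∫ x in (0:ℝ)..1, f x * g x = -(f 0)^2/2 := by
    have : ∫ x in (0:ℝ)..1, (g x * f x + f x * g x) = ∫ x in (0:ℝ)..1, 2 * (f x * g x) :=
      integral_congr (fun x _ => by ring)
    rw [this, intervalIntegral.integral_const_mul, hf1] at ftc1
    linarith
  -- FTC for f*g
  have ftc2 : ∫ x in (0:ℝ)..1, (g x * g x + f x * h x) = f 1 * g 1 - f 0 * g 0 := by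
    apply integral_eq_sub_of_hasDeriv_right_of_le h01 (hfc.mul hgc)
    · exact fun x hx => ((hfD x hx).mul (hgD x hx)).hasDerivWithinAt
    · exact hInt ((hgc.mul hgc).add (hfc.mul hh))
  have e2 : ∫ x in (0:ℝ)..1, f x * h x = -(f 0 * g 0) - ∫ x in (0:ℝ)..1, (g x)^2 := by
    rw [integral_add (hInt (F := fun x => g x * g x) (hgc.mul hgc)) (hInt (F := fun x => f x * h x) (hfc.mul hh)), hf1] at ftc2
    have : ∫ x in (0:ℝ)..1, g x * g x = ∫ x in (0:ℝ)..1, (g x)^2 :=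
      integral_congr (fun x _ => by ring)
    rw [this] at ftc2
    linarith
  -- FTC for f
  have ftc3 : ∫ x in (0:ℝ)..1, g x = f 1 - f 0 :=
    integral_eq_sub_of_hasDeriv_right_of_le h01 hfc
      (fun x hx => (hfD x hx).hasDerivWithinAt) (hInt hgc)
  -- Poincaré-type
  have e3 : (f 0)^2 ≤ ∫ x in (0:ℝ)..1, (g x)^2 := by
    have hnn : (0:ℝ) ≤ ∫ x in (0:ℝ)..1, (g x + f 0)^2 :=
      integral_nonneg h01 (fun x _ => sq_nonneg _)
    have hexp : ∫ x in (0:ℝ)..1, (g x + f 0)^2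
        = (∫ x in (0:ℝ)..1, (g x)^2) + ((2 * f 0) * (∫ x in (0:ℝ)..1, g x) + (f 0)^2) := by
      have h1 : ∫ x in (0:ℝ)..1, (g x + f 0)^2
          = ∫ x in (0:ℝ)..1, ((g x)^2 + ((2 * f 0) * g x + (f 0)^2)) :=
        integral_congr (fun x _ => by ring)
      rw [h1, integral_add (hInt (by fun_prop)) (hInt (by fun_prop)),
        integral_add (by exact (hInt hgc).const_mul _) intervalIntegrable_const,
        intervalIntegral.integral_const_mul, intervalIntegral.integral_const]
      simp
    rw [hexp, ftc3, hf1] at hnn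
    nlinarith [hnn]
  exact ⟨e1, e2, e3⟩

lemma key_ineq (μ lam b₂ θ u0 g0 dd I : ℝ)
    (hμ : 0 < μ) (hθ : 0 < θ) (hb₂ : b₂ ≠ 0) (hlam : |lam| ≤ μ)
    (hbc : ((1/4 - θ) * b₂) * u0 + b₂ * g0 = dd)
    (hI0 : 0 ≤ I) (hI : u0^2 ≤ I) :
    -(2*μ) * (u0 * g0) - 2*μ*I - lam * u0^2 ≤ (μ/(θ*b₂^2)) * dd^2 := by
  obtain ⟨hlam1, hlam2⟩ := abs_le.mp hlam
  have hg0 : g0 = dd / b₂ - (1/4 - θ) * u0 := by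
    field_simp
    linarith [hbc]
  have hsq : 0 ≤ (μ/θ) * (θ * u0 + dd / b₂)^2 :=
    mul_nonneg (div_nonneg hμ.le hθ.le) (sq_nonneg _)
  have hkey : μ*θ*u0^2 + (μ/(θ*b₂^2))*dd^2 + (2*μ/b₂)*u0*dd
      = (μ/θ) * (θ * u0 + dd / b₂)^2 := by
    field_simp
    ring
  have hyoung : -(2*μ/b₂)*u0*dd ≤ μ*θ*u0^2 + (μ/(θ*b₂^2))*dd^2 := by linarith
  have hcoef : (2*μ*(1/4 - θ) - lam + μ*θ) * u0^2 ≤ 2*μ*I := by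
    rcases le_or_gt (2*μ*(1/4 - θ) - lam + μ*θ) 0 with hc | hc
    · have h1 : (2*μ*(1/4 - θ) - lam + μ*θ) * u0^2 ≤ 0 :=
        mul_nonpos_of_nonpos_of_nonneg hc (sq_nonneg _)
      nlinarith [mul_pos hμ hθ]
    · have hc2 : 2*μ*(1/4 - θ) - lam + μ*θ ≤ 2*μ := by nlinarith [mul_pos hμ hθ]
      calc (2*μ*(1/4 - θ) - lam + μ*θ) * u0^2
          ≤ (2*μ*(1/4 - θ) - lam + μ*θ) * I := mul_le_mul_of_nonneg_left hI hc.le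
        _ ≤ 2*μ*I := mul_le_mul_of_nonneg_right hc2 hI0
  have hexp : -(2*μ) * (u0 * g0) = -(2*μ/b₂)*u0*dd + 2*μ*(1/4 - θ)*u0^2 := by
    rw [hg0]; field_simp; ring
  nlinarith [hyoung, hcoef, hexp]
end helpers

open Set intervalIntegral Real

set_option maxHeartbeats 1000000 in
theorem stmt_18
    (μ α β γ lam b₁ b₂ : ℝ) (d : ℝ → ℝ)
    (hμ : 0 < μ) (hβ : 0 < β) (hγ : 0 < γ) (halam : α + |lam| < 0) (hlamμ : |lam| ≤ μ)
    (hb₂ : b₂ ≠ 0) (hb : b₁ / b₂ < 1 / 4)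
    (hd : ContDiffOn ℝ 2 d (Ici 0)) :
    ∃ C₀ > (0:ℝ), ∃ C₁ > (0:ℝ),
      ∀ u ux uxx ut : ℝ → ℝ → ℝ,
        (∀ t ≥ (0:ℝ), ∀ x ∈ Icc (0:ℝ) 1, HasDerivWithinAt (u t) (ux t x) (Icc 0 1) x) →
        (∀ t ≥ (0:ℝ), ∀ x ∈ Icc (0:ℝ) 1, HasDerivWithinAt (ux t) (uxx t x) (Icc 0 1) x) →
        (∀ t ≥ (0:ℝ), ContinuousOn (uxx t) (Icc (0:ℝ) 1)) →
        (∀ t > (0:ℝ), ∀ x ∈ Icc (0:ℝ) 1, HasDerivAt (fun s => u s x) (ut t x) t) →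
        (∀ t > (0:ℝ), ∀ x ∈ Ioo (0:ℝ) 1,
          ut t x = μ * uxx t x + α * u t x - β * (u t x) ^ 3 - γ * (u t x) ^ 5 + lam * ux t x) →
        (∀ t ≥ (0:ℝ), u t 1 = 0) →
        (∀ t ≥ (0:ℝ), b₁ * u t 0 + b₂ * ux t 0 = d t) →
        ContinuousOn (fun t => ∫ x in (0:ℝ)..1, (u t x) ^ 2) (Ici 0) →
        (∀ t > (0:ℝ), HasDerivAt (fun s => ∫ x in (0:ℝ)..1, (u s x) ^ 2)
          (∫ x in (0:ℝ)..1, 2 * u t x * ut t x) t) →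
        ∀ t ≥ (0:ℝ),
          ((∫ x in (0:ℝ)..1, (u t x) ^ 2) ≤
            (∫ x in (0:ℝ)..1, (u 0 x) ^ 2) * Real.exp (-C₀ * t)
              + C₁ * (∫ s in (0:ℝ)..t, (d s) ^ 2)) ∧
          ((∫ x in (0:ℝ)..1, (u t x) ^ 2) ≤
            (∫ x in (0:ℝ)..1, (u 0 x) ^ 2) * Real.exp (-C₀ * t)
              + (1 - Real.exp (-C₀ * t)) * (C₁ * sSup ((fun s => (d s) ^ 2) '' Icc 0 t))) := by
  have h01 : (0:ℝ) ≤ 1 := by norm_num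
  set θ : ℝ := 1/4 - b₁/b₂ with hθdef
  have hθ : 0 < θ := by simp [hθdef]; linarith
  have hα : α < 0 := by have := abs_nonneg lam; linarith
  set C₀ : ℝ := -(2*α) with hC₀def
  have hC₀ : 0 < C₀ := by simp [hC₀def]; linarith
  set C : ℝ := μ/(θ*b₂^2) with hCdef
  have hC : 0 < C := div_pos hμ (mul_pos hθ (by positivity))
  set C₁ : ℝ := C * (1 + 1/C₀) with hC₁def
  have hC₁ : 0 < C₁ := by positivity
  have hCC₁ : C ≤ C₁ := by
    rw [hC₁def]
    nlinarith [div_pos (by norm_num : (0:ℝ) < 1) hC₀]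
  have hCC₁' : C / C₀ ≤ C₁ := by
    rw [hC₁def, mul_add, mul_one, mul_one_div]
    linarith
  refine ⟨C₀, hC₀, C₁, hC₁, ?_⟩
  intro u ux uxx ut hu hux huxxc hut hpde hbc1 hbc0 hVc hVd
  set V : ℝ → ℝ := fun s => ∫ x in (0:ℝ)..1, (u s x) ^ 2 with hVdef
  set E : ℝ → ℝ := fun r => Real.exp (C₀*r) * (d r)^2 with hEdef
  have hdc : ContinuousOn (fun r => (d r)^2) (Ici (0:ℝ)) :=
    (hd.continuousOn).pow 2
  have hexpc : Continuous (fun r : ℝ => Real.exp (C₀*r)) :=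
    Real.continuous_exp.comp (continuous_const.mul continuous_id)
  have hEc : ContinuousOn E (Ici (0:ℝ)) := hexpc.continuousOn.mul hdc
  -- key derivative bound
  have hKbound : ∀ s > (0:ℝ), (∫ x in (0:ℝ)..1, 2 * u s x * ut s x) ≤ -C₀ * V s + C * (d s)^2 := by
    intro s hs
    have hfc : ContinuousOn (u s) (Icc (0:ℝ) 1) := fun x hx => (hu s hs.le x hx).continuousWithinAt
    have hgc : ContinuousOn (ux s) (Icc (0:ℝ) 1) := fun x hx =>
      (hux s hs.le x hx).continuousWithinAt
    have hhc := huxxc s hs.le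
    have hUI : uIcc (0:ℝ) 1 = Icc 0 1 := uIcc_of_le h01
    have hInt : ∀ {F : ℝ → ℝ}, ContinuousOn F (Icc (0:ℝ) 1) →
        IntervalIntegrable F volume 0 1 := by
      intro F hF
      rw [← hUI] at hF
      exact hF.intervalIntegrable
    obtain ⟨e1, e2, e3⟩ := spatial_facts (u s) (ux s) (uxx s) (hu s hs.le) (hux s hs.le)
      hhc (hbc1 s hs.le)
    -- replace ut by the PDE right-hand side a.e.
    have hcg : (∫ x in (0:ℝ)..1, 2 * u s x * ut s x)
        = ∫ x in (0:ℝ)..1, 2 * u s x *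
            (μ * uxx s x + α * u s x - β * (u s x)^3 - γ * (u s x)^5 + lam * ux s x) := by
      apply intervalIntegral.integral_congr_ae
      have hone : ∀ᵐ (x : ℝ), x ≠ 1 := by
        rw [ae_iff]
        have heq : {x : ℝ | ¬ x ≠ 1} = {1} := by ext x; simp
        rw [heq]
        exact Real.volume_singleton
      filter_upwards [hone] with x hx hmem
      rw [uIoc_of_le h01] at hmem
      have hxI : x ∈ Ioo (0:ℝ) 1 := ⟨hmem.1, lt_of_le_of_ne hmem.2 hx⟩
      rw [hpde s hs x hxI]
    -- split the integral
    have hsplit : (∫ x in (0:ℝ)..1, 2 * u s x *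
            (μ * uxx s x + α * u s x - β * (u s x)^3 - γ * (u s x)^5 + lam * ux s x))
        = 2*μ * (∫ x in (0:ℝ)..1, u s x * uxx s x)
          + 2*α * (∫ x in (0:ℝ)..1, (u s x)^2)
          - 2*β * (∫ x in (0:ℝ)..1, (u s x)^4)
          - 2*γ * (∫ x in (0:ℝ)..1, (u s x)^6)
          + 2*lam * (∫ x in (0:ℝ)..1, u s x * ux s x) := by
      have hrw : (∫ x in (0:ℝ)..1, 2 * u s x *
            (μ * uxx s x + α * u s x - β * (u s x)^3 - γ * (u s x)^5 + lam * ux s x))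
          = ∫ x in (0:ℝ)..1, ((2*μ) * (u s x * uxx s x)
            + ((2*α) * (u s x)^2 + ((-(2*β)) * (u s x)^4
            + ((-(2*γ)) * (u s x)^6 + (2*lam) * (u s x * ux s x))))) :=
        integral_congr (fun x _ => by ring)
      rw [hrw, integral_add ((hInt (F := fun x => u s x * uxx s x) (hfc.mul hhc)).const_mul _)
          (((hInt (F := fun x => u s x ^ 2) (hfc.pow 2)).const_mul _).add (((hInt (F := fun x => u s x ^ 4) (hfc.pow 4)).const_mul _).add
            (((hInt (F := fun x => u s x ^ 6) (hfc.pow 6)).const_mul _).add ((hInt (F := fun x => u s x * ux s x) (hfc.mul hgc)).const_mul _)))),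
        integral_add ((hInt (F := fun x => u s x ^ 2) (hfc.pow 2)).const_mul _)
          (((hInt (F := fun x => u s x ^ 4) (hfc.pow 4)).const_mul _).add
            (((hInt (F := fun x => u s x ^ 6) (hfc.pow 6)).const_mul _).add ((hInt (F := fun x => u s x * ux s x) (hfc.mul hgc)).const_mul _))),
        integral_add ((hInt (F := fun x => u s x ^ 4) (hfc.pow 4)).const_mul _)
          (((hInt (F := fun x => u s x ^ 6) (hfc.pow 6)).const_mul _).add ((hInt (F := fun x => u s x * ux s x) (hfc.mul hgc)).const_mul _)),
        integral_add ((hInt (F := fun x => u s x ^ 6) (hfc.pow 6)).const_mul _) ((hInt (F := fun x => u s x * ux s x) (hfc.mul hgc)).const_mul _),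
        intervalIntegral.integral_const_mul, intervalIntegral.integral_const_mul, intervalIntegral.integral_const_mul, intervalIntegral.integral_const_mul,
        intervalIntegral.integral_const_mul]
      ring
    have hI0 : (0:ℝ) ≤ ∫ x in (0:ℝ)..1, (ux s x)^2 :=
      integral_nonneg h01 (fun x _ => sq_nonneg _)
    have hP : (0:ℝ) ≤ ∫ x in (0:ℝ)..1, (u s x)^4 :=
      integral_nonneg h01 (fun x _ => by positivity)
    have hQ : (0:ℝ) ≤ ∫ x in (0:ℝ)..1, (u s x)^6 :=
      integral_nonneg h01 (fun x _ => by positivity)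
    have hbc' : ((1/4 - θ) * b₂) * u s 0 + b₂ * ux s 0 = d s := by
      have hb₁ : (1/4 - θ) * b₂ = b₁ := by
        rw [hθdef]; field_simp; ring
      rw [hb₁]; exact hbc0 s hs.le
    have hki := key_ineq μ lam b₂ θ (u s 0) (ux s 0) (d s)
      (∫ x in (0:ℝ)..1, (ux s x)^2) hμ hθ hb₂ hlamμ hbc' hI0 e3
    have hβP : (0:ℝ) ≤ 2*β * (∫ x in (0:ℝ)..1, (u s x)^4) := by positivity
    have hγQ : (0:ℝ) ≤ 2*γ * (∫ x in (0:ℝ)..1, (u s x)^6) := by positivity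
    rw [hcg, hsplit, e1, e2]
    simp only [hVdef, hC₀def, hCdef]
    nlinarith [hki]
  -- Gronwall argument
  intro t ht
  rcases eq_or_lt_of_le ht with h0 | h0
  · subst h0
    constructor
    · simp
    · simp
  -- t > 0
  have hIcc_sub : Icc (0:ℝ) t ⊆ Ici 0 := Icc_subset_Ici_self
  have hUIt : uIcc (0:ℝ) t = Icc 0 t := uIcc_of_le ht
  have hEii : ∀ x : ℝ, 0 ≤ x → IntervalIntegrable E volume 0 x := by
    intro x hx
    apply (hEc.mono ?_).intervalIntegrable
    rw [uIcc_of_le hx]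
    exact Icc_subset_Ici_self
  set J : ℝ := ∫ r in (0:ℝ)..t, E r with hJdef
  -- the auxiliary decreasing function
  set g : ℝ → ℝ := fun s => V s * Real.exp (C₀*s) - C * ∫ r in (0:ℝ)..s, E r with hgdef
  have hprim : ContinuousOn (fun s => ∫ r in (0:ℝ)..s, E r) (Icc 0 t) := by
    have hio : IntegrableOn E (uIcc (0:ℝ) t) volume := by
      rw [hUIt]
      exact (hEc.mono hIcc_sub).integrableOn_compact isCompact_Icc
    have := continuousOn_primitive_interval hio
    rwa [hUIt] at this
  have hgcont : ContinuousOn g (Icc 0 t) :=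
    ((hVc.mono hIcc_sub).mul hexpc.continuousOn).sub (continuousOn_const.mul hprim)
  have hgD : ∀ x ∈ Ioo (0:ℝ) t, HasDerivAt g
      ((∫ x' in (0:ℝ)..1, 2 * u x x' * ut x x') * Real.exp (C₀*x)
        + V x * (Real.exp (C₀*x) * C₀) - C * E x) x := by
    intro x hx
    have h1 : HasDerivAt (fun s => Real.exp (C₀*s)) (Real.exp (C₀*x) * C₀) x := by
      simpa using ((hasDerivAt_id x).const_mul C₀).exp
    have h2 := (hVd x hx.1).mul h1
    have h3 : HasDerivAt (fun s => ∫ r in (0:ℝ)..s, E r) (E x) x := by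
      apply integral_hasDerivAt_right (hEii x hx.1.le)
      · exact (ContinuousOn.stronglyMeasurableAtFilter isOpen_Ioi
          (hEc.mono Ioi_subset_Ici_self)) x hx.1
      · exact hEc.continuousAt (Ici_mem_nhds hx.1)
    exact h2.sub (h3.const_mul C)
  have hganti : AntitoneOn g (Icc 0 t) := by
    apply antitoneOn_of_deriv_nonpos (convex_Icc 0 t) hgcont
    · rw [interior_Icc]
      exact fun x hx => ((hgD x hx).differentiableAt).differentiableWithinAt
    · rw [interior_Icc]
      intro x hx
      rw [(hgD x hx).deriv]
      have hk := hKbound x hx.1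
      have he : (0:ℝ) < Real.exp (C₀*x) := Real.exp_pos _
      have hmul := mul_le_mul_of_nonneg_right hk he.le
      simp only [hEdef]
      nlinarith [hmul]
  have hg0 : g 0 = V 0 := by simp [hgdef]
  have hgt : g t ≤ g 0 := hganti (left_mem_Icc.mpr ht) (right_mem_Icc.mpr ht) ht
  have h2 : V t * Real.exp (C₀*t) ≤ V 0 + C * J := by
    have : g t = V t * Real.exp (C₀*t) - C * J := rfl
    rw [this, hg0] at hgt
    linarith
  have h4 : Real.exp (C₀*t) * Real.exp (-(C₀*t)) = 1 := by
    rw [← Real.exp_add]; simp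
  have he' : (0:ℝ) < Real.exp (-(C₀*t)) := Real.exp_pos _
  have hmain : V t ≤ V 0 * Real.exp (-(C₀*t)) + C * J * Real.exp (-(C₀*t)) := by
    have h3 := mul_le_mul_of_nonneg_right h2 he'.le
    calc V t = V t * (Real.exp (C₀*t) * Real.exp (-(C₀*t))) := by rw [h4, mul_one]
      _ = V t * Real.exp (C₀*t) * Real.exp (-(C₀*t)) := by ring
      _ ≤ (V 0 + C * J) * Real.exp (-(C₀*t)) := h3
      _ = V 0 * Real.exp (-(C₀*t)) + C * J * Real.exp (-(C₀*t)) := by ring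
  have hneg : -C₀ * t = -(C₀*t) := by ring
  have hdint : IntervalIntegrable (fun s => (d s)^2) volume 0 t := by
    apply ((hdc.mono hIcc_sub).mono ?_).intervalIntegrable
    rw [hUIt]
  have hd2nn : (0:ℝ) ≤ ∫ s in (0:ℝ)..t, (d s)^2 :=
    integral_nonneg ht (fun _ _ => sq_nonneg _)
  constructor
  · -- first inequality
    have hJ1 : J ≤ Real.exp (C₀*t) * ∫ s in (0:ℝ)..t, (d s)^2 := by
      rw [← intervalIntegral.integral_const_mul]
      apply integral_mono_on ht (hEii t ht) (hdint.const_mul _)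
      intro x hx
      simp only [hEdef]
      exact mul_le_mul_of_nonneg_right
        (Real.exp_le_exp.mpr (mul_le_mul_of_nonneg_left hx.2 hC₀.le)) (sq_nonneg _)
    have hs1 : C * J * Real.exp (-(C₀*t))
        ≤ C * (Real.exp (C₀*t) * ∫ s in (0:ℝ)..t, (d s)^2) * Real.exp (-(C₀*t)) :=
      mul_le_mul_of_nonneg_right (mul_le_mul_of_nonneg_left hJ1 hC.le) he'.le
    have hs2 : C * (Real.exp (C₀*t) * ∫ s in (0:ℝ)..t, (d s)^2) * Real.exp (-(C₀*t))
        = C * ∫ s in (0:ℝ)..t, (d s)^2 := by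
      have : C * (Real.exp (C₀*t) * ∫ s in (0:ℝ)..t, (d s)^2) * Real.exp (-(C₀*t))
          = C * (∫ s in (0:ℝ)..t, (d s)^2) * (Real.exp (C₀*t) * Real.exp (-(C₀*t))) := by ring
      rw [this, h4, mul_one]
    have hs3 : C * ∫ s in (0:ℝ)..t, (d s)^2 ≤ C₁ * ∫ s in (0:ℝ)..t, (d s)^2 :=
      mul_le_mul_of_nonneg_right hCC₁ hd2nn
    rw [hneg]
    linarith
  · -- second inequality
    set M : ℝ := sSup ((fun s => (d s)^2) '' Icc 0 t) with hMdef
    have hcomp : IsCompact ((fun s => (d s)^2) '' Icc 0 t) :=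
      isCompact_Icc.image_of_continuousOn (hdc.mono hIcc_sub)
    have hbdd : BddAbove ((fun s => (d s)^2) '' Icc 0 t) := hcomp.bddAbove
    have hM : ∀ s ∈ Icc (0:ℝ) t, (d s)^2 ≤ M := fun s hs => le_csSup hbdd ⟨s, hs, rfl⟩
    have hM0 : (0:ℝ) ≤ M := le_trans (sq_nonneg (d 0)) (hM 0 (left_mem_Icc.mpr ht))
    have h5 : ∀ x : ℝ, HasDerivAt (fun r => Real.exp (C₀*r)/C₀) (Real.exp (C₀*x)) x := by
      intro x
      have h6 : HasDerivAt (fun r => Real.exp (C₀*r)) (Real.exp (C₀*x) * C₀) x := by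
        simpa using ((hasDerivAt_id x).const_mul C₀).exp
      have h7 := h6.div_const C₀
      have h8 : Real.exp (C₀*x) * C₀ / C₀ = Real.exp (C₀*x) :=
        mul_div_cancel_right₀ _ (ne_of_gt hC₀)
      rwa [h8] at h7
    have hexpInt : ∫ s in (0:ℝ)..t, Real.exp (C₀*s) = (Real.exp (C₀*t) - 1)/C₀ := by
      rw [integral_eq_sub_of_hasDerivAt (fun x _ => h5 x) (hexpc.intervalIntegrable 0 t)]
      rw [mul_zero, Real.exp_zero]
      ring
    have hJ2 : J ≤ M * (Real.exp (C₀*t) - 1)/C₀ := by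
      have hstep : J ≤ ∫ s in (0:ℝ)..t, Real.exp (C₀*s) * M := by
        apply integral_mono_on ht (hEii t ht) ((hexpc.mul continuous_const).intervalIntegrable 0 t)
        intro x hx
        simp only [hEdef]
        exact mul_le_mul_of_nonneg_left (hM x hx) (Real.exp_pos _).le
      rw [intervalIntegral.integral_mul_const, hexpInt] at hstep
      calc J ≤ (Real.exp (C₀*t) - 1)/C₀ * M := hstep
        _ = M * (Real.exp (C₀*t) - 1)/C₀ := by ring
    have hs1 : C * J * Real.exp (-(C₀*t))
        ≤ C * (M * (Real.exp (C₀*t) - 1)/C₀) * Real.exp (-(C₀*t)) :=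
      mul_le_mul_of_nonneg_right (mul_le_mul_of_nonneg_left hJ2 hC.le) he'.le
    have hs2 : C * (M * (Real.exp (C₀*t) - 1)/C₀) * Real.exp (-(C₀*t))
        = (C/C₀) * M * (1 - Real.exp (-(C₀*t))) := by
      have hexpand : C * (M * (Real.exp (C₀*t) - 1)/C₀) * Real.exp (-(C₀*t))
          = (C/C₀) * M * (Real.exp (C₀*t) * Real.exp (-(C₀*t)) - Real.exp (-(C₀*t))) := by
        field_simp
      rw [hexpand, h4]
    have he1 : Real.exp (-(C₀*t)) ≤ 1 := by
      rw [show (1:ℝ) = Real.exp 0 by simp]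
      apply Real.exp_le_exp.mpr
      nlinarith
    have hs3 : (C/C₀) * M * (1 - Real.exp (-(C₀*t)))
        ≤ (1 - Real.exp (-(C₀*t))) * (C₁ * M) := by
      have : (C/C₀) * M ≤ C₁ * M := mul_le_mul_of_nonneg_right hCC₁' hM0
      nlinarith [this, he1]
    rw [hneg]
    linarith
end
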